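/- arXiv:1303.0214 — 4 statements merged into one kernel-verified Lean document; each statement's English description precedes it below -/
import Mathlib

section
/- Let R be a binary relation on ℕ whose convolution language is regular. Then there exists a constant D > 0 with the following property (Pumping Rule 1): for every threshold l ∈ ℕ and every pair (m,n) ∈ R such that each of m and n is either < l or ≥ l + D, the pair (m',n') also lies in R, where m' = m + D if m ≥ l + D and m' = m if m < l, and likewise n' = n + D if n ≥ l + D and n' = n if n < l. -/
/-- The convolution word of the pair `(m, n)`, over the three-letter alphabet `Fin 3`
(`0` plays the role of `s`, `1` of `l`, `2` of `r`). -/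
def convWord (m n : ℕ) : List (Fin 3) :=
  List.replicate (min m n) 0 ++ List.replicate (m - min m n) 1 ++
    List.replicate (n - min m n) 2

/-- The convolution language of a binary relation on `ℕ`. -/
def convLang (R : ℕ → ℕ → Prop) : Language (Fin 3) :=
  {w | ∃ m n, R m n ∧ w = convWord m n}

/-- A binary relation on `ℕ` is regular if its convolution language is regular. -/
def RegularRel (R : ℕ → ℕ → Prop) : Prop :=
  (convLang R).IsRegular

lemma iterate_eventually_periodic {Q : Type*} [Fintype Q] (f : Q → Q) (q : Q) {t : ℕ}
    (ht : Fintype.card Q ≤ t) : f^[t + Nat.factorial (Fintype.card Q)] q = f^[t] q := by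
  classical
  set k := Fintype.card Q with hk
  obtain ⟨i, j, hne, heq⟩ :=
    Fintype.exists_ne_map_eq_of_card_lt (fun i : Fin (k + 1) => f^[(i : ℕ)] q) (by simp; exact (Fintype.card_congr (Equiv.refl Q)).le)
  wlog hij : (i : ℕ) < (j : ℕ) generalizing i j
  · exact this j i hne.symm heq.symm (by omega)
  set p := (j : ℕ) - i with hp
  have hppos : 0 < p := by omega
  have hple : p ≤ k := by have := j.is_le; omega
  -- step : for all s ≥ i, f^[s + p] q = f^[s] q
  have hstep : ∀ s, (i : ℕ) ≤ s → f^[s + p] q = f^[s] q := by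
    intro s hs
    have h1 : s + p = (s - i) + (j : ℕ) := by omega
    have h2 : s = (s - i) + (i : ℕ) := by omega
    rw [h1, Function.iterate_add_apply]
    conv_rhs => rw [h2, Function.iterate_add_apply]
    rw [← heq]
  have hmult : ∀ r s, (i : ℕ) ≤ s → f^[s + r * p] q = f^[s] q := by
    intro r
    induction r with
    | zero => simp
    | succ r ih =>
      intro s hs
      have : s + (r + 1) * p = (s + r * p) + p := by ring
      rw [this, hstep _ (by omega), ih s hs]
  have hdvd : p ∣ Nat.factorial k := Nat.dvd_factorial hppos hple
  obtain ⟨c, hc⟩ := hdvd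
  have : Nat.factorial k = c * p := by rw [hc]; ring
  rw [this]
  exact hmult c t (by have := i.is_le; omega)

lemma evalFrom_replicate {σ : Type*} (M : DFA (Fin 3) σ) (c : Fin 3) (q : σ) (t : ℕ) :
    M.evalFrom q (List.replicate t c) = (fun p => M.step p c)^[t] q := by
  induction t generalizing q with
  | zero => rfl
  | succ t ih =>
    rw [List.replicate_succ]
    show M.evalFrom (M.step q c) (List.replicate t c) = _
    rw [ih, Function.iterate_succ_apply]

lemma convWord_count (m n : ℕ) :
    (convWord m n).count 0 = min m n ∧ (convWord m n).count 1 = m - min m n ∧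
      (convWord m n).count 2 = n - min m n := by
  unfold convWord
  refine ⟨?_, ?_, ?_⟩ <;> simp [List.count_append, List.count_replicate]

lemma convWord_inj {m n m' n' : ℕ} (h : convWord m n = convWord m' n') : m = m' ∧ n = n' := by
  obtain ⟨h0, h1, h2⟩ := convWord_count m n
  obtain ⟨h0', h1', h2'⟩ := convWord_count m' n'
  rw [h] at h0 h1 h2
  rw [h0'] at h0; rw [h1'] at h1; rw [h2'] at h2
  have hm := Nat.min_le_left m n
  have hn := Nat.min_le_right m n
  have hm' := Nat.min_le_left m' n'
  have hn' := Nat.min_le_right m' n'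
  omega

theorem stmt0 (R : ℕ → ℕ → Prop) (hR : RegularRel R) :
    ∃ D : ℕ, 0 < D ∧ ∀ (l m n : ℕ), R m n →
      (m < l ∨ l + D ≤ m) → (n < l ∨ l + D ≤ n) →
      R (if l + D ≤ m then m + D else m) (if l + D ≤ n then n + D else n) := by
  obtain ⟨σ, hσ, M, hM⟩ := hR
  set k := Fintype.card σ with hk
  refine ⟨Nat.factorial k, Nat.factorial_pos k, ?_⟩
  have hkD : k ≤ Nat.factorial k := Nat.self_le_factorial k
  intro l m n hmn hml hnl
  -- evaluation of convWord
  have heval : ∀ m n : ℕ, M.eval (convWord m n) =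
      (fun p => M.step p 2)^[n - min m n]
        ((fun p => M.step p 1)^[m - min m n]
          ((fun p => M.step p 0)^[min m n] M.start)) := by
    intro m n
    show M.evalFrom M.start _ = _
    rw [convWord, M.evalFrom_of_append, M.evalFrom_of_append,
      evalFrom_replicate, evalFrom_replicate, evalFrom_replicate]
  -- membership transfer
  have hmem : ∀ m' n' : ℕ, M.eval (convWord m' n') = M.eval (convWord m n) → R m' n' := by
    intro m' n' he
    have h1 : convWord m n ∈ M.accepts := by
      rw [hM]; exact ⟨m, n, hmn, rfl⟩
    have h2 : convWord m' n' ∈ M.accepts := by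
      rw [DFA.mem_accepts, he]; exact h1
    rw [hM] at h2
    obtain ⟨a, b, hab, habe⟩ := h2
    obtain ⟨rfl, rfl⟩ := convWord_inj habe
    exact hab
  split_ifs with h1 h2 h2
  · -- both large
    have hml' : l + Nat.factorial k ≤ m := h1
    have hnl' : l + Nat.factorial k ≤ n := h2
    apply hmem
    rw [heval, heval]
    have hmin : min (m + Nat.factorial k) (n + Nat.factorial k) = min m n + Nat.factorial k := by omega
    have hm' : m + Nat.factorial k - (min m n + Nat.factorial k) = m - min m n := by omega
    have hn' : n + Nat.factorial k - (min m n + Nat.factorial k) = n - min m n := by omega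
    rw [hmin, hm', hn', iterate_eventually_periodic _ _ (by omega)]
  · -- m large, n small
    have hn : n < l := by omega
    have hmin : min m n = n := by omega
    have hmin' : min (m + Nat.factorial k) n = n := by omega
    apply hmem
    rw [heval, heval, hmin, hmin']
    have : m + Nat.factorial k - n = (m - n) + Nat.factorial k := by omega
    rw [this, iterate_eventually_periodic _ _ (by omega)]
  · -- m small, n large
    have hm : m < l := by omega
    have hmin : min m n = m := by omega
    have hmin' : min m (n + Nat.factorial k) = m := by omega
    apply hmem
    rw [heval, heval, hmin, hmin']
    have : n + Nat.factorial k - m = (n - m) + Nat.factorial k := by omega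
    rw [this, iterate_eventually_periodic _ _ (by omega)]
  · exact hmn
end

section
/- Let R be a binary relation on ℕ whose convolution language is regular. Then the convolution language of the reflexive-transitive closure R* of R (the smallest reflexive and transitive relation containing R) is also regular. -/
namespace Stmt2

/-- Structural hypotheses on a relation. -/
def HypDiag (R : ℕ → ℕ → Prop) (T P : ℕ) : Prop :=
  ∀ x y, T ≤ x → T ≤ y → (R x y ↔ R (x+P) (y+P))

def HypUp (R : ℕ → ℕ → Prop) (T P : ℕ) : Prop :=
  ∀ k d, T ≤ d → (R k (k+d) ↔ R k (k+d+P))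

def HypDn (R : ℕ → ℕ → Prop) (T P : ℕ) : Prop :=
  ∀ k d, T ≤ d → (R (k+d) k ↔ R (k+d+P) k)

def Good (R : ℕ → ℕ → Prop) (T P : ℕ) : Prop :=
  0 < T ∧ 0 < P ∧ HypDiag R T P ∧ HypUp R T P ∧ HypDn R T P

/-! ### convWord basics -/

lemma convWord_le {m n : ℕ} (h : n ≤ m) :
    convWord m n = List.replicate n 0 ++ List.replicate (m - n) 1 := by
  unfold convWord
  rw [min_eq_right h]
  simp

lemma convWord_ge {m n : ℕ} (h : m ≤ n) :
    convWord m n = List.replicate m 0 ++ List.replicate (n - m) 2 := by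
  unfold convWord
  rw [min_eq_left h]
  simp

lemma count_convWord (m n : ℕ) :
    (convWord m n).count 0 = min m n ∧ (convWord m n).count 1 = m - min m n ∧
      (convWord m n).count 2 = n - min m n := by
  unfold convWord
  refine ⟨?_, ?_, ?_⟩ <;> simp [List.count_append, List.count_replicate]

lemma convWord_inj {m n m' n' : ℕ} (h : convWord m n = convWord m' n') :
    m = m' ∧ n = n' := by
  obtain ⟨h0, h1, h2⟩ := count_convWord m n
  obtain ⟨h0', h1', h2'⟩ := count_convWord m' n'
  rw [h] at h0 h1 h2
  rw [h0'] at h0; rw [h1'] at h1; rw [h2'] at h2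
  omega

lemma mem_convLang_iff {R : ℕ → ℕ → Prop} {m n : ℕ} :
    convWord m n ∈ convLang R ↔ R m n := by
  constructor
  · rintro ⟨m', n', hr, he⟩
    obtain ⟨rfl, rfl⟩ := convWord_inj he
    exact hr
  · intro h; exact ⟨m, n, h, rfl⟩

/-! ### Iterates on a finite type are eventually periodic -/

lemma iter_per {σ : Type} [Fintype σ] (f : σ → σ) (x : σ) {n : ℕ}
    (hn : Fintype.card σ ≤ n) :
    f^[n + (Fintype.card σ).factorial] x = f^[n] x := by
  set C := Fintype.card σ with hC
  obtain ⟨i, j, hne, hfe⟩ := Fintype.exists_ne_map_eq_of_card_lt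
    (fun i : Fin (C+1) => f^[(i : ℕ)] x) (by simp [hC])
  wlog hij : (i : ℕ) < (j : ℕ) generalizing i j
  · exact this j i hne.symm hfe.symm (by omega)
  set c := (j : ℕ) - (i : ℕ) with hc
  have hcpos : 0 < c := by omega
  have hcle : c ≤ C := by have := j.2; omega
  have key : ∀ m, (i : ℕ) ≤ m → f^[m + c] x = f^[m] x := by
    intro m hm
    have h1 : m + c = (m - i) + (j : ℕ) := by omega
    have h2 : m = (m - i) + (i : ℕ) := by omega
    rw [h1, Function.iterate_add_apply, ← hfe, ← Function.iterate_add_apply, ← h2]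
  have hdvd : c ∣ C.factorial := Nat.dvd_factorial hcpos hcle
  obtain ⟨q, hq⟩ := hdvd
  have main : ∀ q', f^[n + c * q'] x = f^[n] x := by
    intro q'
    induction q' with
    | zero => simp
    | succ q' ih =>
      have : n + c * (q' + 1) = (n + c * q') + c := by ring
      rw [this, key _ (by omega), ih]
  rw [hq]; exact main q

end Stmt2

namespace Stmt2

lemma evalFrom_replicate {σ : Type} (M : DFA (Fin 3) σ) (q : σ) (c : Fin 3) (k : ℕ) :
    M.evalFrom q (List.replicate k c) = (fun s => M.step s c)^[k] q := by
  induction k generalizing q with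
  | zero => rfl
  | succ k ih =>
    rw [List.replicate_succ]
    show M.evalFrom (M.step q c) (List.replicate k c) = _
    rw [ih, Function.iterate_succ_apply]

lemma evalFrom_app {σ : Type} (M : DFA (Fin 3) σ) (q : σ) (a b : List (Fin 3)) :
    M.evalFrom q (a ++ b) = M.evalFrom (M.evalFrom q a) b := by
  simp [DFA.evalFrom, List.foldl_append]

lemma extract (R : ℕ → ℕ → Prop) (hR : RegularRel R) : ∃ T P, Good R T P := by
  obtain ⟨σ, _, M, hM⟩ := hR
  set T := Fintype.card σ with hT
  have hTpos : 0 < T := Fintype.card_pos_iff.mpr ⟨M.start⟩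
  set P := T.factorial with hP
  have hPpos : 0 < P := Nat.factorial_pos T
  set f0 : σ → σ := fun s => M.step s 0 with hf0
  set f1 : σ → σ := fun s => M.step s 1 with hf1
  set f2 : σ → σ := fun s => M.step s 2 with hf2
  have hmem : ∀ m n, R m n ↔ M.evalFrom M.start (convWord m n) ∈ M.accept := by
    intro m n
    rw [show (M.evalFrom M.start (convWord m n) ∈ M.accept) ↔ convWord m n ∈ M.accepts
      from Iff.rfl, hM, mem_convLang_iff]
  have hup : ∀ m n, m ≤ n →
      (R m n ↔ f2^[n - m] (f0^[m] M.start) ∈ M.accept) := by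
    intro m n h
    rw [hmem, convWord_ge h]
    rw [evalFrom_app, evalFrom_replicate, evalFrom_replicate]
  have hdn : ∀ m n, n ≤ m →
      (R m n ↔ f1^[m - n] (f0^[n] M.start) ∈ M.accept) := by
    intro m n h
    rw [hmem, convWord_le h]
    rw [evalFrom_app, evalFrom_replicate, evalFrom_replicate]
  refine ⟨T, P, hTpos, hPpos, ?_, ?_, ?_⟩
  · -- HypDiag
    intro x y hx hy
    rcases le_total x y with h | h
    · rw [hup x y h, hup (x+P) (y+P) (by omega)]
      have h1 : x + P = x + P := rfl
      rw [show y + P - (x + P) = y - x by omega,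
        show f0^[x+P] M.start = f0^[x] M.start from iter_per f0 M.start hx]
    · rw [hdn x y h, hdn (x+P) (y+P) (by omega)]
      rw [show x + P - (y + P) = x - y by omega,
        show f0^[y+P] M.start = f0^[y] M.start from iter_per f0 M.start hy]
  · -- HypUp
    intro k d hd
    rw [hup k (k+d) (by omega), hup k (k+d+P) (by omega)]
    rw [show k + d - k = d by omega, show k + d + P - k = d + P by omega]
    rw [show f2^[d+P] (f0^[k] M.start) = f2^[d] (f0^[k] M.start) from
      iter_per f2 _ hd]
  · -- HypDn
    intro k d hd
    rw [hdn (k+d) k (by omega), hdn (k+d+P) k (by omega)]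
    rw [show k + d - k = d by omega, show k + d + P - k = d + P by omega]
    rw [show f1^[d+P] (f0^[k] M.start) = f1^[d] (f0^[k] M.start) from
      iter_per f1 _ hd]

end Stmt2

namespace Stmt2

open Relation

variable {R : ℕ → ℕ → Prop} {T P : ℕ}

/-- edges with high target -/
def Rt (R : ℕ → ℕ → Prop) (B : ℕ) (x y : ℕ) : Prop := R x y ∧ B < y
/-- edges with both endpoints high -/
def Rge (R : ℕ → ℕ → Prop) (c : ℕ) (x y : ℕ) : Prop := R x y ∧ c ≤ x ∧ c ≤ y
/-- short edges with high target -/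
def Rs (R : ℕ → ℕ → Prop) (B T : ℕ) (x y : ℕ) : Prop := Rt R B x y ∧ y < x + T

lemma diag_iter (hdiag : HypDiag R T P) (j : ℕ) :
    ∀ x y, T ≤ x → T ≤ y → (R x y ↔ R (x + j*P) (y + j*P)) := by
  induction j with
  | zero => simp
  | succ j ih =>
    intro x y hx hy
    rw [ih x y hx hy, hdiag (x + j*P) (y + j*P) (by omega) (by omega)]
    rw [show x + j*P + P = x + (j+1)*P by ring, show y + j*P + P = y + (j+1)*P by ring]

lemma up_iter (hup : HypUp R T P) (j : ℕ) :
    ∀ k d, T ≤ d → (R k (k + d) ↔ R k (k + d + j*P)) := by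
  induction j with
  | zero => simp
  | succ j ih =>
    intro k d hd
    rw [ih k d hd, show k + d + j*P = k + (d + j*P) by ring,
      hup k (d + j*P) (by omega)]
    rw [show k + (d + j*P) + P = k + d + (j+1)*P by ring]

lemma dn_iter (hdn : HypDn R T P) (j : ℕ) :
    ∀ k d, T ≤ d → (R (k + d) k ↔ R (k + d + j*P) k) := by
  induction j with
  | zero => simp
  | succ j ih =>
    intro k d hd
    rw [ih k d hd, show k + d + j*P = k + (d + j*P) by ring,
      hdn k (d + j*P) (by omega)]
    rw [show k + (d + j*P) + P = k + d + (j+1)*P by ring]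

lemma rge_endpoint {c a b : ℕ} (h : ReflTransGen (Rge R c) a b) (ha : c ≤ a) : c ≤ b := by
  induction h with
  | refl => exact ha
  | tail h1 h2 ih => exact h2.2.2

lemma rge_shift (hdiag : HypDiag R T P) {c : ℕ} (hc : T ≤ c) {a b : ℕ}
    (h : ReflTransGen (Rge R c) a b) (j : ℕ) :
    ReflTransGen (Rge R c) (a + j*P) (b + j*P) := by
  induction h with
  | refl => exact ReflTransGen.refl
  | @tail u z h1 h2 ih =>
    exact ih.tail ⟨(diag_iter hdiag j u z (le_trans hc h2.2.1) (le_trans hc h2.2.2)).mp h2.1,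
      le_trans h2.2.1 (Nat.le_add_right _ _), le_trans h2.2.2 (Nat.le_add_right _ _)⟩

lemma rt_endpoint {B a b : ℕ} (h : ReflTransGen (Rt R B) a b) (ha : B < a) : B < b := by
  induction h with
  | refl => exact ha
  | tail h1 h2 ih => exact h2.2

lemma rt_to_rge {B a b : ℕ} (h : ReflTransGen (Rt R B) a b) (ha : B < a) :
    ReflTransGen (Rge R (B+1)) a b := by
  induction h with
  | refl => exact ReflTransGen.refl
  | @tail u z h1 h2 ih =>
    exact ih.tail ⟨h2.1, rt_endpoint h1 ha, h2.2⟩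

lemma split_low {B k v : ℕ} (h : ReflTransGen R k v) (hk : k ≤ B) (hv : B < v) :
    ∃ w, w ≤ B ∧ ReflTransGen R k w ∧ ReflTransGen (Rt R B) w v := by
  induction h with
  | refl => omega
  | @tail u z h1 h2 ih =>
    by_cases hu : u ≤ B
    · exact ⟨u, hu, h1, ReflTransGen.single ⟨h2, hv⟩⟩
    · obtain ⟨w, hw, hkw, hwu⟩ := ih (by omega)
      exact ⟨w, hw, hkw, hwu.tail ⟨h2, hv⟩⟩

lemma longsplit {B w v : ℕ} (h : ReflTransGen (Rt R B) w v) :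
    ReflTransGen (Rs R B T) w v ∨
      ∃ u z, ReflTransGen (Rt R B) w u ∧ R u z ∧ u + T ≤ z ∧ B < z ∧
        ReflTransGen (Rt R B) z v := by
  induction h with
  | refl => exact Or.inl ReflTransGen.refl
  | @tail u z h1 h2 ih =>
    rcases ih with hshort | ⟨u', z', h3, h4, h5, h6, h7⟩
    · by_cases hlen : z < u + T
      · exact Or.inl (hshort.tail ⟨h2, hlen⟩)
      · exact Or.inr ⟨u, z, h1, h2.1, by omega, h2.2, ReflTransGen.refl⟩
    · exact Or.inr ⟨u', z', h3, h4, h5, h6, h7.tail h2⟩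

lemma fp {B w v : ℕ} (h : ReflTransGen (Rs R B T) w v) :
    ∀ lam, w < lam → lam ≤ v →
      ∃ u, lam ≤ u ∧ u < lam + T ∧ ReflTransGen (Rs R B T) w u ∧
        ReflTransGen (Rs R B T) u v := by
  induction h with
  | refl => intro lam h1 h2; omega
  | @tail u' z h1 h2 ih =>
    intro lam hw hlam
    by_cases hu : lam ≤ u'
    · obtain ⟨u, hu1, hu2, hu3, hu4⟩ := ih lam hw hu
      exact ⟨u, hu1, hu2, hu3, hu4.tail h2⟩
    · exact ⟨z, hlam, by have := h2.2; omega, h1.tail h2, ReflTransGen.refl⟩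

lemma ladder {B w v : ℕ} (hT : 0 < T) (hwB : w ≤ B)
    (h : ReflTransGen (Rs R B T) w v) (hv : B + T + P*T ≤ v) :
    ∃ u : ℕ → ℕ,
      (∀ t, t ≤ P → B + T + t*T ≤ u t ∧ u t < B + T + t*T + T ∧
        ReflTransGen (Rs R B T) w (u t) ∧ ReflTransGen (Rs R B T) (u t) v) ∧
      (∀ s t, s ≤ t → t ≤ P → ReflTransGen (Rs R B T) (u s) (u t)) := by
  have hrec : ∀ t, t ≤ P → ∃ u : ℕ → ℕ,
      (∀ i, i ≤ t → B + T + i*T ≤ u i ∧ u i < B + T + i*T + T ∧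
        ReflTransGen (Rs R B T) w (u i) ∧ ReflTransGen (Rs R B T) (u i) v) ∧
      (∀ i, i < t → ReflTransGen (Rs R B T) (u i) (u (i+1))) := by
    intro t ht
    induction t with
    | zero =>
      obtain ⟨u0, h1, h2, h3, h4⟩ := fp h (B + T) (by omega) (by omega)
      exact ⟨fun _ => u0, fun i hi => by simp at hi; subst hi; simpa using ⟨h1, h2, h3, h4⟩,
        fun i hi => by omega⟩
    | succ t ih =>
      obtain ⟨u, hu, hlink⟩ := ih (by omega)
      obtain ⟨h1, h2, h3, h4⟩ := hu t le_rfl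
      have et : (t+1)*T = t*T + T := by ring
      have etP : (t+1)*T ≤ P*T := Nat.mul_le_mul_right T (by omega)
      obtain ⟨un, hn1, hn2, hn3, hn4⟩ := fp h4 (B + T + (t+1)*T)
        (by omega) (by omega)
      refine ⟨Function.update u (t+1) un, ?_, ?_⟩
      · intro i hi
        by_cases hieq : i = t + 1
        · subst hieq; rw [Function.update_self]
          exact ⟨hn1, hn2, h3.trans hn3, hn4⟩
        · have hi' : i ≤ t := by omega
          rw [Function.update_of_ne hieq]
          exact hu i hi'
      · intro i hi
        by_cases hieq : i = t
        · rw [Function.update_of_ne (by omega : i ≠ t+1), show i+1 = t+1 by omega,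
            Function.update_self, hieq]
          exact hn3
        · have hi2 : i < t := by omega
          rw [Function.update_of_ne (by omega : i ≠ t+1),
            Function.update_of_ne (by omega : i+1 ≠ t+1)]
          exact hlink i hi2
  obtain ⟨u, hu, hlink⟩ := hrec P le_rfl
  refine ⟨u, hu, ?_⟩
  intro s t hst htP
  obtain ⟨q, rfl⟩ : ∃ q, t = s + q := ⟨t - s, by omega⟩
  clear hst
  induction q with
  | zero => exact ReflTransGen.refl
  | succ q ih =>
    have h1 : s + q < P := by omega
    exact (ih (by omega)).trans (hlink (s+q) h1)

lemma pump_edge (hup : HypUp R T P) {u z : ℕ} (h : R u z) (hlen : u + T ≤ z) (j : ℕ) :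
    R u (z + j*P) := by
  have hd : z = u + (z - u) := by omega
  rw [hd] at h ⊢
  rw [show u + (z-u) + j*P = u + (z-u) + j*P from rfl]
  exact (up_iter hup j u (z-u) (by omega)).mp h

theorem up_main (hG : Good R T P) {k v : ℕ} (h : ReflTransGen R k v)
    (hv : max k T + (P+2)*T + 1 ≤ v) :
    ReflTransGen R k (v + ((P+1)*T).factorial * P) := by
  obtain ⟨hT, hP, hdiag, hup, hdn⟩ := hG
  set F := ((P+1)*T).factorial with hF
  set B := max k T with hB
  have hTB : T ≤ B := le_max_right _ _
  have hBv : B < v := by omega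
  obtain ⟨w, hwB, hkw, hwv⟩ := split_low h (le_max_left _ _) hBv
  rcases longsplit (T := T) hwv with hshort | ⟨u, z, hwu, huz, hlen, hBz, hzv⟩
  · -- all steps short: ladder + pigeonhole
    have ePT : (P+2)*T = P*T + 2*T := by ring
    obtain ⟨u, hu, hlink⟩ := ladder (P := P) hT hwB hshort (by omega)
    -- pigeonhole on residues
    obtain ⟨s', t', hlt, ht'P, hmod⟩ :
        ∃ s' t', s' < t' ∧ t' ≤ P ∧ u s' % P = u t' % P := by
      obtain ⟨a, b, hab, heq⟩ := Fintype.exists_ne_map_eq_of_card_lt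
        (fun i : Fin (P+1) => (⟨u (i : ℕ) % P, Nat.mod_lt _ hP⟩ : Fin P)) (by simp)
      have hval : u (a : ℕ) % P = u (b : ℕ) % P := congrArg Fin.val heq
      rcases lt_or_gt_of_ne (fun hv' => hab (Fin.ext hv')) with hlt | hlt
      · exact ⟨a, b, hlt, by omega, hval⟩
      · exact ⟨b, a, hlt, by omega, hval.symm⟩
    have hs'P : s' ≤ P := by omega
    obtain ⟨hb1, hb2, hb3, hb4⟩ := hu s' hs'P
    obtain ⟨hc1, hc2, hc3, hc4⟩ := hu t' ht'P
    have est : s'*T + T ≤ t'*T := by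
      have := Nat.mul_le_mul_right T (show s'+1 ≤ t' by omega)
      have e : (s'+1)*T = s'*T + T := by ring
      omega
    have hlt' : u s' < u t' := by omega
    have hdvd : P ∣ (u t' - u s') :=
      (Nat.modEq_iff_dvd' hlt'.le).mp hmod
    obtain ⟨c, hcc⟩ := hdvd
    have hcpos : 0 < c := by
      rcases Nat.eq_zero_or_pos c with h0 | h0
      · rw [h0, mul_zero] at hcc; omega
      · exact h0
    have ecle : P*c ≤ (P+1)*T := by
      have e3 : t'*T ≤ P*T := Nat.mul_le_mul_right T ht'P
      have e4 : (P+1)*T = P*T + T := by ring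
      omega
    have hcle : c ≤ (P+1)*T := by
      have := Nat.le_mul_of_pos_left c hP
      omega
    have hcF : c ∣ F := Nat.dvd_factorial hcpos hcle
    obtain ⟨m, hm⟩ := hcF
    have huts : u t' = u s' + c*P := by
      have e : c*P = P*c := Nat.mul_comm c P
      omega
    -- the climbing segment, repeated
    have hseg : ReflTransGen (Rge R (B+1)) (u s') (u t') :=
      rt_to_rge (ReflTransGen.mono (fun a b hab => hab.1) _ _ (hlink s' t' (by omega) ht'P)) (by omega)
    have climb : ∀ q, ReflTransGen R (u t') (u t' + q*(c*P)) := by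
      intro q
      induction q with
      | zero => simpa using ReflTransGen.refl
      | succ q ih =>
        have hshift := rge_shift hdiag (by omega) hseg ((q+1)*c)
        have e1 : u s' + ((q+1)*c)*P = u t' + q*(c*P) := by rw [huts]; ring
        have e2 : u t' + ((q+1)*c)*P = u t' + (q+1)*(c*P) := by ring
        rw [e1, e2] at hshift
        exact ih.trans (ReflTransGen.mono (fun a b hab => hab.1) _ _ hshift)
    have hclimbF : ReflTransGen R (u t') (u t' + F*P) := by
      have := climb m
      rwa [show m*(c*P) = F*P by rw [hm]; ring] at this
    -- tail shifted
    have htail : ReflTransGen (Rge R (B+1)) (u t') v :=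
      rt_to_rge (ReflTransGen.mono (fun a b hab => hab.1) _ _ hc4) (by omega)
    have htails := rge_shift hdiag (by omega) htail F
    exact ((hkw.trans (ReflTransGen.mono (fun a b hab => hab.1.1) _ _ hc3)).trans hclimbF).trans
      (ReflTransGen.mono (fun a b hab => hab.1) _ _ htails)
  · -- a long up-edge exists
    have h1 : ReflTransGen R k u := hkw.trans (ReflTransGen.mono (fun a b hab => hab.1) _ _ hwu)
    have h2 : R u (z + F*P) := pump_edge hup huz hlen F
    have h3 := rge_shift hdiag (by omega) (rt_to_rge hzv hBz) F
    exact (h1.tail h2).trans (ReflTransGen.mono (fun a b hab => hab.1) _ _ h3)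

end Stmt2

namespace Stmt2

open Relation

variable {R : ℕ → ℕ → Prop} {T P : ℕ}

lemma good_flip (hG : Good R T P) : Good (fun x y => R y x) T P := by
  obtain ⟨hT, hP, hdiag, hup, hdn⟩ := hG
  exact ⟨hT, hP, fun x y hx hy => hdiag y x hy hx, hdn, hup⟩

lemma rtg_flip {a b : ℕ} (h : ReflTransGen (fun x y => R y x) a b) :
    ReflTransGen R b a := by
  induction h with
  | refl => exact ReflTransGen.refl
  | tail h1 h2 ih => exact (ReflTransGen.single h2).trans ih

lemma rtg_flip' {a b : ℕ} (h : ReflTransGen R b a) :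
    ReflTransGen (fun x y => R y x) a b := by
  induction h with
  | refl => exact ReflTransGen.refl
  | @tail u c h1 h2 ih => exact ReflTransGen.head h2 ih

lemma dn_main (hG : Good R T P) {k v : ℕ} (h : ReflTransGen R v k)
    (hv : max k T + (P+2)*T + 1 ≤ v) :
    ReflTransGen R (v + ((P+1)*T).factorial * P) k :=
  rtg_flip (up_main (good_flip hG) (rtg_flip' h) hv)

section SGood

variable (hG : Good R T P)

/-- Pumped amounts. -/
def Gp (T P : ℕ) : ℕ := ((P+1)*T).factorial * P

lemma Gp_pos (hG : Good R T P) : 0 < Gp T P :=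
  Nat.mul_pos (Nat.factorial_pos _) hG.2.1

lemma reach_up_gen (hG : Good R T P) {k v Θ : ℕ}
    (hk : max k T + (P+2)*T + 1 ≤ Θ) (h : ReflTransGen R k v) (hv : Θ ≤ v) (j : ℕ) :
    ReflTransGen R k (v + j * Gp T P) := by
  induction j with
  | zero => simpa using h
  | succ j ih =>
    have := up_main hG ih (by omega)
    rwa [show v + j*Gp T P + ((P+1)*T).factorial * P = v + (j+1)*Gp T P by
      unfold Gp; ring] at this

lemma reach_dn_gen (hG : Good R T P) {k v Θ : ℕ}
    (hk : max k T + (P+2)*T + 1 ≤ Θ) (h : ReflTransGen R v k) (hv : Θ ≤ v) (j : ℕ) :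
    ReflTransGen R (v + j * Gp T P) k := by
  induction j with
  | zero => simpa using h
  | succ j ih =>
    have := dn_main hG ih (by omega)
    rwa [show v + j*Gp T P + ((P+1)*T).factorial * P = v + (j+1)*Gp T P by
      unfold Gp; ring] at this

lemma split_dip {c x y : ℕ} (h : ReflTransGen R x y) (hy : c ≤ y) :
    ReflTransGen (Rge R c) x y ∨ ∃ z, z < c ∧ ReflTransGen R x z ∧ ReflTransGen R z y := by
  induction h with
  | refl => exact Or.inl ReflTransGen.refl
  | @tail u z h1 h2 ih =>
    by_cases hu : u < c
    · exact Or.inr ⟨u, hu, h1, ReflTransGen.single h2⟩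
    · rcases ih (by omega) with h3 | ⟨z', h3, h4, h5⟩
      · exact Or.inl (h3.tail ⟨h2, by omega, hy⟩)
      · exact Or.inr ⟨z', h3, h4, h5.tail h2⟩

lemma rge_unshift (hG : Good R T P) (j : ℕ) {x b' : ℕ}
    (h : ReflTransGen (Rge R (T + j*P)) (x + j*P) b') (hx : T ≤ x) :
    ∃ b, b' = b + j*P ∧ ReflTransGen (Rge R T) x b := by
  obtain ⟨hT, hP, hdiag, hup, hdn⟩ := hG
  generalize hxx : x + j*P = xx at h
  induction h with
  | refl => exact ⟨x, hxx.symm, ReflTransGen.refl⟩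
  | @tail u' z' h1 h2 ih =>
    obtain ⟨u, rfl, hxu⟩ := ih
    have hu : T ≤ u := by have := h2.2.1; omega
    have hz : T + j*P ≤ z' := h2.2.2
    refine ⟨z' - j*P, by omega, hxu.tail ⟨?_, hu, by omega⟩⟩
    have := (diag_iter hdiag j u (z' - j*P) hu (by omega)).mpr
    rw [show z' - j*P + j*P = z' by omega] at this
    exact this h2.1

end SGood

end Stmt2

namespace Stmt2

open Relation

variable {R : ℕ → ℕ → Prop} {T P : ℕ}

lemma sup_bound (f : ℕ → ℕ → ℕ) {a b n m : ℕ} (ha : a < n) (hb : b < m) :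
    f a b ≤ (Finset.range n).sup fun z => (Finset.range m).sup fun ρ => f z ρ :=
  le_trans (Finset.le_sup (Finset.mem_range.mpr hb))
    (Finset.le_sup (f := fun z => (Finset.range m).sup fun ρ => f z ρ)
      (Finset.mem_range.mpr ha))

/-- threshold for pumping into/out of the low region below `T + Gp T P`. -/
def Theta' (T P : ℕ) : ℕ := (T + Gp T P) + (P+2)*T + 1

/-- threshold above which the reachability relation is diagonal-periodic. -/
noncomputable def KK (R : ℕ → ℕ → Prop) (T P : ℕ) : ℕ :=
  Theta' T P + ((Finset.range (T + Gp T P)).sup fun z =>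
    (Finset.range (Gp T P)).sup fun ρ =>
      sInf {v | Theta' T P ≤ v ∧ v % Gp T P = ρ ∧ ReflTransGen R v z} +
      sInf {v | Theta' T P ≤ v ∧ v % Gp T P = ρ ∧ ReflTransGen R z v})

lemma Theta'_le_KK : Theta' T P ≤ KK R T P := Nat.le_add_right _ _

lemma max_z_bound {z : ℕ} (hz : z < T + Gp T P) :
    max z T + (P+2)*T + 1 ≤ Theta' T P := by
  have h1 : max z T ≤ T + Gp T P := max_le (by omega) (by omega)
  unfold Theta'
  omega

lemma key_dn (hG : Good R T P) {x z : ℕ} (hz : z < T + Gp T P) (hx : KK R T P ≤ x)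
    (h : ReflTransGen R (x + Gp T P) z) : ReflTransGen R x z := by
  have hGpos := Gp_pos hG
  have hmem : x + Gp T P ∈
      {v | Theta' T P ≤ v ∧ v % Gp T P = x % Gp T P ∧ ReflTransGen R v z} :=
    ⟨by have := Theta'_le_KK (R := R) (T := T) (P := P); omega,
      Nat.add_mod_right x (Gp T P), h⟩
  obtain ⟨hmΘ, hmmod, hmz⟩ := Nat.sInf_mem (Set.nonempty_of_mem hmem)
  have hbound : sInf {v | Theta' T P ≤ v ∧ v % Gp T P = x % Gp T P ∧ ReflTransGen R v z}
      ≤ KK R T P := by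
    have h2 := sup_bound (fun z' ρ =>
        sInf {v | Theta' T P ≤ v ∧ v % Gp T P = ρ ∧ ReflTransGen R v z'} +
        sInf {v | Theta' T P ≤ v ∧ v % Gp T P = ρ ∧ ReflTransGen R z' v})
      hz (Nat.mod_lt x hGpos)
    refine le_trans (le_trans ?_ h2) ?_
    · exact Nat.le_add_right _ _
    · rw [KK]; exact Nat.le_add_left _ _
  have hmlex := le_trans hbound hx
  obtain ⟨j, hj⟩ := (Nat.modEq_iff_dvd' hmlex).mp hmmod
  have hx' : x = sInf {v | Theta' T P ≤ v ∧ v % Gp T P = x % Gp T P ∧ ReflTransGen R v z}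
      + j * Gp T P := by
    have := Nat.mul_comm (Gp T P) j; omega
  have := reach_dn_gen hG (max_z_bound hz) hmz hmΘ j
  rwa [← hx'] at this

lemma key_up (hG : Good R T P) {y z : ℕ} (hz : z < T + Gp T P) (hy : KK R T P ≤ y)
    (h : ReflTransGen R z (y + Gp T P)) : ReflTransGen R z y := by
  have hGpos := Gp_pos hG
  have hmem : y + Gp T P ∈
      {v | Theta' T P ≤ v ∧ v % Gp T P = y % Gp T P ∧ ReflTransGen R z v} :=
    ⟨by have := Theta'_le_KK (R := R) (T := T) (P := P); omega,
      Nat.add_mod_right y (Gp T P), h⟩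
  obtain ⟨hmΘ, hmmod, hmz⟩ := Nat.sInf_mem (Set.nonempty_of_mem hmem)
  have hbound : sInf {v | Theta' T P ≤ v ∧ v % Gp T P = y % Gp T P ∧ ReflTransGen R z v}
      ≤ KK R T P := by
    have h2 := sup_bound (fun z' ρ =>
        sInf {v | Theta' T P ≤ v ∧ v % Gp T P = ρ ∧ ReflTransGen R v z'} +
        sInf {v | Theta' T P ≤ v ∧ v % Gp T P = ρ ∧ ReflTransGen R z' v})
      hz (Nat.mod_lt y hGpos)
    refine le_trans (le_trans ?_ h2) ?_
    · exact Nat.le_add_left _ _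
    · rw [KK]; exact Nat.le_add_left _ _
  have hmley := le_trans hbound hy
  obtain ⟨j, hj⟩ := (Nat.modEq_iff_dvd' hmley).mp hmmod
  have hy' : y = sInf {v | Theta' T P ≤ v ∧ v % Gp T P = y % Gp T P ∧ ReflTransGen R z v}
      + j * Gp T P := by
    have := Nat.mul_comm (Gp T P) j; omega
  have := reach_up_gen hG (max_z_bound hz) hmz hmΘ j
  rwa [← hy'] at this

lemma S_diag (hG : Good R T P) {x y : ℕ} (hx : KK R T P ≤ x) (hy : KK R T P ≤ y) :
    ReflTransGen R x y ↔ ReflTransGen R (x + Gp T P) (y + Gp T P) := by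
  obtain ⟨hT, hP, hdiag, hup, hdn⟩ := hG
  have hΘK := Theta'_le_KK (R := R) (T := T) (P := P)
  have hTGΘ : T + Gp T P < Theta' T P := by unfold Theta'; omega
  constructor
  · intro h
    rcases split_dip (c := T + Gp T P) h (by omega) with hno | ⟨z, hz, h1, h2⟩
    · have := rge_shift hdiag (le_trans (Nat.le_add_right T _) le_rfl) hno
        ((P+1)*T).factorial
      have e : ∀ a : ℕ, a + ((P+1)*T).factorial * P = a + Gp T P := by
        intro a; rw [Gp]
      rw [e, e] at this
      exact ReflTransGen.mono (fun a b hab => hab.1) _ _ this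
    · have hzz := reach_dn_gen ⟨hT, hP, hdiag, hup, hdn⟩ (max_z_bound hz) h1 (by omega) 1
      have hyy := reach_up_gen ⟨hT, hP, hdiag, hup, hdn⟩ (max_z_bound hz) h2 (by omega) 1
      rw [one_mul] at hzz hyy
      exact hzz.trans hyy
  · intro h
    rcases split_dip (c := T + Gp T P) h (by omega) with hno | ⟨z, hz, h1, h2⟩
    · have hno' : ReflTransGen (Rge R (T + ((P+1)*T).factorial * P))
          (x + ((P+1)*T).factorial * P) (y + Gp T P) := by
        rw [show T + ((P+1)*T).factorial * P = T + Gp T P by rw [Gp],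
          show x + ((P+1)*T).factorial * P = x + Gp T P by rw [Gp]]
        exact hno
      obtain ⟨b, hb, hxb⟩ := rge_unshift ⟨hT, hP, hdiag, hup, hdn⟩
        ((P+1)*T).factorial hno' (by omega)
      have hby : b = y := by
        have : y + Gp T P = b + Gp T P := by rw [hb, Gp]
        omega
      subst hby
      exact ReflTransGen.mono (fun a b hab => hab.1) _ _ hxb
    · exact (key_dn ⟨hT, hP, hdiag, hup, hdn⟩ hz hx h1).trans
        (key_up ⟨hT, hP, hdiag, hup, hdn⟩ hz hy h2)

lemma S_diag_iter (hG : Good R T P) (j : ℕ) {x y : ℕ}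
    (hx : KK R T P ≤ x) (hy : KK R T P ≤ y) :
    ReflTransGen R x y ↔ ReflTransGen R (x + j * Gp T P) (y + j * Gp T P) := by
  induction j with
  | zero => simp
  | succ j ih =>
    rw [ih, S_diag hG (by omega) (by omega),
      show x + j*Gp T P + Gp T P = x + (j+1)*Gp T P by ring,
      show y + j*Gp T P + Gp T P = y + (j+1)*Gp T P by ring]

end Stmt2

namespace Stmt2

open Relation

variable {R : ℕ → ℕ → Prop} {T P : ℕ}

noncomputable def Theta3 (R : ℕ → ℕ → Prop) (T P : ℕ) : ℕ :=
  (KK R T P + Gp T P) + (P+2)*T + 1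

noncomputable def T2 (R : ℕ → ℕ → Prop) (T P : ℕ) : ℕ :=
  Theta3 R T P + ((Finset.range (KK R T P + Gp T P)).sup fun k =>
    (Finset.range (Gp T P)).sup fun ρ =>
      sInf {v | Theta3 R T P ≤ v ∧ v % Gp T P = ρ ∧ ReflTransGen R k v} +
      sInf {v | Theta3 R T P ≤ v ∧ v % Gp T P = ρ ∧ ReflTransGen R v k})

lemma T_le_Theta' : T ≤ Theta' T P := by unfold Theta'; omega

lemma Theta'_pos : 0 < Theta' T P := by unfold Theta'; omega

lemma Theta3_le_T2 : Theta3 R T P ≤ T2 R T P := Nat.le_add_right _ _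

lemma max_k_bound {k : ℕ} (hk : k < KK R T P + Gp T P) :
    max k T + (P+2)*T + 1 ≤ Theta3 R T P := by
  have h1 : T ≤ KK R T P := le_trans T_le_Theta' Theta'_le_KK
  have h2 : max k T ≤ KK R T P + Gp T P := max_le (by omega) (by omega)
  unfold Theta3
  omega

lemma hcore_up (hG : Good R T P) (k : ℕ) (hk : k < KK R T P + Gp T P)
    (d : ℕ) (hd : T2 R T P ≤ d) :
    ReflTransGen R k (k+d) ↔ ReflTransGen R k (k+d+Gp T P) := by
  have hΘT2 : Theta3 R T P ≤ T2 R T P := Theta3_le_T2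
  have hGpos := Gp_pos hG
  constructor
  · intro h
    have := reach_up_gen hG (max_k_bound hk) h (show Theta3 R T P ≤ k + d by omega) 1
    rwa [one_mul] at this
  · intro h
    have hmem : k + d + Gp T P ∈
        {v | Theta3 R T P ≤ v ∧ v % Gp T P = (k+d) % Gp T P ∧ ReflTransGen R k v} :=
      ⟨by omega, Nat.add_mod_right _ _, h⟩
    obtain ⟨hmΘ, hmmod, hkm⟩ := Nat.sInf_mem (Set.nonempty_of_mem hmem)
    have hbound : sInf {v | Theta3 R T P ≤ v ∧ v % Gp T P = (k+d) % Gp T P ∧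
        ReflTransGen R k v} ≤ T2 R T P := by
      have h2 := sup_bound (fun k' ρ =>
          sInf {v | Theta3 R T P ≤ v ∧ v % Gp T P = ρ ∧ ReflTransGen R k' v} +
          sInf {v | Theta3 R T P ≤ v ∧ v % Gp T P = ρ ∧ ReflTransGen R v k'})
        hk (Nat.mod_lt (k+d) hGpos)
      refine le_trans (le_trans ?_ h2) ?_
      · exact Nat.le_add_right _ _
      · rw [T2]; exact Nat.le_add_left _ _
    have hmle : sInf {v | Theta3 R T P ≤ v ∧ v % Gp T P = (k+d) % Gp T P ∧
        ReflTransGen R k v} ≤ k + d := by omega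
    obtain ⟨j, hj⟩ := (Nat.modEq_iff_dvd' hmle).mp hmmod
    have he : k + d = sInf {v | Theta3 R T P ≤ v ∧ v % Gp T P = (k+d) % Gp T P ∧
        ReflTransGen R k v} + j * Gp T P := by
      have := Nat.mul_comm (Gp T P) j; omega
    have := reach_up_gen hG (max_k_bound hk) hkm hmΘ j
    rwa [← he] at this

lemma hcore_dn (hG : Good R T P) (k : ℕ) (hk : k < KK R T P + Gp T P)
    (d : ℕ) (hd : T2 R T P ≤ d) :
    ReflTransGen R (k+d) k ↔ ReflTransGen R (k+d+Gp T P) k := by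
  have hΘT2 : Theta3 R T P ≤ T2 R T P := Theta3_le_T2
  have hGpos := Gp_pos hG
  constructor
  · intro h
    have := reach_dn_gen hG (max_k_bound hk) h (show Theta3 R T P ≤ k + d by omega) 1
    rwa [one_mul] at this
  · intro h
    have hmem : k + d + Gp T P ∈
        {v | Theta3 R T P ≤ v ∧ v % Gp T P = (k+d) % Gp T P ∧ ReflTransGen R v k} :=
      ⟨by omega, Nat.add_mod_right _ _, h⟩
    obtain ⟨hmΘ, hmmod, hkm⟩ := Nat.sInf_mem (Set.nonempty_of_mem hmem)
    have hbound : sInf {v | Theta3 R T P ≤ v ∧ v % Gp T P = (k+d) % Gp T P ∧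
        ReflTransGen R v k} ≤ T2 R T P := by
      have h2 := sup_bound (fun k' ρ =>
          sInf {v | Theta3 R T P ≤ v ∧ v % Gp T P = ρ ∧ ReflTransGen R k' v} +
          sInf {v | Theta3 R T P ≤ v ∧ v % Gp T P = ρ ∧ ReflTransGen R v k'})
        hk (Nat.mod_lt (k+d) hGpos)
      refine le_trans (le_trans ?_ h2) ?_
      · exact Nat.le_add_left _ _
      · rw [T2]; exact Nat.le_add_left _ _
    have hmle : sInf {v | Theta3 R T P ≤ v ∧ v % Gp T P = (k+d) % Gp T P ∧
        ReflTransGen R v k} ≤ k + d := by omega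
    obtain ⟨j, hj⟩ := (Nat.modEq_iff_dvd' hmle).mp hmmod
    have he : k + d = sInf {v | Theta3 R T P ≤ v ∧ v % Gp T P = (k+d) % Gp T P ∧
        ReflTransGen R v k} + j * Gp T P := by
      have := Nat.mul_comm (Gp T P) j; omega
    have := reach_dn_gen hG (max_k_bound hk) hkm hmΘ j
    rwa [← he] at this

lemma reduce_k (hG : Good R T P) {k : ℕ} (hk : KK R T P + Gp T P ≤ k) :
    ∃ k' j, k' < KK R T P + Gp T P ∧ KK R T P ≤ k' ∧ k = k' + j * Gp T P := by
  have hGpos := Gp_pos hG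
  refine ⟨KK R T P + (k - KK R T P) % Gp T P, (k - KK R T P) / Gp T P, ?_, by omega, ?_⟩
  · have := Nat.mod_lt (k - KK R T P) hGpos; omega
  · have h1 := Nat.div_add_mod (k - KK R T P) (Gp T P)
    have := Nat.mul_comm (Gp T P) ((k - KK R T P) / Gp T P)
    omega

lemma S_up (hG : Good R T P) : HypUp (ReflTransGen R) (T2 R T P) (Gp T P) := by
  intro k d hd
  rcases lt_or_ge k (KK R T P + Gp T P) with hk | hk
  · exact hcore_up hG k hk d hd
  · obtain ⟨k', j, hk'lt, hk'K, rfl⟩ := reduce_k hG hk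
    have g1 : ReflTransGen R (k' + j * Gp T P) (k' + j * Gp T P + d) ↔
        ReflTransGen R k' (k' + d) := by
      rw [show k' + j * Gp T P + d = (k' + d) + j * Gp T P by ring]
      exact (S_diag_iter hG j hk'K (by omega)).symm
    have g2 : ReflTransGen R (k' + j * Gp T P) (k' + j * Gp T P + d + Gp T P) ↔
        ReflTransGen R k' (k' + d + Gp T P) := by
      rw [show k' + j * Gp T P + d + Gp T P = (k' + d + Gp T P) + j * Gp T P by ring]
      exact (S_diag_iter hG j hk'K (by omega)).symm
    rw [g1, g2]
    exact hcore_up hG k' hk'lt d hd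

lemma S_dn (hG : Good R T P) : HypDn (ReflTransGen R) (T2 R T P) (Gp T P) := by
  intro k d hd
  rcases lt_or_ge k (KK R T P + Gp T P) with hk | hk
  · exact hcore_dn hG k hk d hd
  · obtain ⟨k', j, hk'lt, hk'K, rfl⟩ := reduce_k hG hk
    have g1 : ReflTransGen R (k' + j * Gp T P + d) (k' + j * Gp T P) ↔
        ReflTransGen R (k' + d) k' := by
      rw [show k' + j * Gp T P + d = (k' + d) + j * Gp T P by ring]
      exact (S_diag_iter hG j (by omega) hk'K).symm
    have g2 : ReflTransGen R (k' + j * Gp T P + d + Gp T P) (k' + j * Gp T P) ↔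
        ReflTransGen R (k' + d + Gp T P) k' := by
      rw [show k' + j * Gp T P + d + Gp T P = (k' + d + Gp T P) + j * Gp T P by ring]
      exact (S_diag_iter hG j (by omega) hk'K).symm
    rw [g1, g2]
    exact hcore_dn hG k' hk'lt d hd

theorem good_S (hG : Good R T P) :
    Good (ReflTransGen R) (T2 R T P + KK R T P) (Gp T P) := by
  have hKpos : 0 < KK R T P := lt_of_lt_of_le Theta'_pos Theta'_le_KK
  refine ⟨by omega, Gp_pos hG, ?_, ?_, ?_⟩
  · intro x y hx hy
    exact S_diag hG (by omega) (by omega)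
  · intro k d hd
    exact S_up hG k d (by omega)
  · intro k d hd
    exact S_dn hG k d (by omega)

end Stmt2

namespace Stmt2

open Relation

variable {S : ℕ → ℕ → Prop} {T P : ℕ}

/-- compression of a counter value -/
def cls (T P n : ℕ) : ℕ := if n < T then n else T + (n - T) % P

lemma cls_lt (hP : 0 < P) (n : ℕ) : cls T P n < T + P := by
  unfold cls; split
  · omega
  · have := Nat.mod_lt (n - T) hP; omega

lemma cls_ge_T {n : ℕ} (h : T ≤ n) : T ≤ cls T P n := by
  unfold cls; split <;> omega

lemma cls_lt_T {n : ℕ} (h : n < T) : cls T P n = n := by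
  unfold cls; rw [if_pos h]

lemma cls_decomp (n : ℕ) : ∃ j, n = cls T P n + j * P := by
  unfold cls; split
  · exact ⟨0, by omega⟩
  · refine ⟨(n - T) / P, ?_⟩
    have h1 := Nat.div_add_mod (n - T) P
    have h2 := Nat.mul_comm P ((n - T) / P)
    omega

lemma cls_succ (hP : 0 < P) (n : ℕ) : cls T P (n + 1) = cls T P (cls T P n + 1) := by
  by_cases h1 : n < T
  · rw [cls_lt_T h1]
  · have h2 : cls T P n = T + (n - T) % P := by unfold cls; rw [if_neg h1]
    rw [h2]
    have h3 : ¬ (T + (n - T) % P + 1 < T) := by omega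
    have h4 : ¬ (n + 1 < T) := by omega
    unfold cls
    rw [if_neg h3, if_neg h4]
    have h5 : (n + 1 - T) = (n - T) + 1 := by omega
    have h6 : (T + (n - T) % P + 1 - T) = (n - T) % P + 1 := by omega
    rw [h5, h6]
    have h7 := Nat.mod_add_mod (n - T) P 1
    omega

lemma claim_dn (hG : Good S T P) (a b : ℕ) :
    S (a + b) a ↔ S (cls T P a + cls T P b) (cls T P a) := by
  obtain ⟨hT, hP, hdiag, hup, hdn⟩ := hG
  have step1 : S (a + b) a ↔ S (cls T P a + b) (cls T P a) := by
    by_cases ha : a < T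
    · rw [cls_lt_T ha]
    · obtain ⟨j, hj⟩ := cls_decomp (T := T) (P := P) a
      have h1 : T ≤ cls T P a := cls_ge_T (by omega)
      have := (diag_iter hdiag j (cls T P a + b) (cls T P a) (by omega) h1).symm
      rw [show cls T P a + b + j*P = a + b by omega,
        show cls T P a + j*P = a by omega] at this
      exact this
  have step2 : S (cls T P a + b) (cls T P a) ↔
      S (cls T P a + cls T P b) (cls T P a) := by
    by_cases hb : b < T
    · rw [cls_lt_T hb]
    · obtain ⟨j', hj'⟩ := cls_decomp (T := T) (P := P) b
      have h1 : T ≤ cls T P b := cls_ge_T (by omega)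
      have := (dn_iter hdn j' (cls T P a) (cls T P b) h1).symm
      rw [show cls T P a + cls T P b + j'*P = cls T P a + b by omega] at this
      exact this
  exact step1.trans step2

lemma claim_up (hG : Good S T P) (a b : ℕ) :
    S a (a + b) ↔ S (cls T P a) (cls T P a + cls T P b) := by
  obtain ⟨hT, hP, hdiag, hup, hdn⟩ := hG
  have step1 : S a (a + b) ↔ S (cls T P a) (cls T P a + b) := by
    by_cases ha : a < T
    · rw [cls_lt_T ha]
    · obtain ⟨j, hj⟩ := cls_decomp (T := T) (P := P) a
      have h1 : T ≤ cls T P a := cls_ge_T (by omega)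
      have := (diag_iter hdiag j (cls T P a) (cls T P a + b) h1 (by omega)).symm
      rw [show cls T P a + b + j*P = a + b by omega,
        show cls T P a + j*P = a by omega] at this
      exact this
  have step2 : S (cls T P a) (cls T P a + b) ↔
      S (cls T P a) (cls T P a + cls T P b) := by
    by_cases hb : b < T
    · rw [cls_lt_T hb]
    · obtain ⟨j', hj'⟩ := cls_decomp (T := T) (P := P) b
      have h1 : T ≤ cls T P b := cls_ge_T (by omega)
      have := (up_iter hup j' (cls T P a) (cls T P b) h1).symm
      rw [show cls T P a + cls T P b + j'*P = cls T P a + b by omega] at this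
      exact this
  exact step1.trans step2

end Stmt2

namespace Stmt2

open Relation

lemma evalFrom_app' {σ : Type} (M : DFA (Fin 3) σ) (q : σ) (a b : List (Fin 3)) :
    M.evalFrom q (a ++ b) = M.evalFrom (M.evalFrom q a) b := by
  simp [DFA.evalFrom, List.foldl_append]

/-- the state type -/
abbrev StQ (T P : ℕ) :=
  Option ((Fin (T+P)) ⊕ ((Fin (T+P)) × (Fin (T+P))) ⊕ ((Fin (T+P)) × (Fin (T+P))))

def clsF (T P : ℕ) (hP : 0 < P) (n : ℕ) : Fin (T+P) := ⟨cls T P n, cls_lt hP n⟩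

def mkDFA (S : ℕ → ℕ → Prop) (T P : ℕ) (hP : 0 < P) : DFA (Fin 3) (StQ T P) where
  step q c :=
    match q with
    | none => none
    | some (Sum.inl k) =>
        if c = 0 then some (Sum.inl (clsF T P hP (k.1 + 1)))
        else if c = 1 then some (Sum.inr (Sum.inl (k, clsF T P hP 1)))
        else some (Sum.inr (Sum.inr (k, clsF T P hP 1)))
    | some (Sum.inr (Sum.inl (k, i))) =>
        if c = 1 then some (Sum.inr (Sum.inl (k, clsF T P hP (i.1 + 1)))) else none
    | some (Sum.inr (Sum.inr (k, i))) =>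
        if c = 2 then some (Sum.inr (Sum.inr (k, clsF T P hP (i.1 + 1)))) else none
  start := some (Sum.inl (clsF T P hP 0))
  accept := {q | match q with
    | none => False
    | some (Sum.inl _) => True
    | some (Sum.inr (Sum.inl (k, i))) => S (k.1 + i.1) k.1
    | some (Sum.inr (Sum.inr (k, i))) => S k.1 (k.1 + i.1)}

variable {S : ℕ → ℕ → Prop} {T P : ℕ} (hP : 0 < P)

lemma clsF_succ (j : ℕ) : clsF T P hP ((clsF T P hP j).1 + 1) = clsF T P hP (j + 1) := by
  unfold clsF
  exact Fin.ext (cls_succ hP j).symm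

lemma eval0 (a : ℕ) : ∀ j, (mkDFA S T P hP).evalFrom (some (Sum.inl (clsF T P hP j)))
    (List.replicate a 0) = some (Sum.inl (clsF T P hP (j + a))) := by
  induction a with
  | zero => intro j; rfl
  | succ a ih =>
    intro j
    rw [List.replicate_succ]
    show (mkDFA S T P hP).evalFrom ((mkDFA S T P hP).step _ 0) _ = _
    rw [show (mkDFA S T P hP).step (some (Sum.inl (clsF T P hP j))) 0
        = some (Sum.inl (clsF T P hP (j+1))) by
      simp [mkDFA, clsF_succ]]
    rw [ih (j+1), show j+1+a = j + (a+1) from by omega]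

lemma evalL (b : ℕ) : ∀ j k, (mkDFA S T P hP).evalFrom
    (some (Sum.inr (Sum.inl (k, clsF T P hP j)))) (List.replicate b 1)
    = some (Sum.inr (Sum.inl (k, clsF T P hP (j + b)))) := by
  induction b with
  | zero => intro j k; rfl
  | succ b ih =>
    intro j k
    rw [List.replicate_succ]
    show (mkDFA S T P hP).evalFrom ((mkDFA S T P hP).step _ 1) _ = _
    rw [show (mkDFA S T P hP).step (some (Sum.inr (Sum.inl (k, clsF T P hP j)))) 1
        = some (Sum.inr (Sum.inl (k, clsF T P hP (j+1)))) by
      simp [mkDFA, clsF_succ]]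
    rw [ih (j+1) k, show j+1+b = j + (b+1) from by omega]

lemma evalR (b : ℕ) : ∀ j k, (mkDFA S T P hP).evalFrom
    (some (Sum.inr (Sum.inr (k, clsF T P hP j)))) (List.replicate b 2)
    = some (Sum.inr (Sum.inr (k, clsF T P hP (j + b)))) := by
  induction b with
  | zero => intro j k; rfl
  | succ b ih =>
    intro j k
    rw [List.replicate_succ]
    show (mkDFA S T P hP).evalFrom ((mkDFA S T P hP).step _ 2) _ = _
    rw [show (mkDFA S T P hP).step (some (Sum.inr (Sum.inr (k, clsF T P hP j)))) 2
        = some (Sum.inr (Sum.inr (k, clsF T P hP (j+1)))) by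
      simp [mkDFA, clsF_succ]]
    rw [ih (j+1) k, show j+1+b = j + (b+1) from by omega]

lemma eval_dn (a b : ℕ) (hb : 0 < b) :
    (mkDFA S T P hP).eval (List.replicate a 0 ++ List.replicate b 1)
      = some (Sum.inr (Sum.inl (clsF T P hP a, clsF T P hP b))) := by
  rw [DFA.eval, evalFrom_app']
  rw [show (mkDFA S T P hP).start = some (Sum.inl (clsF T P hP 0)) from rfl,
    eval0 hP a 0]
  obtain ⟨b', rfl⟩ : ∃ b', b = b' + 1 := ⟨b - 1, by omega⟩
  rw [List.replicate_succ]
  show (mkDFA S T P hP).evalFrom ((mkDFA S T P hP).step _ 1) _ = _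
  rw [show (mkDFA S T P hP).step (some (Sum.inl (clsF T P hP (0+a)))) 1
      = some (Sum.inr (Sum.inl (clsF T P hP (0+a), clsF T P hP 1))) by
    simp [mkDFA]]
  rw [evalL hP b' 1 _, show (0:ℕ)+a = a from by omega, show 1+b' = b'+1 from by omega]

lemma eval_up (a b : ℕ) (hb : 0 < b) :
    (mkDFA S T P hP).eval (List.replicate a 0 ++ List.replicate b 2)
      = some (Sum.inr (Sum.inr (clsF T P hP a, clsF T P hP b))) := by
  rw [DFA.eval, evalFrom_app']
  rw [show (mkDFA S T P hP).start = some (Sum.inl (clsF T P hP 0)) from rfl,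
    eval0 hP a 0]
  obtain ⟨b', rfl⟩ : ∃ b', b = b' + 1 := ⟨b - 1, by omega⟩
  rw [List.replicate_succ]
  show (mkDFA S T P hP).evalFrom ((mkDFA S T P hP).step _ 2) _ = _
  rw [show (mkDFA S T P hP).step (some (Sum.inl (clsF T P hP (0+a)))) 2
      = some (Sum.inr (Sum.inr (clsF T P hP (0+a), clsF T P hP 1))) by
    simp [mkDFA]]
  rw [evalR hP b' 1 _, show (0:ℕ)+a = a from by omega, show 1+b' = b'+1 from by omega]

lemma eval_s (a : ℕ) :
    (mkDFA S T P hP).eval (List.replicate a 0) = some (Sum.inl (clsF T P hP a)) := by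
  rw [DFA.eval,
    show (mkDFA S T P hP).start = some (Sum.inl (clsF T P hP 0)) from rfl,
    eval0 hP a 0, show (0:ℕ)+a = a from by omega]

end Stmt2

namespace Stmt2

open Relation

variable {S : ℕ → ℕ → Prop} {T P : ℕ} (hP : 0 < P)

lemma eval_def {σ : Type} (M : DFA (Fin 3) σ) (w : List (Fin 3)) :
    M.eval w = M.evalFrom M.start w := rfl

lemma struct1 : ∀ (w : List (Fin 3)) (k), (mkDFA S T P hP).eval w = some (Sum.inl k) →
    ∃ a, w = List.replicate a 0 := by
  intro w
  induction w using List.reverseRecOn with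
  | nil => exact fun k _ => ⟨0, rfl⟩
  | append_singleton w c ih =>
    intro k h
    rw [DFA.eval_append_singleton] at h
    rcases he : (mkDFA S T P hP).eval w with _ | (k' | (⟨k', i'⟩ | ⟨k', i'⟩)) <;>
      rw [he] at h <;> fin_cases c <;> simp [mkDFA] at h
    obtain ⟨a, rfl⟩ := ih k' he
    exact ⟨a + 1, (List.replicate_succ' (n := a) (a := 0)).symm⟩

lemma struct2 : ∀ (w : List (Fin 3)) (k i),
    (mkDFA S T P hP).eval w = some (Sum.inr (Sum.inl (k, i))) →
    ∃ a b, 0 < b ∧ w = List.replicate a 0 ++ List.replicate b 1 := by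
  intro w
  induction w using List.reverseRecOn with
  | nil => intro k i h; simp [DFA.eval, mkDFA, DFA.evalFrom] at h
  | append_singleton w c ih =>
    intro k i h
    rw [DFA.eval_append_singleton] at h
    rcases he : (mkDFA S T P hP).eval w with _ | (k' | (⟨k', i'⟩ | ⟨k', i'⟩)) <;>
      rw [he] at h <;> fin_cases c <;> simp [mkDFA] at h
    · obtain ⟨a, rfl⟩ := struct1 hP w k' he
      exact ⟨a, 1, by omega, rfl⟩
    · obtain ⟨a, b, hb, rfl⟩ := ih k' i' he
      refine ⟨a, b + 1, by omega, ?_⟩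
      rw [List.replicate_succ' (n := b) (a := 1), ← List.append_assoc]
      rfl

lemma struct3 : ∀ (w : List (Fin 3)) (k i),
    (mkDFA S T P hP).eval w = some (Sum.inr (Sum.inr (k, i))) →
    ∃ a b, 0 < b ∧ w = List.replicate a 0 ++ List.replicate b 2 := by
  intro w
  induction w using List.reverseRecOn with
  | nil => intro k i h; simp [DFA.eval, mkDFA, DFA.evalFrom] at h
  | append_singleton w c ih =>
    intro k i h
    rw [DFA.eval_append_singleton] at h
    rcases he : (mkDFA S T P hP).eval w with _ | (k' | (⟨k', i'⟩ | ⟨k', i'⟩)) <;>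
      rw [he] at h <;> fin_cases c <;> simp [mkDFA] at h
    · obtain ⟨a, rfl⟩ := struct1 hP w k' he
      exact ⟨a, 1, by omega, rfl⟩
    · obtain ⟨a, b, hb, rfl⟩ := ih k' i' he
      refine ⟨a, b + 1, by omega, ?_⟩
      rw [List.replicate_succ' (n := b) (a := 2), ← List.append_assoc]
      rfl

lemma regular_of_good (hrefl : ∀ x, S x x) (hG : Good S T P) :
    (convLang S).IsRegular := by
  have hP := hG.2.1
  refine ⟨StQ T P, inferInstance, mkDFA S T P hP, ?_⟩
  ext w
  rw [DFA.mem_accepts]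
  constructor
  · intro hw
    rw [eval_def] at hw
    rcases he : (mkDFA S T P hP).evalFrom (mkDFA S T P hP).start w
        with _ | (k | (⟨k, i⟩ | ⟨k, i⟩))
    · rw [he] at hw
      simp [mkDFA] at hw
    · obtain ⟨a, rfl⟩ := struct1 hP w k (by rw [eval_def]; exact he)
      refine ⟨a, a, hrefl a, ?_⟩
      simp [convWord]
    · obtain ⟨a, b, hb, rfl⟩ := struct2 hP w k i (by rw [eval_def]; exact he)
      have hcomp := eval_dn (S := S) (T := T) hP a b hb
      rw [eval_def] at hcomp
      rw [hcomp] at he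
      obtain ⟨rfl, rfl⟩ : clsF T P hP a = k ∧ clsF T P hP b = i := by
        simpa using he
      rw [hcomp] at hw
      have hacc : S ((clsF T P hP a).1 + (clsF T P hP b).1) (clsF T P hP a).1 := by
        simpa [mkDFA] using hw
      have hS : S (a + b) a := (claim_dn hG a b).mpr hacc
      refine ⟨a + b, a, hS, ?_⟩
      rw [convWord_le (by omega), show a + b - a = b by omega]
    · obtain ⟨a, b, hb, rfl⟩ := struct3 hP w k i (by rw [eval_def]; exact he)
      have hcomp := eval_up (S := S) (T := T) hP a b hb
      rw [eval_def] at hcomp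
      rw [hcomp] at he
      obtain ⟨rfl, rfl⟩ : clsF T P hP a = k ∧ clsF T P hP b = i := by
        simpa using he
      rw [hcomp] at hw
      have hacc : S (clsF T P hP a).1 ((clsF T P hP a).1 + (clsF T P hP b).1) := by
        simpa [mkDFA] using hw
      have hS : S a (a + b) := (claim_up hG a b).mpr hacc
      refine ⟨a, a + b, hS, ?_⟩
      rw [convWord_ge (by omega), show a + b - a = b by omega]
  · rintro ⟨m, n, hmn, rfl⟩
    rcases le_total n m with h | h
    · rw [convWord_le h]
      by_cases hb : m - n = 0
      · rw [hb]
        show (mkDFA S T P hP).eval _ ∈ _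
        rw [show List.replicate 0 (1 : Fin 3) = [] from rfl, List.append_nil, eval_s hP n]
        simp [mkDFA]
      · show (mkDFA S T P hP).eval _ ∈ _
        rw [eval_dn hP n (m - n) (by omega)]
        have hS : S (n + (m - n)) n := by rw [show n + (m-n) = m by omega]; exact hmn
        have := (claim_dn hG n (m - n)).mp hS
        simpa [mkDFA, clsF] using this
    · rw [convWord_ge h]
      by_cases hb : n - m = 0
      · rw [hb]
        show (mkDFA S T P hP).eval _ ∈ _
        rw [show List.replicate 0 (2 : Fin 3) = [] from rfl, List.append_nil, eval_s hP m]
        simp [mkDFA]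
      · show (mkDFA S T P hP).eval _ ∈ _
        rw [eval_up hP m (n - m) (by omega)]
        have hS : S m (m + (n - m)) := by rw [show m + (n-m) = n by omega]; exact hmn
        have := (claim_up hG m (n - m)).mp hS
        simpa [mkDFA, clsF] using this

end Stmt2

theorem stmt2 (R : ℕ → ℕ → Prop) (hR : RegularRel R) :
    RegularRel (Relation.ReflTransGen R) := by
  obtain ⟨T, P, hG⟩ := Stmt2.extract R hR
  have hG' := Stmt2.good_S hG
  exact Stmt2.regular_of_good (fun x => Relation.ReflTransGen.refl) hG'
end

section
/- Let R be a binary relation on ℕ whose convolution language is regular. Then the convolution language of the transitive closure R+ of R (the smallest transitive relation containing R) is also regular. -/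
namespace Stmt3

/-- Ultimately periodic predicate on ℕ. -/
def UP (S : ℕ → Prop) : Prop := ∃ q θ, 1 ≤ q ∧ ∀ x, θ ≤ x → (S x ↔ S (x + q))

lemma iter_iff {f : ℕ → Prop} (h : ∀ k, f k ↔ f (k+1)) : ∀ k, f 0 ↔ f k := by
  intro k; induction k with
  | zero => rfl
  | succ n ih => exact ih.trans (h n)

lemma up_iterate {S : ℕ → Prop} {q θ} (h : ∀ x, θ ≤ x → (S x ↔ S (x + q))) :
    ∀ k x, θ ≤ x → (S x ↔ S (x + k * q)) := by
  intro k x hx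
  have := iter_iff (f := fun j => S (x + j * q)) (fun j => by
    have := h (x + j * q) (le_trans hx (Nat.le_add_right _ _))
    simpa [Nat.succ_mul, ← Nat.add_assoc] using this)
  simpa using this k

lemma up_dvd_iff {S : ℕ → Prop} {q θ q'} (h : ∀ x, θ ≤ x → (S x ↔ S (x + q)))
    (hd : q ∣ q') : ∀ x, θ ≤ x → (S x ↔ S (x + q')) := by
  obtain ⟨k, rfl⟩ := hd
  intro x hx
  simpa [Nat.mul_comm] using up_iterate h k x hx

lemma up_of_plusClosed {S : ℕ → Prop} {q : ℕ} (hq : 1 ≤ q)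
    (h : ∀ x, S x → S (x + q)) : ∃ θ, ∀ x, θ ≤ x → (S x ↔ S (x + q)) := by
  classical
  -- minimal k with S (r + k*q), per residue r
  set g : ℕ → ℕ := fun r => sInf {k | S (r + k * q)} with hg
  refine ⟨q * ((Finset.range q).sup g) + q, fun x hx => ?_⟩
  constructor
  · exact h x
  · intro hxq
    have hr : x % q < q := Nat.mod_lt _ hq
    set r := x % q with hrdef
    set k := x / q with hkdef
    have hxeq : r + k * q = x := by
      rw [hrdef, hkdef, Nat.mul_comm]; exact Nat.mod_add_div x q
    have hmem : S (r + (k + 1) * q) := by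
      have he : r + (k + 1) * q = x + q := by
        rw [Nat.succ_mul]; omega
      rwa [he]
    have hne : {j | S (r + j * q)}.Nonempty := ⟨k + 1, hmem⟩
    have hinf := Nat.sInf_mem hne
    have hgr : g r ≤ (Finset.range q).sup g :=
      Finset.le_sup (Finset.mem_range.mpr hr)
    have hkge : g r ≤ k := by
      have hx' : q * ((Finset.range q).sup g) + q ≤ r + k * q := by omega
      by_contra hlt
      push_neg at hlt
      have h5 : k + 1 ≤ g r := hlt
      have h6 : (k + 1) * q ≤ g r * q := Nat.mul_le_mul_right _ h5
      have h7 : g r * q ≤ ((Finset.range q).sup g) * q := Nat.mul_le_mul_right _ hgr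
      rw [Nat.succ_mul] at h6
      rw [Nat.mul_comm] at hx'
      omega
    -- from sInf up to k by closure
    have hgen : ∀ j, S (r + (g r + j) * q) := by
      intro j; induction j with
      | zero => simpa using hinf
      | succ i ih =>
          have := h _ ih
          have he : r + (g r + i) * q + q = r + (g r + (i+1)) * q := by ring
          rwa [he] at this
    have := hgen (k - g r)
    have he : g r + (k - g r) = k := by omega
    rw [he] at this
    rwa [hxeq] at this

lemma up_of_plusClosed' {S : ℕ → Prop} {q : ℕ} (hq : 1 ≤ q)
    (h : ∀ x, S x → S (x + q)) : UP S := by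
  obtain ⟨θ, hθ⟩ := up_of_plusClosed hq h
  exact ⟨q, θ, hq, hθ⟩

lemma up_of_plusClosed_beyond {S : ℕ → Prop} {q c : ℕ} (hq : 1 ≤ q)
    (h : ∀ x, c ≤ x → S x → S (x + q)) : UP S := by
  obtain ⟨θ, hθ⟩ := up_of_plusClosed (S := fun x => c ≤ x ∧ S x) hq
    (fun x hx => ⟨by omega, h x hx.1 hx.2⟩)
  refine ⟨q, max θ c, hq, fun x hx => ?_⟩
  have h1 := hθ x (le_trans (le_max_left _ _) hx)
  have hc : c ≤ x := le_trans (le_max_right _ _) hx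
  constructor
  · intro hS; exact (h1.mp ⟨hc, hS⟩).2
  · intro hS; exact (h1.mpr ⟨by omega, hS⟩).2

lemma up_congr_beyond {S T : ℕ → Prop} {c : ℕ}
    (h : ∀ x, c ≤ x → (S x ↔ T x)) (hT : UP T) : UP S := by
  obtain ⟨q, θ, hq, hθ⟩ := hT
  refine ⟨q, max θ c, hq, fun x hx => ?_⟩
  have h1 := h x (le_trans (le_max_right _ _) hx)
  have h2 := h (x + q) (by omega)
  have h3 := hθ x (le_trans (le_max_left _ _) hx)
  rw [h1, h2]; exact h3

lemma up_bounded {S : ℕ → Prop} {c : ℕ} (h : ∀ x, S x → x < c) : UP S := by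
  refine ⟨1, c, le_refl _, fun x hx => ?_⟩
  constructor
  · intro hS; exact absurd (h x hS) (by omega)
  · intro hS; exact absurd (h _ hS) (by omega)

lemma up_union {S T : ℕ → Prop} (hS : UP S) (hT : UP T) : UP (fun x => S x ∨ T x) := by
  obtain ⟨q1, θ1, hq1, h1⟩ := hS
  obtain ⟨q2, θ2, hq2, h2⟩ := hT
  have hdp : 1 ≤ Nat.lcm q1 q2 := Nat.lcm_pos hq1 hq2
  refine ⟨Nat.lcm q1 q2, max θ1 θ2, hdp, fun x hx => ?_⟩
  have e1 := up_dvd_iff h1 (Nat.dvd_lcm_left q1 q2) x (le_trans (le_max_left _ _) hx)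
  have e2 := up_dvd_iff h2 (Nat.dvd_lcm_right q1 q2) x (le_trans (le_max_right _ _) hx)
  show S x ∨ T x ↔ S _ ∨ T _
  rw [e1, e2]

lemma up_biUnion (n : ℕ) (f : ℕ → ℕ → Prop) (h : ∀ i, i < n → UP (f i)) :
    UP (fun x => ∃ i, i < n ∧ f i x) := by
  induction n with
  | zero => exact up_bounded (c := 0) (fun x hx => by omega)
  | succ m ih =>
      have h1 : UP (fun x => ∃ i, i < m ∧ f i x) := ih (fun i hi => h i (by omega))
      have h2 : UP (f m) := h m (by omega)
      refine up_congr_beyond (c := 0) (fun x _ => ?_) (up_union h1 h2)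
      constructor
      · rintro ⟨i, hi, hf⟩
        rcases Nat.lt_succ_iff_lt_or_eq.mp hi with h' | rfl
        · exact Or.inl ⟨i, h', hf⟩
        · exact Or.inr hf
      · rintro (⟨i, hi, hf⟩ | hf)
        · exact ⟨i, by omega, hf⟩
        · exact ⟨m, by omega, hf⟩

/-- Common refinement for a finite family of UP predicates. -/
lemma up_common (n : ℕ) (f : ℕ → ℕ → Prop) (h : ∀ i, i < n → UP (f i)) :
    ∃ q θ, 1 ≤ q ∧ ∀ i, i < n → ∀ x, θ ≤ x → (f i x ↔ f i (x + q)) := by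
  induction n with
  | zero => exact ⟨1, 0, le_refl _, fun i hi => by omega⟩
  | succ m ih =>
      obtain ⟨q1, θ1, hq1, h1⟩ := ih (fun i hi => h i (by omega))
      obtain ⟨q2, θ2, hq2, h2⟩ := h m (by omega)
      refine ⟨Nat.lcm q1 q2, max θ1 θ2, Nat.lcm_pos hq1 hq2, fun i hi x hx => ?_⟩
      rcases Nat.lt_succ_iff_lt_or_eq.mp hi with h' | rfl
      · exact up_dvd_iff (h1 i h') (Nat.dvd_lcm_left _ _) x (le_trans (le_max_left _ _) hx)
      · exact up_dvd_iff h2 (Nat.dvd_lcm_right _ _) x (le_trans (le_max_right _ _) hx)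

lemma up_shift {S : ℕ → Prop} (b : ℕ) (hS : UP S) : UP (fun d => S (b + d)) := by
  obtain ⟨q, θ, hq, h⟩ := hS
  exact ⟨q, θ, hq, fun x hx => by
    have := h (b + x) (by omega)
    rwa [Nat.add_assoc] at this⟩


open Relation

/-! ### TransGen utilities -/

lemma rtg_shift {E : ℕ → ℕ → Prop} {c : ℕ} (h : ∀ a b, E a b → E (a + c) (b + c)) :
    ∀ {x y}, ReflTransGen E x y → ReflTransGen E (x + c) (y + c) := by
  intro x y hxy
  induction hxy with
  | refl => exact ReflTransGen.refl
  | tail hs he ih => exact ReflTransGen.tail ih (h _ _ he)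

lemma tg_shift {E : ℕ → ℕ → Prop} {c : ℕ} (h : ∀ a b, E a b → E (a + c) (b + c)) :
    ∀ {x y}, TransGen E x y → TransGen E (x + c) (y + c) := by
  intro x y hxy
  induction hxy with
  | single he => exact TransGen.single (h _ _ he)
  | tail hs he ih => exact TransGen.tail ih (h _ _ he)

lemma upshift_iter {E : ℕ → ℕ → Prop} {p : ℕ} (h : ∀ a b, E a b → E (a + p) (b + p)) :
    ∀ (k) (a b : ℕ), E a b → E (a + k * p) (b + k * p) := by
  intro k
  induction k with
  | zero => simpa using fun a b hab => hab
  | succ m ih =>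
      intro a b hab
      have := h _ _ (ih a b hab)
      have e1 : a + m * p + p = a + (m+1) * p := by ring
      have e2 : b + m * p + p = b + (m+1) * p := by ring
      rwa [e1, e2] at this

lemma upshift_dvd {E : ℕ → ℕ → Prop} {p d : ℕ} (h : ∀ a b, E a b → E (a + p) (b + p))
    (hd : p ∣ d) : ∀ (a b : ℕ), E a b → E (a + d) (b + d) := by
  obtain ⟨k, rfl⟩ := hd
  intro a b hab
  have := upshift_iter h k a b hab
  rwa [Nat.mul_comm] at this

lemma rtg_of_tg {E : ℕ → ℕ → Prop} {a b : ℕ} (h : TransGen E a b) : ReflTransGen E a b :=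
  TransGen.to_reflTransGen h

lemma tg_of_rtg_ne {E : ℕ → ℕ → Prop} {a b : ℕ} (h : ReflTransGen E a b) (hne : a ≠ b) :
    TransGen E a b := by
  rcases (Relation.reflTransGen_iff_eq_or_transGen.mp h) with rfl | h'
  · exact absurd rfl hne
  · exact h'

/-! ### The CORE pumping lemma -/

/-- Case split: a reflexive-transitive path either contains a "long up-edge"
(rise at least `t`) or consists entirely of small-rise steps. -/
lemma path_split {E : ℕ → ℕ → Prop} {t : ℕ} :
    ∀ {w n}, ReflTransGen E w n →
      (∃ a b, ReflTransGen E w a ∧ E a b ∧ a + t ≤ b ∧ ReflTransGen E b n) ∨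
        ReflTransGen (fun x y => E x y ∧ y < x + t) w n := by
  intro w n h
  induction h using ReflTransGen.head_induction_on with
  | refl => exact Or.inr ReflTransGen.refl
  | head hwx hxn ih =>
      rename_i w' x
      rcases ih with ⟨a, b, h1, h2, h3, h4⟩ | h'
      · exact Or.inl ⟨a, b, ReflTransGen.head hwx h1, h2, h3, h4⟩
      · by_cases hc : w' + t ≤ x
        · exact Or.inl ⟨w', x, ReflTransGen.refl, hwx, hc,
            ReflTransGen.mono (fun a b hab => hab.1) _ _ h'⟩
        · exact Or.inr (ReflTransGen.head ⟨hwx, by omega⟩ h')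

/-- Extraction: along a small-rise path from `a` to `n`, for any level `c` between,
there is an intermediate vertex in the window `[c, c+t)`. -/
lemma path_extract {E' : ℕ → ℕ → Prop} {t : ℕ} (ht : 1 ≤ t)
    (hE' : ∀ x y, E' x y → y < x + t) :
    ∀ {a n}, ReflTransGen E' a n → ∀ c, a ≤ c → c ≤ n →
      ∃ z, c ≤ z ∧ z < c + t ∧ ReflTransGen E' a z ∧ ReflTransGen E' z n := by
  intro a n h
  induction h using ReflTransGen.head_induction_on with
  | refl =>
      intro c hc1 hc2
      have hcn : c = n := le_antisymm hc2 hc1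
      subst hcn
      exact ⟨c, le_refl _, by omega, ReflTransGen.refl, ReflTransGen.refl⟩
  | head hax hxn ih =>
      rename_i a' x
      intro c hc1 hc2
      rcases Nat.lt_or_ge a' c with hlt | hge
      · by_cases hcx : c ≤ x
        · refine ⟨x, hcx, ?_, ReflTransGen.single hax, hxn⟩
          have := hE' _ _ hax
          omega
        · push_neg at hcx
          obtain ⟨z, hz1, hz2, hz3, hz4⟩ := ih c (by omega) hc2
          exact ⟨z, hz1, hz2, ReflTransGen.head hax hz3, hz4⟩
      · have : a' = c := le_antisymm hc1 hge
        subst this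
        exact ⟨a', le_refl _, by omega, ReflTransGen.refl,
          ReflTransGen.head hax hxn⟩


/-- Build an increasing sequence of windowed intermediate points along a small-rise path. -/
lemma build_seq {E' : ℕ → ℕ → Prop} {t : ℕ} (ht : 1 ≤ t)
    (hE' : ∀ x y, E' x y → y < x + t) {w n : ℕ} (h : ReflTransGen E' w n) :
    ∀ N, w + N * t ≤ n → ∃ g : ℕ → ℕ, g 0 = w ∧
      (∀ i, i < N → g i < g (i + 1) ∧ g (i + 1) ≤ g i + t ∧
        ReflTransGen E' (g i) (g (i + 1))) ∧
      (∀ i, i ≤ N → ReflTransGen E' w (g i) ∧ ReflTransGen E' (g i) n ∧ g i ≤ w + i * t) := by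
  intro N
  induction N with
  | zero =>
      intro _
      exact ⟨fun _ => w, rfl, fun i hi => by omega,
        fun i hi => by
          have : i = 0 := by omega
          subst this
          exact ⟨ReflTransGen.refl, h, by simp⟩⟩
  | succ N ih =>
      intro hN
      obtain ⟨g, hg0, hlink, hinv⟩ := ih (by
        have : N * t ≤ (N+1) * t := Nat.mul_le_mul_right _ (by omega)
        omega)
      obtain ⟨hwg, hgn, hgb⟩ := hinv N (le_refl _)
      have hzn : g N + 1 ≤ n := by
        have h1 : N * t + t ≤ (N+1) * t := by rw [Nat.succ_mul]
        omega
      obtain ⟨z', hz1, hz2, hz3, hz4⟩ := path_extract ht hE' hgn (g N + 1) (by omega) hzn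
      refine ⟨fun i => if i ≤ N then g i else z', by simp [hg0], ?_, ?_⟩
      · intro i hi
        by_cases hiN : i + 1 ≤ N
        · simp only [if_pos (by omega : i ≤ N), if_pos hiN]
          exact hlink i (by omega)
        · have hieq : i = N := by omega
          subst hieq
          simp only [if_pos (le_refl _), if_neg (by omega : ¬ i + 1 ≤ i)]
          exact ⟨by omega, by omega, hz3⟩
      · intro i hi
        by_cases hiN : i ≤ N
        · simp only [if_pos hiN]
          exact hinv i hiN
        · have hieq : i = N + 1 := by omega
          subst hieq
          simp only [if_neg (by omega : ¬ N + 1 ≤ N)]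
          refine ⟨ReflTransGen.trans hwg hz3, hz4, ?_⟩
          have h1 : N * t + t ≤ (N+1) * t := by rw [Nat.succ_mul]
          omega

lemma chain_props {E' : ℕ → ℕ → Prop} {g : ℕ → ℕ} {N : ℕ} {t : ℕ}
    (hlink : ∀ i, i < N → g i < g (i + 1) ∧ g (i + 1) ≤ g i + t ∧
      ReflTransGen E' (g i) (g (i + 1))) :
    ∀ i k, i + k ≤ N → g i + k ≤ g (i + k) ∧ g (i + k) ≤ g i + k * t ∧
      ReflTransGen E' (g i) (g (i + k)) := by
  intro i k
  induction k with
  | zero =>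
      intro _
      simp only [Nat.add_zero]
      exact ⟨le_refl _, by omega, ReflTransGen.refl⟩
  | succ m ih =>
      intro hik
      obtain ⟨h1, h2, h3⟩ := ih (by omega)
      obtain ⟨h4, h5, h6⟩ := hlink (i + m) (by omega)
      have he : i + (m + 1) = (i + m) + 1 := by omega
      rw [he]
      refine ⟨by omega, ?_, ReflTransGen.trans h3 h6⟩
      have : (m + 1) * t = m * t + t := by rw [Nat.succ_mul]
      omega

lemma pump {E : ℕ → ℕ → Prop} {p : ℕ} (hup : ∀ a b, E a b → E (a + p) (b + p))
    {w x d n : ℕ} (hd : p ∣ d) (h1 : ReflTransGen E w x) (h2 : ReflTransGen E x (x + d))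
    (h3 : ReflTransGen E (x + d) n) : ∀ j, ReflTransGen E w (n + j * d) := by
  have hseg : ∀ k, ReflTransGen E x (x + k * d) := by
    intro k
    induction k with
    | zero => simpa using ReflTransGen.refl
    | succ m ih =>
        have hshift := rtg_shift (c := m * d)
          (fun a b hab => upshift_dvd hup (Dvd.dvd.mul_left hd m) a b hab) h2
        have he : x + d + m * d = x + (m + 1) * d := by ring
        rw [he] at hshift
        exact ReflTransGen.trans ih hshift
  intro j
  have hsuf := rtg_shift (c := j * d)
    (fun a b hab => upshift_dvd hup (Dvd.dvd.mul_left hd j) a b hab) h3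
  have he : x + d + j * d = x + (j + 1) * d := by ring
  rw [he] at hsuf
  exact ReflTransGen.trans (ReflTransGen.trans h1 (hseg (j + 1))) hsuf

/-- The CORE pumping lemma: in a graph invariant under upward `p`-shift whose
long up-edges are `p`-periodic, the reachability set from `w` is closed under
adding `(p*t+t)!` beyond `w + p*t + t + 1`. -/
theorem core {E : ℕ → ℕ → Prop} {p t : ℕ} (hp : 1 ≤ p) (ht : 1 ≤ t)
    (hup : ∀ a b, E a b → E (a + p) (b + p))
    (hlong : ∀ a d, t ≤ d → E a (a + d) → E a (a + d + p)) :
    ∀ w n, TransGen E w n → w + p * t + t + 1 ≤ n →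
      TransGen E w (n + (p * t + t).factorial) := by
  intro w n htg hn
  set P := (p * t + t).factorial with hP
  have hPpos : 1 ≤ P := Nat.factorial_pos _
  have hrtg := TransGen.to_reflTransGen htg
  have hne : w ≠ n + P := by omega
  refine tg_of_rtg_ne ?_ hne
  rcases path_split (t := t) hrtg with ⟨a, b, hwa, hab, hatb, hbn⟩ | hsmall
  · -- long up-edge case, pump by p
    have hpdvd : p ∣ P := Nat.dvd_factorial hp (by nlinarith)
    set d0 := b - a with hd0
    have hbe : b = a + d0 := by omega
    have hlongiter : ∀ k, E a (a + d0 + k * p) := by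
      intro k
      induction k with
      | zero => simpa using (hbe ▸ hab)
      | succ m ih =>
          have := hlong a (d0 + m * p) (by omega) (by
            have he : a + (d0 + m * p) = a + d0 + m * p := by ring
            rwa [he])
          have he : a + (d0 + m * p) + p = a + d0 + (m + 1) * p := by ring
          rwa [he] at this
    obtain ⟨k, hk⟩ := hpdvd
    have hedge : E a (b + P) := by
      have := hlongiter k
      have he : a + d0 + k * p = b + P := by rw [hbe, hk]; ring
      rwa [he] at this
    have hsuf := rtg_shift (c := P) (fun x y hxy => upshift_dvd hup ⟨k, hk⟩ x y hxy) hbn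
    exact ReflTransGen.trans hwa (ReflTransGen.head hedge hsuf)
  · -- small-rise case: pigeonhole two window points with equal residue
    set E' := fun x y => E x y ∧ y < x + t with hE'def
    have hE' : ∀ x y, E' x y → y < x + t := fun x y hxy => hxy.2
    obtain ⟨g, hg0, hlink, hinv⟩ := build_seq ht hE' hsmall p (by nlinarith)
    obtain ⟨i, hi, j, hj, hij, heq⟩ :=
      Finset.exists_ne_map_eq_of_card_lt_of_maps_to
        (s := Finset.range (p + 1)) (t := Finset.range p)
        (by simp) (fun i _ => Finset.mem_range.mpr (Nat.mod_lt _ hp)) (f := fun i => g i % p)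
    simp only [Finset.mem_range] at hi hj
    wlog hlt : i < j generalizing i j
    · exact this j i (Ne.symm hij) heq.symm hj hi (by omega)
    obtain ⟨hc1, hc2, hc3⟩ := chain_props hlink i (j - i) (by omega)
    have hje : i + (j - i) = j := by omega
    rw [hje] at hc1 hc2 hc3
    set d := g j - g i with hd
    have hdpos : 1 ≤ d := by omega
    have hdle : d ≤ p * t := by
      have : (j - i) * t ≤ p * t := Nat.mul_le_mul_right _ (by omega)
      omega
    have hpd : p ∣ d := (Nat.modEq_iff_dvd' (by omega)).mp heq
    have hddvd : d ∣ P := Nat.dvd_factorial hdpos (by omega)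
    obtain ⟨m, hm⟩ := hddvd
    have hge : g i + d = g j := by omega
    obtain ⟨hwgi, _, _⟩ := hinv i (by omega)
    obtain ⟨_, hgjn, _⟩ := hinv j (by omega)
    have hE'E : ∀ a b : ℕ, E' a b → E a b := fun a b hab => hab.1
    have := pump (E := E) hup hpd
      (ReflTransGen.mono hE'E _ _ hwgi)
      (hge ▸ ReflTransGen.mono hE'E _ _ hc3)
      (hge ▸ ReflTransGen.mono hE'E _ _ hgjn) m
    have he : n + m * d = n + P := by
      rw [hm]; ring
    rwa [he] at this


/-! ### The Good predicate (finite-automaton periodicity conditions) -/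

/-- The periodicity conditions a relation satisfies iff its convolution language
is regular. -/
def Good (R : ℕ → ℕ → Prop) (p t : ℕ) : Prop :=
  1 ≤ p ∧ 1 ≤ t ∧
  (∀ m n, t ≤ m → t ≤ n → (R m n ↔ R (m + p) (n + p))) ∧
  (∀ n d, t ≤ d → (R (n + d) n ↔ R (n + d + p) n)) ∧
  (∀ m d, t ≤ d → (R m (m + d) ↔ R m (m + d + p)))

lemma good_flip {R : ℕ → ℕ → Prop} {p t : ℕ} (h : Good R p t) :
    Good (fun a b => R b a) p t := by
  obtain ⟨hp, ht, h1, h2, h3⟩ := h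
  exact ⟨hp, ht, fun m n hm hn => h1 n m hn hm, h3, h2⟩

/-- The restriction of `R` to vertices at least `C`. -/
def Rhigh (R : ℕ → ℕ → Prop) (C : ℕ) : ℕ → ℕ → Prop :=
  fun a b => R a b ∧ C ≤ a ∧ C ≤ b

lemma rhigh_flip {R : ℕ → ℕ → Prop} {C : ℕ} :
    ∀ a b, Rhigh (fun x y => R y x) C a b ↔ Rhigh R C b a := by
  intro a b; unfold Rhigh; tauto

lemma rhigh_fullup {R : ℕ → ℕ → Prop} {p t C : ℕ} (h : Good R p t) (hC : t ≤ C) :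
    ∀ a b, Rhigh R C a b → Rhigh R C (a + p) (b + p) := by
  rintro a b ⟨hr, ha, hb⟩
  exact ⟨(h.2.2.1 a b (le_trans hC ha) (le_trans hC hb)).mp hr, by omega, by omega⟩

lemma rhigh_longup {R : ℕ → ℕ → Prop} {p t C : ℕ} (h : Good R p t) :
    ∀ a d, t ≤ d → (Rhigh R C a (a + d) ↔ Rhigh R C a (a + d + p)) := by
  intro a d hd
  unfold Rhigh
  by_cases ha : C ≤ a
  · have := h.2.2.2.2 a d hd
    constructor
    · rintro ⟨h1, h2, h3⟩; exact ⟨this.mp h1, h2, by omega⟩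
    · rintro ⟨h1, h2, h3⟩; exact ⟨this.mpr h1, h2, by omega⟩
  · constructor <;> (rintro ⟨_, h2, _⟩; exact absurd h2 ha)

lemma rhigh_longdown {R : ℕ → ℕ → Prop} {p t C : ℕ} (h : Good R p t) :
    ∀ b d, t ≤ d → (Rhigh R C (b + d) b ↔ Rhigh R C (b + d + p) b) := by
  intro b d hd
  unfold Rhigh
  by_cases hb : C ≤ b
  · have := h.2.2.2.1 b d hd
    constructor
    · rintro ⟨h1, h2, h3⟩; exact ⟨this.mp h1, by omega, h3⟩
    · rintro ⟨h1, h2, h3⟩; exact ⟨this.mpr h1, by omega, h3⟩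
  · constructor <;> (rintro ⟨_, _, h3⟩; exact absurd h3 hb)

lemma good_rhigh {R : ℕ → ℕ → Prop} {p t C : ℕ} (h : Good R p t) (hC : t ≤ C) :
    Good (Rhigh R C) p (max t C) := by
  obtain ⟨hp, ht, h1, h2, h3⟩ := h
  refine ⟨hp, by omega, ?_, ?_, ?_⟩
  · intro m n hm hn
    constructor
    · intro hr; exact rhigh_fullup ⟨hp, ht, h1, h2, h3⟩ hC m n hr
    · rintro ⟨hr, _, _⟩
      refine ⟨(h1 m n (by omega) (by omega)).mpr hr, by omega, by omega⟩
  · intro n d hd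
    exact rhigh_longdown ⟨hp, ht, h1, h2, h3⟩ n d (by omega)
  · intro m d hd
    exact rhigh_longup ⟨hp, ht, h1, h2, h3⟩ m d (by omega)

/-! ### Path decomposition at a cutoff -/

open Relation in
/-- Any transitive path ending at a vertex `≥ C` either stays entirely `≥ C`,
or passes through a low vertex `u < C` followed by an edge into the high region. -/
lemma dec2 {R : ℕ → ℕ → Prop} {C : ℕ} :
    ∀ {a b}, TransGen R a b → C ≤ b →
      (C ≤ a ∧ TransGen (Rhigh R C) a b) ∨
      ∃ u w, u < C ∧ C ≤ w ∧ ReflTransGen R a u ∧ R u w ∧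
        ReflTransGen (Rhigh R C) w b := by
  intro a b htg
  induction htg using TransGen.head_induction_on with
  | single hab =>
      rename_i a'
      intro hCb
      by_cases hCa : C ≤ a'
      · exact Or.inl ⟨hCa, TransGen.single ⟨hab, hCa, hCb⟩⟩
      · exact Or.inr ⟨a', b, by omega, hCb, ReflTransGen.refl, hab, ReflTransGen.refl⟩
  | head hax hxb ih =>
      rename_i a' x
      intro hCb
      rcases ih hCb with ⟨hCx, htg'⟩ | ⟨u, w, h1, h2, h3, h4, h5⟩
      · by_cases hCa : C ≤ a'
        · exact Or.inl ⟨hCa, TransGen.head ⟨hax, hCa, hCx⟩ htg'⟩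
        · exact Or.inr ⟨a', x, by omega, hCx, ReflTransGen.refl, hax,
            TransGen.to_reflTransGen htg'⟩
      · exact Or.inr ⟨u, w, h1, h2, ReflTransGen.head hax h3, h4, h5⟩

open Relation in
lemma dec2_conv {R : ℕ → ℕ → Prop} {C : ℕ} {a b u w : ℕ}
    (h3 : ReflTransGen R a u) (h4 : R u w) (h5 : ReflTransGen (Rhigh R C) w b) :
    TransGen R a b := by
  have h5' : ReflTransGen R w b := ReflTransGen.mono (fun x y hxy => hxy.1) _ _ h5
  exact TransGen.trans_right h3 (TransGen.head' h4 h5')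


open Relation

/-! ### Section lemma: reachability sets of a fixed vertex are ultimately periodic -/

lemma up_rtg_fixed {E : ℕ → ℕ → Prop} {p t : ℕ} (hp : 1 ≤ p) (ht : 1 ≤ t)
    (hup : ∀ a b, E a b → E (a + p) (b + p))
    (hlong : ∀ a d, t ≤ d → E a (a + d) → E a (a + d + p)) (w0 : ℕ) :
    UP (fun n => ReflTransGen E w0 n) := by
  have htg : UP (fun n => TransGen E w0 n) := by
    refine up_of_plusClosed_beyond (q := (p * t + t).factorial) (c := w0 + p * t + t + 1)
      (Nat.factorial_pos _) ?_
    intro n hn h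
    exact core hp ht hup hlong w0 n h hn
  have hsing : UP (fun n => n = w0) := up_bounded (c := w0 + 1) (fun x hx => by omega)
  refine up_congr_beyond (c := 0) (fun n _ => ?_) (up_union hsing htg)
  rw [Relation.reflTransGen_iff_eq_or_transGen]

lemma section_up {R : ℕ → ℕ → Prop} {p t : ℕ} (hg : Good R p t) (v : ℕ) :
    UP (fun n => TransGen R v n) := by
  obtain ⟨hp, ht, h1, h2, h3⟩ := hg
  set C := max (t + p) (v + 1) with hC
  have hCt : t ≤ C := by omega
  have hvC : v < C := by omega
  set E := Rhigh R C with hE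
  have hful : ∀ a b, E a b → E (a + p) (b + p) := rhigh_fullup ⟨hp, ht, h1, h2, h3⟩ hCt
  have hlongup : ∀ a d, t ≤ d → E a (a + d) → E a (a + d + p) :=
    fun a d hd h => (rhigh_longup ⟨hp, ht, h1, h2, h3⟩ a d hd).mp h
  set Bnear : ℕ → ℕ → Prop :=
    fun u n => ∃ i, i < t ∧ R u (C + i) ∧ ReflTransGen E (C + i) n with hBnear
  set Bfar : ℕ → ℕ → Prop :=
    fun u n => ∃ w, C + t ≤ w ∧ R u w ∧ ReflTransGen E w n with hBfar
  set T : ℕ → Prop :=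
    fun n => ∃ u, u < C ∧ ((u = v ∨ TransGen R v u) ∧ (Bnear u n ∨ Bfar u n)) with hT
  have claim1 : ∀ n, C ≤ n → (TransGen R v n ↔ T n) := by
    intro n hn
    constructor
    · intro htg
      rcases dec2 htg hn with ⟨hCv, _⟩ | ⟨u, w, hu, hw, hvu, huw, hwn⟩
      · omega
      · refine ⟨u, hu, ?_, ?_⟩
        · rcases Relation.reflTransGen_iff_eq_or_transGen.mp hvu with heq | htg'
          · exact Or.inl heq
          · exact Or.inr htg'
        · by_cases hwt : w < C + t
          · refine Or.inl ⟨w - C, by omega, ?_, ?_⟩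
            · have : C + (w - C) = w := by omega
              rwa [this]
            · have : C + (w - C) = w := by omega
              rwa [this]
          · exact Or.inr ⟨w, by omega, huw, hwn⟩
    · rintro ⟨u, hu, hvu, hB⟩
      · obtain ⟨w, hRuw, hwn⟩ : ∃ w, R u w ∧ ReflTransGen E w n := by
          rcases hB with ⟨i, _, hr, hrtg⟩ | ⟨w, _, hr, hrtg⟩
          · exact ⟨C + i, hr, hrtg⟩
          · exact ⟨w, hr, hrtg⟩
        have htun : TransGen R u n :=
          TransGen.head' hRuw (ReflTransGen.mono (fun x y hxy => hxy.1) _ _ hwn)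
        rcases hvu with rfl | htvu
        · exact htun
        · exact TransGen.trans htvu htun
  have hUPrtg : ∀ w0, UP (fun n => ReflTransGen E w0 n) :=
    fun w0 => up_rtg_fixed hp ht hful hlongup w0
  have hUPbnear : ∀ u, UP (Bnear u) := by
    intro u
    have := up_biUnion t (fun i n => R u (C + i) ∧ ReflTransGen E (C + i) n) ?_
    · exact up_congr_beyond (c := 0) (fun n _ => Iff.rfl) this
    · intro i hi
      by_cases hr : R u (C + i)
      · refine up_congr_beyond (c := 0) (fun n _ => ?_) (hUPrtg (C + i))
        constructor
        · rintro ⟨_, h⟩; exact h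
        · intro h; exact ⟨hr, h⟩
      · exact up_bounded (c := 0) (fun x hx => absurd hx.1 hr)
  have hUPbfar : ∀ u, u < C → UP (Bfar u) := by
    intro u hu
    refine up_of_plusClosed' hp ?_
    rintro n ⟨w, hw, hRuw, hrtg⟩
    refine ⟨w + p, by omega, ?_, rtg_shift hful hrtg⟩
    have hd : t ≤ w - u := by omega
    have := (h3 u (w - u) hd).mp (by
      have : u + (w - u) = w := by omega
      rwa [this])
    have he : u + (w - u) + p = w + p := by omega
    rwa [he] at this
  have hUPT : UP T := by
    refine up_congr_beyond (c := 0) (fun n _ => Iff.rfl)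
      (up_biUnion C (fun u n => (u = v ∨ TransGen R v u) ∧ (Bnear u n ∨ Bfar u n)) ?_)
    intro u hu
    by_cases hcond : u = v ∨ TransGen R v u
    · refine up_congr_beyond (c := 0) (fun n _ => ?_)
        (up_union (hUPbnear u) (hUPbfar u hu))
      constructor
      · rintro ⟨_, h⟩; exact h
      · intro h; exact ⟨hcond, h⟩
    · exact up_bounded (c := 0) (fun x hx => absurd hx.1 hcond)
  exact up_congr_beyond (c := C) claim1 hUPT

lemma section_down {R : ℕ → ℕ → Prop} {p t : ℕ} (hg : Good R p t) (v : ℕ) :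
    UP (fun m => TransGen R m v) := by
  have := section_up (good_flip hg) v
  refine up_congr_beyond (c := 0) (fun m _ => ?_) this
  constructor
  · intro h; exact Relation.TransGen.swap _ _ h
  · intro h; exact Relation.TransGen.swap _ _ h


/-! ### Stabilization of down-reachability profiles -/

lemma stab_res {E : ℕ → ℕ → Prop} {p tE : ℕ} (hp : 1 ≤ p) (htE : 1 ≤ tE)
    (hful : ∀ a b, E a b → E (a + p) (b + p))
    (hlongdown : ∀ b d, tE ≤ d → E (b + d) b → E (b + d + p) b) (r : ℕ) :
    ∃ K, ∀ k d, K ≤ k →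
      (TransGen E (r + k * p + d) (r + k * p) ↔
        TransGen E (r + K * p + d) (r + K * p)) := by
  classical
  set c0 := p * tE + tE + 1 with hc0
  set P := (p * tE + tE).factorial with hPdef
  have hPpos : 1 ≤ P := Nat.factorial_pos _
  set M : ℕ → ℕ → Prop := fun b d => TransGen E (b + d) b with hM
  set A : ℕ → ℕ → Prop := fun k d => M (r + k * p) d with hA
  have astep : ∀ k d, A k d → A (k + 1) d := by
    intro k d h
    have h' := tg_shift (c := p) hful h
    have e1 : r + k * p + d + p = r + (k + 1) * p + d := by ring
    have e2 : r + k * p + p = r + (k + 1) * p := by ring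
    rwa [e1, e2] at h'
  have amono0 : ∀ m k d, A k d → A (k + m) d := by
    intro m
    induction m with
    | zero => intro k d h; simpa using h
    | succ i ih =>
        intro k d h
        have := astep (k + i) d (ih k d h)
        have e : k + i + 1 = k + (i + 1) := by omega
        rwa [e] at this
  have amono : ∀ k k' d, k ≤ k' → A k d → A k' d := by
    intro k k' d hk h
    obtain ⟨m, rfl⟩ := Nat.exists_eq_add_of_le hk
    exact amono0 m k d h
  have hM2 : ∀ b d, c0 ≤ d → M b d → M b (d + P) := by
    intro b d hd h
    have hswap : TransGen (fun x y => E y x) b (b + d) := TransGen.swap _ _ h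
    have hcore := core (E := fun x y => E y x) (p := p) (t := tE) hp htE
      (fun a b' hab => hful b' a hab)
      (fun a dd hdd hE => hlongdown a dd hdd hE) b (b + d) hswap (by omega)
    have h2 : TransGen E (b + d + P) b := TransGen.swap _ _ hcore
    have e : b + d + P = b + (d + P) := by ring
    rwa [e] at h2
  have hA2 : ∀ k d, c0 ≤ d → A k d → A k (d + P) := fun k d hd h => hM2 _ d hd h
  set U : ℕ → Prop := fun d => ∃ k, A k d with hU
  -- small part
  set K1 := (Finset.range c0).sup (fun d => if h : U d then Classical.choose h else 0) with hK1
  have hsmall : ∀ d, d < c0 → U d → A K1 d := by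
    intro d hd hUd
    have hch : A (Classical.choose hUd) d := Classical.choose_spec hUd
    have hle : (if h : U d then Classical.choose h else 0) ≤ K1 :=
      Finset.le_sup (f := fun d => if h : U d then Classical.choose h else 0)
        (Finset.mem_range.mpr hd)
    rw [dif_pos hUd] at hle
    exact amono _ _ _ hle hch
  -- large part, per residue class mod P
  set setJ : ℕ → Set ℕ := fun j => {d | c0 ≤ d ∧ d % P = j ∧ U d} with hsetJ
  set kj : ℕ → ℕ := fun j =>
    if h : (setJ j).Nonempty then Classical.choose ((Nat.sInf_mem h).2.2) else 0 with hkj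
  set K2 := (Finset.range P).sup kj with hK2
  have hlarge : ∀ d, c0 ≤ d → U d → A K2 d := by
    intro d hd hUd
    set j := d % P with hj
    have hjP : j < P := Nat.mod_lt _ hPpos
    have hdJ : d ∈ setJ j := ⟨hd, rfl, hUd⟩
    have hne : (setJ j).Nonempty := ⟨d, hdJ⟩
    set μ := sInf (setJ j) with hμ
    have hμJ : μ ∈ setJ j := Nat.sInf_mem hne
    have hμd : μ ≤ d := Nat.sInf_le hdJ
    have hAkjμ : A (kj j) μ := by
      rw [hkj]
      simp only [dif_pos hne]
      exact Classical.choose_spec ((Nat.sInf_mem hne).2.2)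
    have hdvd : P ∣ d - μ := by
      have : μ ≡ d [MOD P] := by
        unfold Nat.ModEq
        rw [hμJ.2.1, ← hj]
      exact (Nat.modEq_iff_dvd' hμd).mp this
    obtain ⟨m, hm⟩ := hdvd
    rw [Nat.mul_comm] at hm
    have hiter : ∀ i, A (kj j) (μ + i * P) := by
      intro i
      induction i with
      | zero => simpa using hAkjμ
      | succ l ih =>
          have := hA2 (kj j) (μ + l * P) (by
            have := hμJ.1
            omega) ih
          have e : μ + l * P + P = μ + (l + 1) * P := by ring
          rwa [e] at this
    have := hiter m
    have e : μ + m * P = d := by omega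
    rw [e] at this
    exact amono _ _ _ (Finset.le_sup (Finset.mem_range.mpr hjP)) this
  set K := max K1 K2 with hK
  refine ⟨K, ?_⟩
  intro k d hk
  constructor
  · intro h
    have hUd : U d := ⟨k, h⟩
    by_cases hd : d < c0
    · exact amono _ _ _ (le_max_left _ _) (hsmall d hd hUd)
    · exact amono _ _ _ (le_max_right _ _) (hlarge d (by omega) hUd)
  · intro h
    exact amono _ _ _ hk h

lemma stab_all {E : ℕ → ℕ → Prop} {p tE : ℕ} (hp : 1 ≤ p) (htE : 1 ≤ tE)
    (hful : ∀ a b, E a b → E (a + p) (b + p))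
    (hlongdown : ∀ b d, tE ≤ d → E (b + d) b → E (b + d + p) b) :
    ∃ V, ∀ b d, V ≤ b →
      (TransGen E (b + d) b ↔ TransGen E (b + p + d) (b + p)) := by
  classical
  choose K hK using stab_res hp htE hful hlongdown
  set V := p + (Finset.range p).sup (fun r => r + K r * p) with hV
  refine ⟨V, ?_⟩
  intro b d hb
  set r := b % p with hr
  set k := b / p with hk
  have hrp : r < p := Nat.mod_lt _ hp
  have hbe : r + k * p = b := by
    rw [hr, hk, Nat.mul_comm]
    exact Nat.mod_add_div b p
  have hsup : r + K r * p ≤ (Finset.range p).sup (fun r => r + K r * p) :=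
    Finset.le_sup (f := fun r => r + K r * p) (Finset.mem_range.mpr hrp)
  have hkK : K r ≤ k := by
    by_contra hlt
    push_neg at hlt
    have h5 : k + 1 ≤ K r := hlt
    have h6 : (k + 1) * p ≤ K r * p := Nat.mul_le_mul_right _ h5
    rw [Nat.succ_mul] at h6
    omega
  have h1 := hK r k d hkK
  have h2 := hK r (k + 1) d (by omega)
  have e1 : r + k * p + d = b + d := by rw [hbe]
  have e2 : r + (k + 1) * p = b + p := by rw [Nat.succ_mul, ← Nat.add_assoc, hbe]
  have e3 : r + (k + 1) * p + d = b + p + d := by rw [e2]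
  rw [e1, hbe] at h1
  rw [e3, e2] at h2
  exact h1.trans h2.symm


/-! ### Assembly: Good is preserved by transitive closure -/

lemma tg_flip {E : ℕ → ℕ → Prop} {x y : ℕ} :
    TransGen (fun a b => E b a) x y ↔ TransGen E y x :=
  ⟨fun h => TransGen.swap _ _ h, fun h => TransGen.swap _ _ h⟩

lemma rep_decomp {V1 p : ℕ} (hp : 1 ≤ p) {b : ℕ} (hb : V1 + p ≤ b) :
    ∃ ρ j, V1 ≤ ρ ∧ ρ < V1 + p ∧ b = ρ + j * p := by
  refine ⟨V1 + (b - V1) % p, (b - V1) / p, by omega,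
    by have := Nat.mod_lt (b - V1) hp; omega, ?_⟩
  have h1 := Nat.mod_add_div (b - V1) p
  have h2 : (b - V1) / p * p = p * ((b - V1) / p) := Nat.mul_comm _ _
  omega

lemma dec_iff {R : ℕ → ℕ → Prop} {C : ℕ} {m n : ℕ} (hm : C ≤ m) (hn : C ≤ n) :
    TransGen R m n ↔
      (TransGen (Rhigh R C) m n ∨ ∃ u, u < C ∧ TransGen R m u ∧ TransGen R u n) := by
  constructor
  · intro h
    rcases dec2 h hn with ⟨_, h'⟩ | ⟨u, w, h1, h2, h3, h4, h5⟩
    · exact Or.inl h'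
    · refine Or.inr ⟨u, h1, tg_of_rtg_ne h3 (by omega), ?_⟩
      exact TransGen.head' h4 (ReflTransGen.mono (fun x y hxy => hxy.1) _ _ h5)
  · rintro (h | ⟨u, _, h1, h2⟩)
    · exact TransGen.mono (fun x y hxy => hxy.1) _ _ h
    · exact TransGen.trans h1 h2

lemma good_transGen {R : ℕ → ℕ → Prop} {p t : ℕ} (hg : Good R p t) :
    ∃ p' t', Good (TransGen R) p' t' := by
  classical
  obtain ⟨hp, ht, h1, h2, h3⟩ := hg
  set C := t + p with hCdef
  set E := Rhigh R C with hEdef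
  have hCt : t ≤ C := by omega
  have hfulE : ∀ a b, E a b → E (a + p) (b + p) := rhigh_fullup ⟨hp, ht, h1, h2, h3⟩ hCt
  have hldE : ∀ b d, t ≤ d → E (b + d) b → E (b + d + p) b :=
    fun b d hd h => (rhigh_longdown ⟨hp, ht, h1, h2, h3⟩ b d hd).mp h
  have hluE : ∀ a d, t ≤ d → E a (a + d) → E a (a + d + p) :=
    fun a d hd h => (rhigh_longup ⟨hp, ht, h1, h2, h3⟩ a d hd).mp h
  have hgE : Good E p (max t C) := good_rhigh ⟨hp, ht, h1, h2, h3⟩ hCt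
  -- stabilization of down- and up-profiles of TransGen E
  obtain ⟨V1, hV1⟩ := stab_all (E := E) hp ht hfulE hldE
  obtain ⟨V2, hV2'⟩ := stab_all (E := fun a b => E b a) hp ht
    (fun a b h => hfulE b a h) (fun b d hd h => hluE b d hd h)
  have hV2 : ∀ b d, V2 ≤ b → (TransGen E b (b + d) ↔ TransGen E (b + p) (b + p + d)) := by
    intro b d hb
    exact ⟨fun h => TransGen.swap _ _ ((hV2' b d hb).mp (TransGen.swap _ _ h)),
      fun h => TransGen.swap _ _ ((hV2' b d hb).mpr (TransGen.swap _ _ h))⟩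
  have hstabM : ∀ b, V1 ≤ b → ∀ j d,
      (TransGen E (b + d) b ↔ TransGen E (b + j * p + d) (b + j * p)) := by
    intro b hb j
    induction j with
    | zero => intro d; simp
    | succ i ih =>
        intro d
        have ha := ih d
        have hb2 := hV1 (b + i * p) d (by omega)
        have e1 : b + i * p + p + d = b + (i + 1) * p + d := by ring
        have e2 : b + i * p + p = b + (i + 1) * p := by ring
        rw [e1, e2] at hb2
        exact ha.trans hb2
  have hstabN : ∀ b, V2 ≤ b → ∀ j d,
      (TransGen E b (b + d) ↔ TransGen E (b + j * p) (b + j * p + d)) := by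
    intro b hb j
    induction j with
    | zero => intro d; simp
    | succ i ih =>
        intro d
        have ha := ih d
        have hb2 := hV2 (b + i * p) d (by omega)
        have e1 : b + i * p + p + d = b + (i + 1) * p + d := by ring
        have e2 : b + i * p + p = b + (i + 1) * p := by ring
        rw [e1, e2] at hb2
        exact ha.trans hb2
  -- uniform ultimate periodicity of the stabilized profiles (down side)
  obtain ⟨qM, θM, hqM, hMiff⟩ := up_common (V1 + p)
    (fun i d => TransGen E (i + d) i)
    (fun i _ => up_shift i (section_down hgE i))
  have giiM : ∀ b d, θM ≤ d → (TransGen E (b + d) b ↔ TransGen E (b + d + qM) b) := by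
    intro b d hd
    by_cases hb : b < V1 + p
    · have := hMiff b hb d hd
      have e : b + (d + qM) = b + d + qM := by ring
      rwa [e] at this
    · obtain ⟨ρ, j, hρ1, hρ2, hbe⟩ := rep_decomp hp (by omega : V1 + p ≤ b)
      subst hbe
      have s1 := (hstabM ρ hρ1 j d).symm
      have s2 := hMiff ρ hρ2 d hd
      have s3 := hstabM ρ hρ1 j (d + qM)
      have e1 : ρ + (d + qM) = ρ + d + qM := by ring
      have e2 : ρ + j * p + (d + qM) = ρ + j * p + d + qM := by ring
      rw [e1] at s2
      rw [e1, e2] at s3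
      exact (s1.trans s2).trans s3
  -- up side
  obtain ⟨qN, θN, hqN, hNiff⟩ := up_common (V2 + p)
    (fun i d => TransGen E i (i + d))
    (fun i _ => up_shift i (section_up hgE i))
  have giiN : ∀ b d, θN ≤ d → (TransGen E b (b + d) ↔ TransGen E b (b + d + qN)) := by
    intro b d hd
    by_cases hb : b < V2 + p
    · have := hNiff b hb d hd
      have e : b + (d + qN) = b + d + qN := by ring
      rwa [e] at this
    · obtain ⟨ρ, j, hρ1, hρ2, hbe⟩ := rep_decomp hp (by omega : V2 + p ≤ b)
      subst hbe
      have s1 := (hstabN ρ hρ1 j d).symm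
      have s2 := hNiff ρ hρ2 d hd
      have s3 := hstabN ρ hρ1 j (d + qN)
      have e1 : ρ + (d + qN) = ρ + d + qN := by ring
      have e2 : ρ + j * p + (d + qN) = ρ + j * p + d + qN := by ring
      rw [e1] at s2
      rw [e1, e2] at s3
      exact (s1.trans s2).trans s3
  -- sections of R at low vertices
  obtain ⟨qR, θR, hqR, hRiff⟩ := up_common (2 * C)
    (fun i => if i < C then (fun m => TransGen R m i) else (fun n => TransGen R (i - C) n))
    (fun i _ => by
      by_cases hi : i < C
      · simpa [hi] using section_down ⟨hp, ht, h1, h2, h3⟩ i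
      · simpa [hi] using section_up ⟨hp, ht, h1, h2, h3⟩ (i - C))
  have hPred : ∀ u, u < C → ∀ m, θR ≤ m → (TransGen R m u ↔ TransGen R (m + qR) u) := by
    intro u hu m hm
    have := hRiff u (by omega) m hm
    rwa [if_pos hu] at this
  have hSucc : ∀ u, u < C → ∀ n, θR ≤ n → (TransGen R u n ↔ TransGen R u (n + qR)) := by
    intro u hu n hn
    have := hRiff (C + u) (by omega) n hn
    rw [if_neg (by omega)] at this
    have e : C + u - C = u := by omega
    rwa [e] at this
  -- final period and threshold
  set q := Nat.lcm p (Nat.lcm qM (Nat.lcm qN qR)) with hq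
  have hq1 : 1 ≤ q := Nat.lcm_pos hp (Nat.lcm_pos hqM (Nat.lcm_pos hqN hqR))
  have hpq : p ∣ q := Nat.dvd_lcm_left _ _
  have hqMq : qM ∣ q := dvd_trans (Nat.dvd_lcm_left _ _) (Nat.dvd_lcm_right _ _)
  have hqNq : qN ∣ q := dvd_trans (dvd_trans (Nat.dvd_lcm_left _ _) (Nat.dvd_lcm_right _ _))
    (Nat.dvd_lcm_right _ _)
  have hqRq : qR ∣ q := dvd_trans (dvd_trans (Nat.dvd_lcm_right _ _) (Nat.dvd_lcm_right _ _))
    (Nat.dvd_lcm_right _ _)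
  obtain ⟨jq, hjq⟩ := hpq
  set Λ := C + θM + θN + θR + V1 + V2 + q + 1 with hΛ
  -- iterated versions of the gii lemmas with period q
  have giiMq : ∀ b d, θM ≤ d → (TransGen E (b + d) b ↔ TransGen E (b + d + q) b) := by
    intro b d hd
    have h0 := up_dvd_iff (S := fun d => TransGen E (b + d) b) (fun x hx => by
      have := giiM b x hx
      have e : b + (x + qM) = b + x + qM := by ring
      rwa [← e] at this) hqMq d hd
    have h0' : TransGen E (b + d) b ↔ TransGen E (b + (d + q)) b := h0
    have e : b + (d + q) = b + d + q := by ring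
    rwa [e] at h0' 
  have giiNq : ∀ b d, θN ≤ d → (TransGen E b (b + d) ↔ TransGen E b (b + d + q)) := by
    intro b d hd
    have h0 := up_dvd_iff (S := fun d => TransGen E b (b + d)) (fun x hx => by
      have := giiN b x hx
      have e : b + (x + qN) = b + x + qN := by ring
      rwa [← e] at this) hqNq d hd
    have h0' : TransGen E b (b + d) ↔ TransGen E b (b + (d + q)) := h0
    have e : b + (d + q) = b + d + q := by ring
    rwa [e] at h0' 
  have hPredq : ∀ u, u < C → ∀ m, θR ≤ m → (TransGen R m u ↔ TransGen R (m + q) u) := by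
    intro u hu m hm
    exact up_dvd_iff (S := fun m => TransGen R m u) (fun x hx => hPred u hu x hx) hqRq m hm
  have hSuccq : ∀ u, u < C → ∀ n, θR ≤ n → (TransGen R u n ↔ TransGen R u (n + q)) := by
    intro u hu n hn
    exact up_dvd_iff (S := fun n => TransGen R u n) (fun x hx => hSucc u hu x hx) hqRq n hn
  -- diagonal shift for TransGen E by q
  have giE : ∀ m n, Λ ≤ m → Λ ≤ n → (TransGen E m n ↔ TransGen E (m + q) (n + q)) := by
    intro m n hm hn
    rcases Nat.le_total n m with hmn | hmn
    · set d := m - n with hd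
      have e1 : n + d = m := by omega
      have := hstabM n (by omega) jq d
      rw [e1] at this
      have e2 : n + jq * p = n + q := by rw [hjq, Nat.mul_comm]
      have e3 : n + jq * p + d = m + q := by omega
      rwa [e3, e2] at this
    · set d := n - m with hd
      have e1 : m + d = n := by omega
      have := hstabN m (by omega) jq d
      rw [e1] at this
      have e2 : m + jq * p = m + q := by rw [hjq, Nat.mul_comm]
      have e3 : m + jq * p + d = n + q := by omega
      rwa [e3, e2] at this
  refine ⟨q, Λ, hq1, by omega, ?_, ?_, ?_⟩
  · -- condition (i)
    intro m n hm hn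
    have hdec1 := dec_iff (R := R) (C := C) (m := m) (n := n) (by omega) (by omega)
    have hdec2 := dec_iff (R := R) (C := C) (m := m + q) (n := n + q) (by omega) (by omega)
    rw [hdec1, hdec2]
    constructor
    · rintro (h | ⟨u, hu, hmu, hun⟩)
      · exact Or.inl ((giE m n (by omega) (by omega)).mp h)
      · exact Or.inr ⟨u, hu, (hPredq u hu m (by omega)).mp hmu,
          (hSuccq u hu n (by omega)).mp hun⟩
    · rintro (h | ⟨u, hu, hmu, hun⟩)
      · exact Or.inl ((giE m n (by omega) (by omega)).mpr h)
      · exact Or.inr ⟨u, hu, (hPredq u hu m (by omega)).mpr hmu,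
          (hSuccq u hu n (by omega)).mpr hun⟩
  · -- condition (ii)
    intro n d hd
    by_cases hn : n < C
    · exact hPredq n hn (n + d) (by omega)
    · have hdec1 := dec_iff (R := R) (C := C) (m := n + d) (n := n) (by omega) (by omega)
      have hdec2 := dec_iff (R := R) (C := C) (m := n + d + q) (n := n) (by omega) (by omega)
      rw [hdec1, hdec2]
      constructor
      · rintro (h | ⟨u, hu, hmu, hun⟩)
        · exact Or.inl ((giiMq n d (by omega)).mp h)
        · exact Or.inr ⟨u, hu, (hPredq u hu (n + d) (by omega)).mp hmu, hun⟩
      · rintro (h | ⟨u, hu, hmu, hun⟩)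
        · exact Or.inl ((giiMq n d (by omega)).mpr h)
        · exact Or.inr ⟨u, hu, (hPredq u hu (n + d) (by omega)).mpr hmu, hun⟩
  · -- condition (iii)
    intro m d hd
    by_cases hm : m < C
    · exact hSuccq m hm (m + d) (by omega)
    · have hdec1 := dec_iff (R := R) (C := C) (m := m) (n := m + d) (by omega) (by omega)
      have hdec2 := dec_iff (R := R) (C := C) (m := m) (n := m + d + q) (by omega) (by omega)
      rw [hdec1, hdec2]
      constructor
      · rintro (h | ⟨u, hu, hmu, hun⟩)
        · exact Or.inl ((giiNq m d (by omega)).mp h)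
        · exact Or.inr ⟨u, hu, hmu, (hSuccq u hu (m + d) (by omega)).mp hun⟩
      · rintro (h | ⟨u, hu, hmu, hun⟩)
        · exact Or.inl ((giiNq m d (by omega)).mpr h)
        · exact Or.inr ⟨u, hu, hmu, (hSuccq u hu (m + d) (by omega)).mpr hun⟩


/-! ### Bridge 1: regular implies Good -/

lemma convWord_counts (m n : ℕ) :
    (convWord m n).count 0 = min m n ∧ (convWord m n).count 1 = m - min m n ∧
      (convWord m n).count 2 = n - min m n := by
  unfold convWord
  refine ⟨?_, ?_, ?_⟩ <;>
    simp [List.count_append, List.count_replicate, Fin.ext_iff]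

lemma convWord_inj {m n m' n' : ℕ} (h : convWord m n = convWord m' n') :
    m = m' ∧ n = n' := by
  obtain ⟨c0, c1, c2⟩ := convWord_counts m n
  obtain ⟨d0, d1, d2⟩ := convWord_counts m' n'
  rw [h] at c0 c1 c2
  omega

lemma mem_convLang_iff {R : ℕ → ℕ → Prop} {m n : ℕ} :
    convWord m n ∈ convLang R ↔ R m n := by
  constructor
  · rintro ⟨m', n', hR, heq⟩
    obtain ⟨rfl, rfl⟩ := convWord_inj heq
    exact hR
  · intro h; exact ⟨m, n, h, rfl⟩

lemma evalFrom_replicate {α : Type*} {σ : Type*} (M : DFA α σ) (a : α) :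
    ∀ (k : ℕ) (s : σ), M.evalFrom s (List.replicate k a) = (fun s => M.step s a)^[k] s := by
  intro k
  induction k with
  | zero => intro s; rfl
  | succ i ih =>
      intro s
      rw [List.replicate_succ]
      show M.evalFrom (M.step s a) (List.replicate i a) = _
      rw [ih, Function.iterate_succ_apply]

lemma iter_period {σ : Type*} [Fintype σ] (f : σ → σ) :
    ∃ i q, 1 ≤ q ∧ ∀ k, i ≤ k → f^[k] = f^[k + q] := by
  classical
  have key : ∀ x y : ℕ, x < y → f^[x] = f^[y] →
      ∃ i q, 1 ≤ q ∧ ∀ k, i ≤ k → f^[k] = f^[k + q] := by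
    intro x y hxy heq
    refine ⟨x, y - x, by omega, ?_⟩
    intro k hk
    have e : k - x + x = k := Nat.sub_add_cancel hk
    have h1 : f^[k] = f^[k - x] ∘ f^[x] := by
      rw [← Function.iterate_add, e]
    have e2 : k - x + y = k + (y - x) := by omega
    rw [h1, heq, ← Function.iterate_add, e2]
  obtain ⟨a, b, hne, heq⟩ := Fintype.exists_ne_map_eq_of_card_lt
    (fun n : Fin (Fintype.card (σ → σ) + 1) => f^[(n : ℕ)]) (by simp)
  have hne' : (a : ℕ) ≠ (b : ℕ) := fun h => hne (Fin.ext h)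
  rcases Nat.lt_or_ge (a : ℕ) (b : ℕ) with h | h
  · exact key a b h heq
  · exact key b a (by omega) heq.symm

lemma iter_period_mul {σ : Type*} (f : σ → σ) {i q : ℕ}
    (h : ∀ k, i ≤ k → f^[k] = f^[k + q]) :
    ∀ m k, i ≤ k → f^[k] = f^[k + m * q] := by
  intro m
  induction m with
  | zero => intro k hk; simp
  | succ l ih =>
      intro k hk
      rw [ih k hk, h (k + l * q) (by omega)]
      have e : k + l * q + q = k + (l + 1) * q := by ring
      rw [e]

lemma good_of_regular {R : ℕ → ℕ → Prop} (h : RegularRel R) : ∃ p t, Good R p t := by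
  classical
  obtain ⟨σ, inst, M, hM⟩ := h
  set f0 := fun s => M.step s 0 with hf0
  set f1 := fun s => M.step s 1 with hf1
  set f2 := fun s => M.step s 2 with hf2
  obtain ⟨i0, q0, hq0, h0⟩ := iter_period f0
  obtain ⟨i1, q1, hq1, h1⟩ := iter_period f1
  obtain ⟨i2, q2, hq2, h2⟩ := iter_period f2
  set q := Nat.lcm q0 (Nat.lcm q1 q2) with hq
  have hqpos : 1 ≤ q := Nat.lcm_pos hq0 (Nat.lcm_pos hq1 hq2)
  set t := max 1 (max i0 (max i1 i2)) with ht
  have h0' : ∀ k, i0 ≤ k → f0^[k] = f0^[k + q] := by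
    obtain ⟨m, hm⟩ := Nat.dvd_lcm_left q0 (Nat.lcm q1 q2)
    intro k hk
    rw [hq, hm, Nat.mul_comm]
    exact iter_period_mul f0 h0 m k hk
  have h1' : ∀ k, i1 ≤ k → f1^[k] = f1^[k + q] := by
    obtain ⟨m, hm⟩ : q1 ∣ q :=
      dvd_trans (Nat.dvd_lcm_left q1 q2) (Nat.dvd_lcm_right q0 (Nat.lcm q1 q2))
    intro k hk
    rw [hm, Nat.mul_comm]
    exact iter_period_mul f1 h1 m k hk
  have h2' : ∀ k, i2 ≤ k → f2^[k] = f2^[k + q] := by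
    obtain ⟨m, hm⟩ : q2 ∣ q :=
      dvd_trans (Nat.dvd_lcm_right q1 q2) (Nat.dvd_lcm_right q0 (Nat.lcm q1 q2))
    intro k hk
    rw [hm, Nat.mul_comm]
    exact iter_period_mul f2 h2 m k hk
  have keyR : ∀ m n, R m n ↔ M.eval (convWord m n) ∈ M.accept := by
    intro m n
    rw [← DFA.mem_accepts, hM]
    exact mem_convLang_iff.symm
  have evalW : ∀ m n, M.eval (convWord m n) =
      f2^[n - min m n] (f1^[m - min m n] (f0^[min m n] M.start)) := by
    intro m n
    unfold convWord
    rw [DFA.eval, DFA.evalFrom_of_append, DFA.evalFrom_of_append,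
      evalFrom_replicate, evalFrom_replicate, evalFrom_replicate]
  refine ⟨q, t, hqpos, by omega, ?_, ?_, ?_⟩
  · intro m n hm hn
    rw [keyR, keyR, evalW, evalW]
    have hmin : min (m + q) (n + q) = min m n + q := by omega
    have e1 : m + q - min (m + q) (n + q) = m - min m n := by omega
    have e2 : n + q - min (m + q) (n + q) = n - min m n := by omega
    rw [hmin] at e1 e2
    rw [hmin, e1, e2]
    have hs := congrFun (h0' (min m n) (by omega)) M.start
    rw [← hs]
  · intro n d hd
    rw [keyR, keyR, evalW, evalW]
    have hmin1 : min (n + d) n = n := by omega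
    have hmin2 : min (n + d + q) n = n := by omega
    rw [hmin1, hmin2]
    have e1 : n + d - n = d := by omega
    have e2 : n + d + q - n = d + q := by omega
    have e3 : n - n = 0 := by omega
    rw [e1, e2, e3]
    have hs := congrFun (h1' d (by omega)) (f0^[n] M.start)
    rw [← hs]
  · intro m d hd
    rw [keyR, keyR, evalW, evalW]
    have hmin1 : min m (m + d) = m := by omega
    have hmin2 : min m (m + d + q) = m := by omega
    rw [hmin1, hmin2]
    have e1 : m + d - m = d := by omega
    have e2 : m + d + q - m = d + q := by omega
    have e3 : m - m = 0 := by omega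
    rw [e1, e2, e3]
    have hs := congrFun (h2' d (by omega)) (f1^[0] (f0^[m] M.start))
    rw [← hs]


/-! ### Bridge 2: Good implies regular -/

/-- Counter capped at `θ`, then cycling with period `p`. -/
def capN (p θ : ℕ) : ℕ → ℕ
  | 0 => 0
  | x + 1 => if capN p θ x + 1 < θ + p then capN p θ x + 1 else θ

lemma capN_lt {p θ : ℕ} (hp : 1 ≤ p) : ∀ x, capN p θ x < θ + p := by
  intro x
  induction x with
  | zero => simp [capN]; omega
  | succ y ih =>
      rw [capN]
      split
      · omega
      · omega

lemma capN_small {p θ : ℕ} : ∀ x, x < θ → capN p θ x = x := by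
  intro x
  induction x with
  | zero => intro _; rfl
  | succ y ih =>
      intro hx
      rw [capN, ih (by omega)]
      rw [if_pos (by omega)]

lemma capN_big {p θ : ℕ} (hp : 1 ≤ p) :
    ∀ x, θ ≤ x → θ ≤ capN p θ x ∧ ∃ k, x = capN p θ x + k * p := by
  intro x
  induction x with
  | zero =>
      intro hx
      exact ⟨by omega, 0, by simp [capN]⟩
  | succ y ih =>
      intro hx
      by_cases hy : θ ≤ y
      · obtain ⟨h1, k, hk⟩ := ih hy
        have hlt := capN_lt (θ := θ) hp y
        rw [capN]
        split
        · exact ⟨by omega, k, by omega⟩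
        · refine ⟨le_refl _, k + 1, ?_⟩
          have : capN p θ y + 1 = θ + p := by omega
          rw [Nat.succ_mul]
          omega
      · have hyθ : y + 1 = θ := by omega
        rw [capN, capN_small y (by omega), if_pos (by omega)]
        exact ⟨by omega, 0, by omega⟩

section GoodIter

variable {S : ℕ → ℕ → Prop} {p θ : ℕ}

lemma good_i_iter (hg : Good S p θ) :
    ∀ k m n, θ ≤ m → θ ≤ n → (S m n ↔ S (m + k * p) (n + k * p)) := by
  intro k
  induction k with
  | zero => intro m n _ _; simp
  | succ l ih =>
      intro m n hm hn
      have h1 := ih m n hm hn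
      have h2 := hg.2.2.1 (m + l * p) (n + l * p) (by omega) (by omega)
      have e1 : m + l * p + p = m + (l + 1) * p := by ring
      have e2 : n + l * p + p = n + (l + 1) * p := by ring
      rw [e1, e2] at h2
      exact h1.trans h2
  
lemma good_ii_iter (hg : Good S p θ) :
    ∀ k x d, θ ≤ d → (S (x + d) x ↔ S (x + d + k * p) x) := by
  intro k
  induction k with
  | zero => intro x d _; simp
  | succ l ih =>
      intro x d hd
      have h1 := ih x d hd
      have h2 := hg.2.2.2.1 x (d + l * p) (by omega)
      have e1 : x + (d + l * p) = x + d + l * p := by ring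
      have e2 : x + (d + l * p) + p = x + d + (l + 1) * p := by ring
      rw [e2, e1] at h2
      exact h1.trans h2

lemma good_iii_iter (hg : Good S p θ) :
    ∀ k x d, θ ≤ d → (S x (x + d) ↔ S x (x + d + k * p)) := by
  intro k
  induction k with
  | zero => intro x d _; simp
  | succ l ih =>
      intro x d hd
      have h1 := ih x d hd
      have h2 := hg.2.2.2.2 x (d + l * p) (by omega)
      have e1 : x + (d + l * p) = x + d + l * p := by ring
      have e2 : x + (d + l * p) + p = x + d + (l + 1) * p := by ring
      rw [e2, e1] at h2
      exact h1.trans h2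

lemma red_diag (hg : Good S p θ) (a b : ℕ) :
    S (a + b) a ↔ S (capN p θ a + b) (capN p θ a) := by
  by_cases ha : a < θ
  · rw [capN_small a ha]
  · obtain ⟨h1, k, hk⟩ := capN_big (p := p) (θ := θ) hg.1 a (by omega)
    have := good_i_iter hg k (capN p θ a + b) (capN p θ a) (by omega) h1
    have e1 : capN p θ a + b + k * p = a + b := by omega
    have e2 : capN p θ a + k * p = a := by omega
    rw [e1, e2] at this
    exact this.symm

lemma red_diag' (hg : Good S p θ) (a b : ℕ) :
    S a (a + b) ↔ S (capN p θ a) (capN p θ a + b) := by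
  by_cases ha : a < θ
  · rw [capN_small a ha]
  · obtain ⟨h1, k, hk⟩ := capN_big (p := p) (θ := θ) hg.1 a (by omega)
    have := good_i_iter hg k (capN p θ a) (capN p θ a + b) h1 (by omega)
    have e1 : capN p θ a + b + k * p = a + b := by omega
    have e2 : capN p θ a + k * p = a := by omega
    rw [e1, e2] at this
    exact this.symm

lemma red_d2 (hg : Good S p θ) (x b : ℕ) :
    S (x + b) x ↔ S (x + capN p θ b) x := by
  by_cases hb : b < θ
  · rw [capN_small b hb]
  · obtain ⟨h1, k, hk⟩ := capN_big (p := p) (θ := θ) hg.1 b (by omega)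
    have := good_ii_iter hg k x (capN p θ b) h1
    have e1 : x + capN p θ b + k * p = x + b := by omega
    rw [e1] at this
    exact this.symm

lemma red_u2 (hg : Good S p θ) (x b : ℕ) :
    S x (x + b) ↔ S x (x + capN p θ b) := by
  by_cases hb : b < θ
  · rw [capN_small b hb]
  · obtain ⟨h1, k, hk⟩ := capN_big (p := p) (θ := θ) hg.1 b (by omega)
    have := good_iii_iter hg k x (capN p θ b) h1
    have e1 : x + capN p θ b + k * p = x + b := by omega
    rw [e1] at this
    exact this.symm

end GoodIter

def capF (p θ : ℕ) (hp : 1 ≤ p) (x : ℕ) : Fin (θ + p) := ⟨capN p θ x, capN_lt hp x⟩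

def capSucc (p θ : ℕ) (hp : 1 ≤ p) (a : Fin (θ + p)) : Fin (θ + p) :=
  if h : (a : ℕ) + 1 < θ + p then ⟨(a : ℕ) + 1, h⟩ else ⟨θ, by omega⟩

lemma capF_succ (p θ : ℕ) (hp : 1 ≤ p) (x : ℕ) :
    capF p θ hp (x + 1) = capSucc p θ hp (capF p θ hp x) := by
  apply Fin.ext
  by_cases h : capN p θ x + 1 < θ + p
  · have e1 : capN p θ (x + 1) = capN p θ x + 1 := by rw [capN, if_pos h]
    show capN p θ (x + 1) = ((capSucc p θ hp (capF p θ hp x)) : ℕ)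
    rw [e1]
    unfold capSucc
    rw [dif_pos (show (capF p θ hp x : ℕ) + 1 < θ + p from h)]
    rfl
  · have e1 : capN p θ (x + 1) = θ := by rw [capN, if_neg h]
    show capN p θ (x + 1) = ((capSucc p θ hp (capF p θ hp x)) : ℕ)
    rw [e1]
    unfold capSucc
    rw [dif_neg (show ¬ (capF p θ hp x : ℕ) + 1 < θ + p from h)]

/-- Acceptance predicate of the DFA. -/
def acceptFun (S : ℕ → ℕ → Prop) (c : ℕ) : Option (Fin c × Option (Bool × Fin c)) → Prop
  | none => False
  | some (a, none) => S a a
  | some (a, some (false, b)) => S ((a : ℕ) + (b : ℕ)) (a : ℕ)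
  | some (a, some (true, b)) => S (a : ℕ) ((a : ℕ) + (b : ℕ))

/-- The DFA recognizing the convolution language of a Good relation. -/
def mkDFA (S : ℕ → ℕ → Prop) (p θ : ℕ) (hp : 1 ≤ p) :
    DFA (Fin 3) (Option (Fin (θ + p) × Option (Bool × Fin (θ + p)))) where
  step := fun s ch =>
    match s with
    | none => none
    | some (a, none) =>
        if ch = 0 then some (capSucc p θ hp a, none)
        else if ch = 1 then some (a, some (false, capF p θ hp 1))
        else some (a, some (true, capF p θ hp 1))
    | some (a, some (false, b)) =>
        if ch = 1 then some (a, some (false, capSucc p θ hp b)) else none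
    | some (a, some (true, b)) =>
        if ch = 2 then some (a, some (true, capSucc p θ hp b)) else none
  start := some (capF p θ hp 0, none)
  accept := {s | acceptFun S (θ + p) s}

section MkDFA

variable (S : ℕ → ℕ → Prop) (p θ : ℕ) (hp : 1 ≤ p)

lemma mk_eval0 : ∀ k, (mkDFA S p θ hp).eval (List.replicate k 0) =
    some (capF p θ hp k, none) := by
  intro k
  induction k with
  | zero => rfl
  | succ i ih =>
      rw [List.replicate_succ', DFA.eval_append_singleton, ih]
      show some (capSucc p θ hp (capF p θ hp i), none) = _
      rw [capF_succ]

lemma mk_eval1 (a : Fin (θ + p)) : ∀ y, 1 ≤ y →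
    (mkDFA S p θ hp).evalFrom (some (a, none)) (List.replicate y 1) =
      some (a, some (false, capF p θ hp y)) := by
  intro y
  induction y with
  | zero => omega
  | succ i ih =>
      intro _
      by_cases hi : 1 ≤ i
      · rw [List.replicate_succ', DFA.evalFrom_append_singleton, ih hi]
        show some (a, some (false, capSucc p θ hp (capF p θ hp i))) = _
        rw [capF_succ]
      · have : i = 0 := by omega
        subst this
        rfl

lemma mk_eval2 (a : Fin (θ + p)) : ∀ y, 1 ≤ y →
    (mkDFA S p θ hp).evalFrom (some (a, none)) (List.replicate y 2) =
      some (a, some (true, capF p θ hp y)) := by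
  intro y
  induction y with
  | zero => omega
  | succ i ih =>
      intro _
      by_cases hi : 1 ≤ i
      · rw [List.replicate_succ', DFA.evalFrom_append_singleton, ih hi]
        show some (a, some (true, capSucc p θ hp (capF p θ hp i))) = _
        rw [capF_succ]
      · have : i = 0 := by omega
        subst this
        rfl

lemma mk_shape : ∀ w : List (Fin 3),
    (mkDFA S p θ hp).eval w = none ∨
    (∃ x, w = List.replicate x 0 ∧
      (mkDFA S p θ hp).eval w = some (capF p θ hp x, none)) ∨
    (∃ x y, 1 ≤ y ∧ w = List.replicate x 0 ++ List.replicate y 1 ∧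
      (mkDFA S p θ hp).eval w = some (capF p θ hp x, some (false, capF p θ hp y))) ∨
    (∃ x y, 1 ≤ y ∧ w = List.replicate x 0 ++ List.replicate y 2 ∧
      (mkDFA S p θ hp).eval w = some (capF p θ hp x, some (true, capF p θ hp y))) := by
  intro w
  induction w using List.reverseRecOn with
  | nil => exact Or.inr (Or.inl ⟨0, rfl, rfl⟩)
  | append_singleton w ch ih =>
      rw [DFA.eval_append_singleton]
      rcases ih with hnone | ⟨x, hw, hev⟩ | ⟨x, y, hy, hw, hev⟩ | ⟨x, y, hy, hw, hev⟩
      · rw [hnone]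
        exact Or.inl rfl
      · rw [hev]
        fin_cases ch
        · refine Or.inr (Or.inl ⟨x + 1, ?_, ?_⟩)
          · rw [hw, List.replicate_succ']; rfl
          · show some (capSucc p θ hp (capF p θ hp x), none) = _
            rw [capF_succ]
        · exact Or.inr (Or.inr (Or.inl ⟨x, 1, le_refl _, by rw [hw]; rfl, rfl⟩))
        · exact Or.inr (Or.inr (Or.inr ⟨x, 1, le_refl _, by rw [hw]; rfl, rfl⟩))
      · rw [hev]
        fin_cases ch
        · exact Or.inl rfl
        · refine Or.inr (Or.inr (Or.inl ⟨x, y + 1, by omega, ?_, ?_⟩))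
          · rw [hw, List.replicate_succ' (n := y), ← List.append_assoc]; rfl
          · show some (capF p θ hp x, some (false, capSucc p θ hp (capF p θ hp y))) = _
            rw [capF_succ]
        · exact Or.inl rfl
      · rw [hev]
        fin_cases ch
        · exact Or.inl rfl
        · exact Or.inl rfl
        · refine Or.inr (Or.inr (Or.inr ⟨x, y + 1, by omega, ?_, ?_⟩))
          · rw [hw, List.replicate_succ' (n := y), ← List.append_assoc]; rfl
          · show some (capF p θ hp x, some (true, capSucc p θ hp (capF p θ hp y))) = _
            rw [capF_succ]

end MkDFA

lemma convWord_self (x : ℕ) : convWord x x = List.replicate x 0 := by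
  unfold convWord
  simp

lemma convWord_down {m n : ℕ} (h : n ≤ m) :
    convWord m n = List.replicate n 0 ++ List.replicate (m - n) 1 := by
  unfold convWord
  rw [min_eq_right h]
  simp

lemma convWord_up {m n : ℕ} (h : m ≤ n) :
    convWord m n = List.replicate m 0 ++ List.replicate (n - m) 2 := by
  unfold convWord
  rw [min_eq_left h]
  simp

lemma regular_of_good {S : ℕ → ℕ → Prop} {p θ : ℕ} (hg : Good S p θ) :
    (convLang S).IsRegular := by
  obtain ⟨hp, hθ, _, _, _⟩ := hg
  refine ⟨Option (Fin (θ + p) × Option (Bool × Fin (θ + p))), inferInstance,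
    mkDFA S p θ hp, ?_⟩
  ext w
  constructor
  · -- accepted → in convLang
    intro hw
    rw [DFA.mem_accepts] at hw
    rcases mk_shape S p θ hp w with hnone | ⟨x, hwe, hev⟩ | ⟨x, y, hy, hwe, hev⟩ |
        ⟨x, y, hy, hwe, hev⟩
    · rw [hnone] at hw
      exact hw.elim
    · rw [hev] at hw
      have hS : S (capN p θ x) (capN p θ x) := hw
      have : S (x + 0) x := (red_diag ⟨hp, hθ, ‹_›, ‹_›, ‹_›⟩ x 0).mpr (by
        simpa [capF] using hS)
      refine ⟨x, x, by simpa using this, by rw [hwe, convWord_self]⟩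
    · rw [hev] at hw
      have hS : S (capN p θ x + capN p θ y) (capN p θ x) := hw
      have h2 : S (capN p θ x + y) (capN p θ x) :=
        (red_d2 ⟨hp, hθ, ‹_›, ‹_›, ‹_›⟩ (capN p θ x) y).mpr hS
      have h3 : S (x + y) x := (red_diag ⟨hp, hθ, ‹_›, ‹_›, ‹_›⟩ x y).mpr h2
      refine ⟨x + y, x, h3, ?_⟩
      rw [hwe, convWord_down (by omega)]
      congr 1
      congr 1
      omega
    · rw [hev] at hw
      have hS : S (capN p θ x) (capN p θ x + capN p θ y) := hw
      have h2 : S (capN p θ x) (capN p θ x + y) :=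
        (red_u2 ⟨hp, hθ, ‹_›, ‹_›, ‹_›⟩ (capN p θ x) y).mpr hS
      have h3 : S x (x + y) := (red_diag' ⟨hp, hθ, ‹_›, ‹_›, ‹_›⟩ x y).mpr h2
      refine ⟨x, x + y, h3, ?_⟩
      rw [hwe, convWord_up (by omega)]
      congr 1
      congr 1
      omega
  · -- in convLang → accepted
    rintro ⟨m, n, hS, rfl⟩
    rw [DFA.mem_accepts]
    rcases Nat.lt_trichotomy m n with hmn | rfl | hnm
    · rw [convWord_up (by omega), DFA.eval, DFA.evalFrom_of_append]
      have e0 := mk_eval0 S p θ hp m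
      rw [DFA.eval] at e0
      rw [e0, mk_eval2 S p θ hp _ (n - m) (by omega)]
      show S (capN p θ m) (capN p θ m + capN p θ (n - m))
      have h2 : S (capN p θ m) (capN p θ m + (n - m)) := by
        have := (red_diag' ⟨hp, hθ, ‹_›, ‹_›, ‹_›⟩ m (n - m)).mp (by
          have e : m + (n - m) = n := by omega
          rwa [e])
        exact this
      exact (red_u2 ⟨hp, hθ, ‹_›, ‹_›, ‹_›⟩ (capN p θ m) (n - m)).mp h2
    · rw [convWord_self]
      have e0 := mk_eval0 S p θ hp m
      rw [e0]
      show S (capN p θ m) (capN p θ m)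
      have := (red_diag ⟨hp, hθ, ‹_›, ‹_›, ‹_›⟩ m 0).mp (by simpa using hS)
      simpa using this
    · rw [convWord_down (by omega), DFA.eval, DFA.evalFrom_of_append]
      have e0 := mk_eval0 S p θ hp n
      rw [DFA.eval] at e0
      rw [e0, mk_eval1 S p θ hp _ (m - n) (by omega)]
      show S (capN p θ n + capN p θ (m - n)) (capN p θ n)
      have h2 : S (capN p θ n + (m - n)) (capN p θ n) := by
        have := (red_diag ⟨hp, hθ, ‹_›, ‹_›, ‹_›⟩ n (m - n)).mp (by
          have e : n + (m - n) = m := by omega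
          rwa [e])
        exact this
      exact (red_d2 ⟨hp, hθ, ‹_›, ‹_›, ‹_›⟩ (capN p θ n) (m - n)).mp h2

end Stmt3

theorem stmt3 (R : ℕ → ℕ → Prop) (hR : RegularRel R) :
    RegularRel (Relation.TransGen R) := by
  obtain ⟨p, t, hg⟩ := Stmt3.good_of_regular hR
  obtain ⟨p', t', hg'⟩ := Stmt3.good_transGen hg
  exact Stmt3.regular_of_good hg'
end

section
/- Let R be a binary relation on ℕ whose convolution language is regular. Then the convolution language of the equivalence relation generated by R (the smallest reflexive, symmetric and transitive relation containing R) is also regular. -/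
namespace Stmt4

open List Relation

lemma convWord_of_le {m n : ℕ} (h : m ≤ n) :
    convWord m n = List.replicate m 0 ++ List.replicate (n - m) 2 := by
  unfold convWord
  rw [min_eq_left h]
  simp

lemma convWord_of_ge {m n : ℕ} (h : n ≤ m) :
    convWord m n = List.replicate n 0 ++ List.replicate (m - n) 1 := by
  unfold convWord
  rw [min_eq_right h]
  simp

lemma convWord_inj {m n m' n' : ℕ} (h : convWord m n = convWord m' n') :
    m = m' ∧ n = n' := by
  have h0 := congrArg (List.count (0 : Fin 3)) h
  have h1 := congrArg (List.count (1 : Fin 3)) h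
  have h2 := congrArg (List.count (2 : Fin 3)) h
  unfold convWord at h0 h1 h2
  simp [List.count_append, List.count_replicate] at h0 h1 h2
  omega

lemma convWord_mem_iff {R : ℕ → ℕ → Prop} {m n : ℕ} :
    convWord m n ∈ convLang R ↔ R m n := by
  constructor
  · rintro ⟨m', n', hR, hw⟩
    obtain ⟨rfl, rfl⟩ := convWord_inj hw
    exact hR
  · intro h
    exact ⟨m, n, h, rfl⟩

/-- iterates of a function on a finite type are periodic with period `card !`
beyond `card`. -/
lemma iterate_periodic {σ : Type*} [Fintype σ] (g : σ → σ) (x : σ) {n : ℕ}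
    (hn : Fintype.card σ ≤ n) :
    g^[n + Nat.factorial (Fintype.card σ)] x = g^[n] x := by
  set N := Fintype.card σ with hN
  obtain ⟨i, j, hij, hfij⟩ := Fintype.exists_ne_map_eq_of_card_lt
    (fun k : Fin (N + 1) => g^[(k : ℕ)] x) (by simp; omega)
  wlog hlt : (i : ℕ) < (j : ℕ) generalizing i j
  · exact this j i (Ne.symm hij) hfij.symm (by omega)
  set π := (j : ℕ) - (i : ℕ) with hπ
  have hπ1 : 1 ≤ π := by omega
  have hπN : π ≤ N := by have := j.2; omega
  have hkey : ∀ m, (i : ℕ) ≤ m → g^[m + π] x = g^[m] x := by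
    intro m him
    obtain ⟨e, rfl⟩ := Nat.exists_eq_add_of_le him
    have hji : (j : ℕ) = (i : ℕ) + π := by omega
    calc g^[(i : ℕ) + e + π] x = g^[e] (g^[(i:ℕ) + π] x) := by
          rw [← Function.iterate_add_apply]; ring_nf
      _ = g^[e] (g^[(i:ℕ)] x) := by rw [← hji, ← hfij]
      _ = g^[(i : ℕ) + e] x := by
          rw [← Function.iterate_add_apply]; ring_nf
  have hmul : ∀ k m, (i : ℕ) ≤ m → g^[m + k * π] x = g^[m] x := by
    intro k
    induction k with
    | zero => simp
    | succ k ih =>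
      intro m him
      have : m + (k+1) * π = (m + k * π) + π := by ring
      rw [this, hkey _ (by omega), ih m him]
  obtain ⟨k, hk⟩ : π ∣ Nat.factorial N := Nat.dvd_factorial hπ1 hπN
  rw [hk, Nat.mul_comm]
  exact hmul k n (by have := i.2; omega)

/-- the symmetrized, difference-indexed edge relation of `R`. -/
def edge (R : ℕ → ℕ → Prop) (a b : ℕ) : Prop := R a (a + b) ∨ R (a + b) a

lemma evalFrom_replicate {σ : Type*} (M : DFA (Fin 3) σ) (q : σ) (ch : Fin 3) (n : ℕ) :
    M.evalFrom q (List.replicate n ch) = (fun s => M.step s ch)^[n] q := by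
  induction n generalizing q with
  | zero => simp
  | succ n ih =>
    rw [List.replicate_succ, Function.iterate_succ_apply]
    exact ih _

lemma edge_iff_words {R : ℕ → ℕ → Prop} (a b : ℕ) :
    edge R a b ↔ (List.replicate a (0:Fin 3) ++ List.replicate b 2 ∈ convLang R ∨
      List.replicate a (0:Fin 3) ++ List.replicate b 1 ∈ convLang R) := by
  unfold edge
  rw [← convWord_mem_iff (R := R) (m := a) (n := a + b), ← convWord_mem_iff (R := R) (m := a + b) (n := a),
    convWord_of_le (by omega), convWord_of_ge (by omega)]
  simp only [Nat.add_sub_cancel_left]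

lemma exists_periods {R : ℕ → ℕ → Prop} (hR : RegularRel R) :
    ∃ K p : ℕ, 1 ≤ K ∧ 1 ≤ p ∧
      (∀ a b, K ≤ a → (edge R a b ↔ edge R (a + p) b)) ∧
      (∀ a b, K ≤ b → (edge R a b ↔ edge R a (b + p))) := by
  obtain ⟨σ, hfin, M, hM⟩ := hR
  set N := Fintype.card σ with hN
  have hN1 : 1 ≤ N := Fintype.card_pos_iff.mpr ⟨M.start⟩
  refine ⟨N, Nat.factorial N, hN1, Nat.one_le_iff_ne_zero.mpr (Nat.factorial_ne_zero N), ?_, ?_⟩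
  · intro a b ha
    have key : ∀ w : List (Fin 3),
        (List.replicate a (0:Fin 3) ++ w ∈ convLang R ↔
         List.replicate (a + Nat.factorial N) (0:Fin 3) ++ w ∈ convLang R) := by
      intro w
      rw [← hM]
      simp only [DFA.mem_accepts, DFA.eval, DFA.evalFrom_of_append]
      simp only [evalFrom_replicate]
      rw [iterate_periodic _ _ ha]
    rw [edge_iff_words, edge_iff_words, ← key, ← key]
  · intro a b hb
    have key : ∀ (ch : Fin 3),
        (List.replicate a (0:Fin 3) ++ List.replicate b ch ∈ convLang R ↔
         List.replicate a (0:Fin 3) ++ List.replicate (b + Nat.factorial N) ch ∈ convLang R) := by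
      intro ch
      rw [← hM]
      simp only [DFA.mem_accepts, DFA.eval, DFA.evalFrom_of_append]
      simp only [evalFrom_replicate]
      rw [iterate_periodic _ _ hb]
    rw [edge_iff_words, edge_iff_words, ← key, ← key]



structure Ctx where
  edg : ℕ → ℕ → Prop
  K : ℕ
  p : ℕ
  hK : 1 ≤ K
  hp : 1 ≤ p
  hP1 : ∀ a b, K ≤ a → (edg a b ↔ edg (a + p) b)
  hP2 : ∀ a b, K ≤ b → (edg a b ↔ edg a (b + p))

namespace Ctx

variable (C : Ctx)

def adj (m n : ℕ) : Prop :=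
  ∃ b, 1 ≤ b ∧ ((n = m + b ∧ C.edg m b) ∨ (m = n + b ∧ C.edg n b))

def E : ℕ → ℕ → Prop := ReflTransGen C.adj

def adjH (t m n : ℕ) : Prop := C.adj m n ∧ t < m ∧ t < n

def adjS (t m n : ℕ) : Prop := C.adjH t m n ∧ m < n + C.K ∧ n < m + C.K

def ConnH (t : ℕ) : ℕ → ℕ → Prop := ReflTransGen (C.adjH t)

def ConnS (t : ℕ) : ℕ → ℕ → Prop := ReflTransGen (C.adjS t)

lemma adj_symm : Symmetric C.adj := by
  rintro m n ⟨b, hb, h | h⟩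
  · exact ⟨b, hb, Or.inr h⟩
  · exact ⟨b, hb, Or.inl h⟩

lemma E_refl (m : ℕ) : C.E m m := ReflTransGen.refl

lemma E_symm {m n : ℕ} (h : C.E m n) : C.E n m :=
  by haveI : Std.Symm C.adj := ⟨fun _ _ hh => C.adj_symm hh⟩; exact ReflTransGen.stdSymm.symm _ _ h

lemma E_trans {m n k : ℕ} (h1 : C.E m n) (h2 : C.E n k) : C.E m k :=
  ReflTransGen.trans h1 h2

lemma adj_to_E {m n : ℕ} (h : C.adj m n) : C.E m n := ReflTransGen.single h

lemma connH_to_E {t m n : ℕ} (h : C.ConnH t m n) : C.E m n :=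
  ReflTransGen.mono (fun _ _ hh => hh.1) _ _ h

lemma connS_to_connH {t m n : ℕ} (h : C.ConnS t m n) : C.ConnH t m n :=
  ReflTransGen.mono (fun _ _ hh => hh.1) _ _ h

lemma hP1m {d : ℕ} (hd : C.p ∣ d) {a : ℕ} (b : ℕ) (ha : C.K ≤ a) :
    C.edg a b ↔ C.edg (a + d) b := by
  obtain ⟨k, rfl⟩ := hd
  induction k with
  | zero => simp
  | succ k ih =>
    have : a + C.p * (k + 1) = a + C.p * k + C.p := by ring
    rw [this, ih, C.hP1 _ b (by omega)]

lemma hP2m {d : ℕ} (hd : C.p ∣ d) (a : ℕ) {b : ℕ} (hb : C.K ≤ b) :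
    C.edg a b ↔ C.edg a (b + d) := by
  obtain ⟨k, rfl⟩ := hd
  induction k with
  | zero => simp
  | succ k ih =>
    have : b + C.p * (k + 1) = b + C.p * k + C.p := by ring
    rw [this, ih, C.hP2 a _ (by omega)]

lemma adj_shift_up {d : ℕ} (hd : C.p ∣ d) {m n : ℕ} (h : C.adj m n)
    (hm : C.K ≤ m) (hn : C.K ≤ n) : C.adj (m + d) (n + d) := by
  obtain ⟨b, hb, ⟨rfl, he⟩ | ⟨rfl, he⟩⟩ := h
  · exact ⟨b, hb, Or.inl ⟨by omega, (C.hP1m hd b hm).mp he⟩⟩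
  · exact ⟨b, hb, Or.inr ⟨by omega, (C.hP1m hd b hn).mp he⟩⟩

lemma adj_shift_down {d : ℕ} (hd : C.p ∣ d) {m n : ℕ} (h : C.adj m n)
    (hm : C.K + d ≤ m) (hn : C.K + d ≤ n) : C.adj (m - d) (n - d) := by
  obtain ⟨b, hb, ⟨rfl, he⟩ | ⟨rfl, he⟩⟩ := h
  · refine ⟨b, hb, Or.inl ⟨by omega, ?_⟩⟩
    have := C.hP1m hd (a := m - d) b (by omega)
    rw [Nat.sub_add_cancel (by omega)] at this
    exact this.mpr he
  · refine ⟨b, hb, Or.inr ⟨by omega, ?_⟩⟩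
    have := C.hP1m hd (a := n - d) b (by omega)
    rw [Nat.sub_add_cancel (by omega)] at this
    exact this.mpr he

lemma connH_shift_up {t : ℕ} (d : ℕ) (hd : C.p ∣ d) (ht : C.K ≤ t + 1)
    {m n : ℕ} (h : C.ConnH t m n) : C.E (m + d) (n + d) := by
  induction h with
  | refl => exact ReflTransGen.refl
  | tail _ hstep ih =>
    obtain ⟨hadj, h1, h2⟩ := hstep
    exact ih.tail (C.adj_shift_up hd hadj (by omega) (by omega))

lemma connH_shift_down {t : ℕ} (d : ℕ) (hd : C.p ∣ d) (ht : C.K + d ≤ t + 1)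
    {m n : ℕ} (h : C.ConnH t m n) : C.E (m - d) (n - d) := by
  induction h with
  | refl => exact ReflTransGen.refl
  | tail _ hstep ih =>
    obtain ⟨hadj, h1, h2⟩ := hstep
    exact ih.tail (C.adj_shift_down hd hadj (by omega) (by omega))

end Ctx


section
variable {C : Ctx}
namespace Ctx

lemma ivt {t c x u : ℕ} (h : C.ConnS t x u) (hu : u ≤ c) :
    c ≤ x → ∃ z, c ≤ z ∧ z < c + C.K ∧ C.ConnS t x z ∧ C.ConnS t z u := by
  induction h using ReflTransGen.head_induction_on with
  | refl =>
    intro hcx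
    exact ⟨u, hcx, by have := C.hK; omega, ReflTransGen.refl, ReflTransGen.refl⟩
  | @head a a' step rest ih =>
    intro hca
    by_cases hx : a < c + C.K
    · exact ⟨a, hca, hx, ReflTransGen.refl, rest.head step⟩
    · have h21 := step.2.1
      obtain ⟨z, h1, h2, h3, h4⟩ := ih (by omega)
      exact ⟨z, h1, h2, h3.head step, h4⟩

lemma chain (t c₀ : ℕ) : ∀ (k x u : ℕ), C.ConnS t x u → u ≤ c₀ → c₀ + k * C.K ≤ x →
    ∃ z : ℕ → ℕ,
      (∀ j, j < k → (c₀ + j * C.K ≤ z j ∧ z j < c₀ + j * C.K + C.K ∧ C.ConnS t x (z j))) ∧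
      (∀ j, j + 1 < k → C.ConnS t (z (j + 1)) (z j)) := by
  intro k
  induction k with
  | zero =>
    intro x u h hu hx
    exact ⟨fun _ => 0, fun j hj => absurd hj (by omega), fun j hj => absurd hj (by omega)⟩
  | succ k ih =>
    intro x u h hu hx
    have hexp : (k + 1) * C.K = k * C.K + C.K := by ring
    obtain ⟨zk, hzk1, hzk2, hxzk, hzku⟩ := ivt (c := c₀ + k * C.K) h (by omega) (by omega)
    obtain ⟨z, hz1, hz2⟩ := ih zk u hzku hu (by omega)
    refine ⟨fun j => if j = k then zk else z j, ?_, ?_⟩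
    · intro j hj
      by_cases hjk : j = k
      · subst hjk; simp only [if_pos rfl]
        exact ⟨hzk1, hzk2, hxzk⟩
      · simp only [if_neg hjk]
        obtain ⟨b1, b2, b3⟩ := hz1 j (by omega)
        exact ⟨b1, b2, hxzk.trans b3⟩
    · intro j hj
      by_cases hjk : j + 1 = k
      · have hjk' : j ≠ k := by omega
        simp only [if_pos hjk, if_neg hjk']
        exact (hz1 j (by omega)).2.2
      · have h1' : j + 1 ≠ k := hjk
        have h2' : j ≠ k := by omega
        simp only [if_neg h1', if_neg h2']
        exact hz2 j (by omega)

lemma chain_desc {t : ℕ} {z : ℕ → ℕ} {k : ℕ}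
    (h2 : ∀ j, j + 1 < k → C.ConnS t (z (j + 1)) (z j)) :
    ∀ d i, i + d < k → C.ConnS t (z (i + d)) (z i) := by
  intro d
  induction d with
  | zero => intro i _; exact ReflTransGen.refl
  | succ d ih =>
    intro i hi
    have : i + (d + 1) = (i + d) + 1 := by ring
    rw [this]
    exact (h2 (i + d) (by omega)).trans (ih i (by omega))

lemma pair {t c₀ x u : ℕ} (h : C.ConnS t x u) (hu : u ≤ c₀)
    (hx : c₀ + (C.p + 1) * C.K ≤ x) :
    ∃ a b, C.ConnS t x a ∧ C.ConnS t a b ∧ c₀ ≤ b ∧ b + 1 ≤ a ∧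
      a ≤ b + (C.p + 2) * C.K ∧ C.p ∣ (a - b) := by
  obtain ⟨z, hz1, hz2⟩ := chain t c₀ (C.p + 1) x u h hu hx
  obtain ⟨i, j, hij, hfe⟩ := Fintype.exists_ne_map_eq_of_card_lt
    (fun j : Fin (C.p + 1) => (⟨z j % C.p, Nat.mod_lt _ C.hp⟩ : Fin C.p)) (by simp)
  have hmod : z i % C.p = z j % C.p := congrArg Fin.val hfe
  clear hfe
  wlog hlt : (j : ℕ) < (i : ℕ) generalizing i j
  · exact this j i (Ne.symm hij) hmod.symm (by omega)
  obtain ⟨bi1, bi2, bi3⟩ := hz1 i i.2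
  obtain ⟨bj1, bj2, bj3⟩ := hz1 j j.2
  have hconn : C.ConnS t (z i) (z j) := by
    have := chain_desc hz2 ((i : ℕ) - (j : ℕ)) j (by have := i.2; omega)
    rwa [Nat.add_sub_cancel' (by omega)] at this
  refine ⟨z i, z j, bi3, hconn, by omega, ?_, ?_, ?_⟩
  · have e1 : ((j : ℕ) + 1) * C.K ≤ (i : ℕ) * C.K := Nat.mul_le_mul_right _ (by omega)
    have e2 : ((j : ℕ) + 1) * C.K = (j : ℕ) * C.K + C.K := by ring
    omega
  · have hi : (i : ℕ) ≤ C.p := by have := i.2; omega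
    have e1 : (i : ℕ) * C.K ≤ C.p * C.K := Nat.mul_le_mul_right _ hi
    have e2 : (C.p + 2) * C.K = C.p * C.K + 2 * C.K := by ring
    have e3 : (j : ℕ) * C.K + 0 ≤ C.p * C.K := Nat.mul_le_mul_right _ (by omega) |>.trans (le_of_eq rfl) |>.trans (le_refl _) |>.trans_eq rfl |>.trans (Nat.le_add_right _ 0) |>.trans_eq (Nat.add_zero _)
    omega
  · exact Nat.dvd_of_mod_eq_zero (Nat.sub_mod_eq_zero_of_mod_eq hmod)

lemma extract {t x y : ℕ} (h : C.E x y) (hy : y ≤ t) :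
    t < x →
    ((∃ u v, C.ConnS t x u ∧ t < u ∧ C.adj u v ∧ (v + C.K ≤ u ∨ u + C.K ≤ v)) ∨
     (∃ u v, C.ConnS t x u ∧ t < u ∧ C.adj u v ∧ v ≤ t ∧ u < v + C.K)) := by
  induction h using ReflTransGen.head_induction_on with
  | refl => intro hx; omega
  | @head a a' step rest ih =>
    intro hx
    by_cases hlong : a' + C.K ≤ a ∨ a + C.K ≤ a'
    · exact Or.inl ⟨a, a', ReflTransGen.refl, hx, step, hlong⟩
    · push_neg at hlong
      by_cases ha' : a' ≤ t
      · exact Or.inr ⟨a, a', ReflTransGen.refl, hx, step, ha', hlong.1⟩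
      · rcases ih (by omega) with ⟨u, v, hc, h1, h2, h3⟩ | ⟨u, v, hc, h1, h2, h3, h4⟩
        · exact Or.inl ⟨u, v, hc.head ⟨⟨step, hx, by omega⟩, hlong.1, hlong.2⟩, h1, h2, h3⟩
        · exact Or.inr ⟨u, v, hc.head ⟨⟨step, hx, by omega⟩, hlong.1, hlong.2⟩, h1, h2, h3, h4⟩

end Ctx
end

section
namespace Ctx
variable {C : Ctx}

def Q (C : Ctx) : ℕ := Nat.factorial ((C.p + 2) * C.K)

def Th (C : Ctx) : ℕ := (C.p + 2) * C.K + 1 + 2 * C.K + 2 * C.Q + 2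

lemma hQ1 (C : Ctx) : 1 ≤ C.Q := Nat.one_le_iff_ne_zero.mpr (Nat.factorial_ne_zero _)

lemma hQp (C : Ctx) : C.p ∣ C.Q := by
  apply Nat.dvd_factorial C.hp
  have := C.hK
  have e : (C.p + 2) * C.K = C.p * C.K + 2 * C.K := by ring
  have e1 : C.p * 1 ≤ C.p * C.K := Nat.mul_le_mul_left _ C.hK
  omega


lemma pumppair {t x a b δ : ℕ} (hδ1 : 1 ≤ δ) (hδp : C.p ∣ δ) (hδQ : δ ∣ C.Q)
    (ht : C.K + C.Q ≤ t + 1) (h1 : C.ConnH t x a) (h2 : C.ConnH t a b)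
    (hab : b + δ = a) (hb : t < b) :
    C.E x (x + C.Q) ∧ (∀ x', x' + C.Q = x → C.E x x') := by
  have hK := C.hK
  have hQ1 := C.hQ1
  have stepup : ∀ k : ℕ, C.E a (a + k * δ) := by
    intro k
    induction k with
    | zero => simpa using C.E_refl a
    | succ k ih =>
      have hs : C.E (a + (k + 1) * δ) (b + (k + 1) * δ) :=
        C.connH_shift_up ((k + 1) * δ) (hδp.mul_left _) (by omega) h2
      have he : b + (k + 1) * δ = a + k * δ := by
        have : (k + 1) * δ = k * δ + δ := by ring
        omega
      rw [he] at hs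
      exact ih.trans (C.E_symm hs)
  have stepdown : ∀ k : ℕ, k * δ ≤ C.Q → C.E a (a - k * δ) := by
    intro k
    induction k with
    | zero => intro _; simpa using C.E_refl a
    | succ k ih =>
      intro hk
      have hkδ : k * δ + δ ≤ C.Q := by
        have : (k + 1) * δ = k * δ + δ := by ring
        omega
      have hs : C.E (a - k * δ) (b - k * δ) :=
        C.connH_shift_down (k * δ) (hδp.mul_left _) (by omega) h2
      have he : b - k * δ = a - (k + 1) * δ := by
        have he2 : (k + 1) * δ = k * δ + δ := by ring
        omega
      rw [he] at hs
      exact (ih (by omega)).trans hs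
  obtain ⟨k, hk⟩ := hδQ
  have hkk : k * δ = C.Q := by rw [hk, Nat.mul_comm]
  constructor
  · have h1' : C.E (x + C.Q) (a + C.Q) := C.connH_shift_up C.Q C.hQp (by omega) h1
    have h2' : C.E a (a + C.Q) := by rw [← hkk]; exact stepup k
    exact C.E_symm (h1'.trans ((C.E_symm h2').trans (C.E_symm (C.connH_to_E h1))))
  · intro x' hx'
    have h1' : C.E (x - C.Q) (a - C.Q) := C.connH_shift_down C.Q C.hQp ht h1
    have h2' : C.E a (a - C.Q) := by rw [← hkk]; exact stepdown k (by omega)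
    have hxx : x - C.Q = x' := by omega
    rw [hxx] at h1'
    exact ((C.connH_to_E h1).trans h2').trans (C.E_symm h1')

lemma longpump {t x u v : ℕ} (ht : 2 * C.K + 2 * C.Q ≤ t + 1)
    (h1 : C.ConnH t x u) (hu : t < u) (hadj : C.adj u v)
    (hlong : v + C.K ≤ u ∨ u + C.K ≤ v) :
    C.E x (x + C.Q) ∧ (∀ x', x' + C.Q = x → C.E x x') := by
  have hK := C.hK
  have hQ1 := C.hQ1
  have hxu : C.E x u := C.connH_to_E h1
  have hxu_up : C.E (x + C.Q) (u + C.Q) := C.connH_shift_up C.Q C.hQp (by omega) h1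
  have hxu_dn : C.E (x - C.Q) (u - C.Q) := C.connH_shift_down C.Q C.hQp (by omega) h1
  have hKu : C.K + C.Q + C.Q ≤ u := by omega
  obtain ⟨b₀, hb₀, ⟨rfl, he⟩ | ⟨huv, he⟩⟩ := hadj
  · -- v = u + b₀, upward long edge; hub u is high
    have hb₀K : C.K ≤ b₀ := by
      rcases hlong with h | h
      · omega
      · omega
    constructor
    · -- up pump
      have e1 : C.edg u (b₀ + C.Q) := (C.hP2m C.hQp u hb₀K).mp he
      have a1 : C.adj u (u + b₀ + C.Q) :=
        ⟨b₀ + C.Q, by omega, Or.inl ⟨by omega, e1⟩⟩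
      have e2 : C.edg (u + C.Q) b₀ := (C.hP1m C.hQp b₀ (by omega)).mp he
      have a2 : C.adj (u + C.Q) (u + b₀ + C.Q) :=
        ⟨b₀, hb₀, Or.inl ⟨by omega, e2⟩⟩
      exact C.E_symm ((hxu_up.trans (C.adj_to_E a2)).trans
        ((C.E_symm (C.adj_to_E a1)).trans (C.E_symm hxu)))
    · -- down pump
      intro x' hx'
      have e0 : C.edg (u - C.Q) b₀ := by
        have := C.hP1m C.hQp (a := u - C.Q) b₀ (by omega)
        rw [Nat.sub_add_cancel (by omega)] at this
        exact this.mpr he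
      have e1 : C.edg (u - C.Q) (b₀ + C.Q) := (C.hP2m C.hQp (u - C.Q) hb₀K).mp e0
      have a1 : C.adj (u - C.Q) (u + b₀) :=
        ⟨b₀ + C.Q, by omega, Or.inl ⟨by omega, e1⟩⟩
      have hxx : x - C.Q = x' := by omega
      rw [hxx] at hxu_dn
      -- x ~ u ~ (u - Q) via a1? no : (u-Q) ~ (u+b₀) = v ~ u.  chain x' ~ u-Q ~ u+b₀ ; u+b₀ ~ u via he
      have a2 : C.adj u (u + b₀) := ⟨b₀, hb₀, Or.inl ⟨rfl, he⟩⟩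
      exact ((hxu.trans (C.adj_to_E a2)).trans
        (C.E_symm (C.adj_to_E a1))).trans (C.E_symm hxu_dn) |> C.E_symm |> C.E_symm
  · -- u = v + b₀, downward long edge
    subst huv
    have hb₀K : C.K ≤ b₀ := by
      rcases hlong with h | h
      · omega
      · omega
    constructor
    · -- up pump
      have e1 : C.edg v (b₀ + C.Q) := (C.hP2m C.hQp v hb₀K).mp he
      have a1 : C.adj v (v + b₀ + C.Q) := ⟨b₀ + C.Q, by omega, Or.inl ⟨by omega, e1⟩⟩
      have a2 : C.adj v (v + b₀) := ⟨b₀, hb₀, Or.inl ⟨rfl, he⟩⟩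
      -- x+Q ~ u+Q ~ v ~ u ~ x
      exact C.E_symm ((hxu_up.trans (C.E_symm (C.adj_to_E a1))).trans
        ((C.adj_to_E a2).trans (C.E_symm hxu)))
    · -- down pump
      intro x' hx'
      have hxx : x - C.Q = x' := by omega
      rw [hxx] at hxu_dn
      by_cases hbig : C.K + C.Q ≤ b₀
      · have e1 : C.edg v (b₀ - C.Q) := by
          have := C.hP2m C.hQp v (b := b₀ - C.Q) (by omega)
          rw [Nat.sub_add_cancel (by omega)] at this
          exact this.mpr he
        have a1 : C.adj v (v + b₀ - C.Q) :=
          ⟨b₀ - C.Q, by omega, Or.inl ⟨by omega, e1⟩⟩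
        have a2 : C.adj v (v + b₀) := ⟨b₀, hb₀, Or.inl ⟨rfl, he⟩⟩
        -- x' ~ u - Q = v + b₀ - Q ~ v ~ u ~ x
        exact C.E_symm (((hxu_dn.trans (C.E_symm (C.adj_to_E a1))).trans
          (C.adj_to_E a2)).trans (C.E_symm hxu))
      · -- v is high: v ≥ K + Q
        have hv : C.K + C.Q ≤ v := by omega
        have e0 : C.edg (v - C.Q) b₀ := by
          have := C.hP1m C.hQp (a := v - C.Q) b₀ (by omega)
          rw [Nat.sub_add_cancel (by omega)] at this
          exact this.mpr he
        have e1 : C.edg (v - C.Q) (b₀ + C.Q) := (C.hP2m C.hQp (v - C.Q) hb₀K).mp e0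
        have a1 : C.adj (v - C.Q) (v - C.Q + b₀) := ⟨b₀, hb₀, Or.inl ⟨rfl, e0⟩⟩
        have a2 : C.adj (v - C.Q) (v - C.Q + (b₀ + C.Q)) :=
          ⟨b₀ + C.Q, by omega, Or.inl ⟨by omega, e1⟩⟩
        have he1 : v - C.Q + b₀ = v + b₀ - C.Q := by omega
        have he2 : v - C.Q + (b₀ + C.Q) = v + b₀ := by omega
        rw [he1] at a1
        rw [he2] at a2
        -- x' ~ (v+b₀-Q) ~ (v-Q) ~ (v+b₀) = u ~ x
        exact C.E_symm (((hxu_dn.trans (C.E_symm (C.adj_to_E a1))).trans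
          (C.adj_to_E a2)).trans (C.E_symm hxu))

lemma core {x y : ℕ} (h : C.E x y) (hxy : y + C.Th ≤ x) :
    C.E x (x + C.Q) ∧ (∀ x', x' + C.Q = x → C.E x x') := by
  have hK := C.hK
  have hp := C.hp
  have hQ1 := C.hQ1
  set Δ := (C.p + 2) * C.K + 1 with hΔ
  have hTh : C.Th = Δ + 2 * C.K + 2 * C.Q + 2 := by unfold Th; omega
  set t := x - Δ with ht
  have hxΔ : Δ ≤ x := by omega
  have htx : t + Δ = x := by omega
  have htbig : 2 * C.K + 2 * C.Q + 2 ≤ t + 1 := by omega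
  have hyt : y ≤ t := by omega
  rcases C.extract h hyt (by omega) with
    ⟨u, v, hconn, hu, hadj, hlong⟩ | ⟨u, v, hconn, hu, hadj, hvt, huv⟩
  · exact C.longpump (by omega) (C.connS_to_connH hconn) hu hadj hlong
  · -- short drop below t : band argument
    have hpair := C.pair hconn (c₀ := t + C.K) (by omega) (by
      have e : t + C.K + (C.p + 1) * C.K = t + (C.p + 2) * C.K := by ring
      omega)
    obtain ⟨a, b, hxa, hab, hcb, hba, habd, hdvd⟩ := hpair
    set δ := a - b with hδ
    have hbδ : b + δ = a := by omega
    have hδQ : δ ∣ C.Q := by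
      apply Nat.dvd_factorial (by omega)
      omega
    exact C.pumppair (by omega) hdvd hδQ (by omega)
      (C.connS_to_connH hxa) (C.connS_to_connH hab) hbδ (by omega)

lemma split (t : ℕ) {x y : ℕ} (h : C.E x y) :
    C.ConnH t x y ∨ ∃ c, c ≤ t ∧ C.E x c ∧ C.E c y := by
  induction h using ReflTransGen.head_induction_on with
  | refl => exact Or.inl ReflTransGen.refl
  | @head a a' step rest ih =>
    by_cases ha : a ≤ t
    · exact Or.inr ⟨a, ha, ReflTransGen.refl, rest.head step⟩
    · by_cases ha' : a' ≤ t
      · exact Or.inr ⟨a', ha', ReflTransGen.single step, rest⟩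
      · rcases ih with hH | ⟨c, hc1, hc2, hc3⟩
        · exact Or.inl (hH.head ⟨step, by omega, by omega⟩)
        · exact Or.inr ⟨c, hc1, hc2.head step, hc3⟩

def AA (C : Ctx) : ℕ := C.Th + C.K + C.Q + C.p + 2

lemma shiftQ {a n : ℕ} (hA : C.AA ≤ a) (han : a ≤ n) :
    C.E a n ↔ C.E (a + C.Q) (n + C.Q) := by
  have hK := C.hK
  have hQ1 := C.hQ1
  have hAA : C.AA = C.Th + C.K + C.Q + C.p + 2 := rfl
  constructor
  · intro h
    rcases C.split C.K h with hH | ⟨c, hc, h1, h2⟩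
    · exact C.connH_shift_up C.Q C.hQp (by omega) hH
    · have c1 := (C.core h1 (by omega)).1
      have c2 := (C.core (C.E_symm h2) (by omega)).1
      exact (C.E_symm c1).trans (h.trans c2)
  · intro h
    rcases C.split (C.K + C.Q) h with hH | ⟨c, hc, h1, h2⟩
    · have hd := C.connH_shift_down C.Q C.hQp (by omega) hH
      simpa using hd
    · have c1 := (C.core h1 (by omega)).2 a rfl
      have c2 := (C.core (C.E_symm h2) (by omega)).2 n rfl
      exact (C.E_symm c1).trans (h.trans c2)

lemma periodQ {a b : ℕ} (hA : C.AA ≤ b) :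
    C.E a (a + b) ↔ C.E a (a + b + C.Q) := by
  constructor
  · intro h
    exact h.trans (C.core (C.E_symm h) (by
      have : C.AA = C.Th + C.K + C.Q + C.p + 2 := rfl
      omega)).1
  · intro h
    exact h.trans ((C.core (C.E_symm h) (by
      have : C.AA = C.Th + C.K + C.Q + C.p + 2 := rfl
      omega)).2 (a + b) rfl)

end Ctx
end

open Relation

lemma eqvGen_iff {R : ℕ → ℕ → Prop} {C : Ctx} (hedg : C.edg = edge R) {m n : ℕ} :
    Relation.EqvGen R m n ↔ C.E m n := by
  constructor
  · intro h
    induction h with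
    | rel a b hab =>
      rcases Nat.lt_trichotomy a b with hlt | rfl | hgt
      · exact C.adj_to_E ⟨b - a, by omega, Or.inl ⟨by omega, by
          rw [hedg]; unfold edge; rw [Nat.add_sub_cancel' (by omega : a ≤ b)]
          exact Or.inl hab⟩⟩
      · exact C.E_refl a
      · exact C.adj_to_E ⟨a - b, by omega, Or.inr ⟨by omega, by
          rw [hedg]; unfold edge; rw [Nat.add_sub_cancel' (by omega : b ≤ a)]
          exact Or.inr hab⟩⟩
    | refl a => exact C.E_refl a
    | symm a b _ ih => exact C.E_symm ih
    | trans a b c _ _ ih1 ih2 => exact ih1.trans ih2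
  · intro h
    induction h with
    | refl => exact EqvGen.refl m
    | tail _ hstep ih =>
      rename_i b c _
      refine EqvGen.trans _ _ _ ih ?_
      obtain ⟨d, hd, ⟨rfl, he⟩ | ⟨rfl, he⟩⟩ := hstep
      · rw [hedg] at he
        rcases he with h1 | h1
        · exact EqvGen.rel _ _ h1
        · exact EqvGen.symm _ _ (EqvGen.rel _ _ h1)
      · rw [hedg] at he
        rcases he with h1 | h1
        · exact EqvGen.symm _ _ (EqvGen.rel _ _ h1)
        · exact EqvGen.rel _ _ h1

lemma master {R : ℕ → ℕ → Prop} (hR : RegularRel R) :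
    ∃ A Q : ℕ, 1 ≤ A ∧ 1 ≤ Q ∧
      (∀ a n, A ≤ a → a ≤ n →
        (Relation.EqvGen R a n ↔ Relation.EqvGen R (a + Q) (n + Q))) ∧
      (∀ a b, A ≤ b →
        (Relation.EqvGen R a (a + b) ↔ Relation.EqvGen R a (a + b + Q))) := by
  obtain ⟨K, p, hK, hp, hP1, hP2⟩ := exists_periods hR
  let C : Ctx := ⟨edge R, K, p, hK, hp, hP1, hP2⟩
  have hedg : C.edg = edge R := rfl
  refine ⟨C.AA + 1, C.Q, by omega, C.hQ1, ?_, ?_⟩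
  · intro a n ha han
    rw [eqvGen_iff hedg, eqvGen_iff hedg]
    exact C.shiftQ (by omega) han
  · intro a b hb
    rw [eqvGen_iff hedg, eqvGen_iff hedg]
    exact C.periodQ (by omega)



open Relation

section Machine

variable (A Q : ℕ)

def cfun (n : ℕ) : ℕ := if n < A + Q then n else A + (n - A) % Q

lemma cfun_lt (hQ : 1 ≤ Q) (n : ℕ) : cfun A Q n < A + Q := by
  unfold cfun
  split
  · assumption
  · have := Nat.mod_lt (n - A) (y := Q) (by omega)
    omega

lemma cfun_le (n : ℕ) : cfun A Q n ≤ n := by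
  unfold cfun
  split
  · exact le_rfl
  · have : (n - A) % Q ≤ n - A := Nat.mod_le _ _
    omega

lemma cfun_eq_of_lt {n : ℕ} (h : n < A + Q) : cfun A Q n = n := if_pos h

lemma cfun_ge {n : ℕ} (h : A ≤ n) : A ≤ cfun A Q n := by
  unfold cfun
  split
  · exact h
  · omega

lemma cfun_decomp (hQ : 1 ≤ Q) (n : ℕ) : ∃ k, n = cfun A Q n + k * Q := by
  unfold cfun
  split
  · exact ⟨0, by omega⟩
  · refine ⟨(n - A) / Q, ?_⟩
    have hdm : Q * ((n - A) / Q) + (n - A) % Q = n - A := Nat.div_add_mod _ _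
    have hcm : (n - A) / Q * Q = Q * ((n - A) / Q) := Nat.mul_comm _ _
    omega

def csuccN (m : ℕ) : ℕ := if m + 1 < A + Q then m + 1 else A

lemma csuccN_cfun (hQ : 1 ≤ Q) (n : ℕ) :
    csuccN A Q (cfun A Q n) = cfun A Q (n + 1) := by
  unfold csuccN cfun
  by_cases h1 : n + 1 < A + Q
  · have h0 : n < A + Q := by omega
    rw [if_pos h0, if_pos h1, if_pos h1]
  · by_cases h0 : n < A + Q
    · -- n + 1 = A + Q
      have he : n + 1 - A = Q := by omega
      rw [if_pos h0, if_neg h1, if_neg h1, he, Nat.mod_self]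
      omega
    · -- n ≥ A + Q
      have hlt : (n - A) % Q < Q := Nat.mod_lt _ (by omega)
      have he : n + 1 - A = (n - A) + 1 := by omega
      rw [if_neg h0, if_neg h1, he]
      set e := n - A with hee
      have hdm : Q * (e / Q) + e % Q = e := Nat.div_add_mod _ _
      by_cases hh : e % Q + 1 < Q
      · have hmod : (e + 1) % Q = e % Q + 1 := by
          have hrw : e + 1 = (e % Q + 1) + (e / Q) * Q := by
            have : (e / Q) * Q = Q * (e / Q) := Nat.mul_comm _ _
            omega
          rw [hrw, Nat.add_mul_mod_self_right]
          exact Nat.mod_eq_of_lt hh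
        rw [hmod, if_pos (by omega)]
        omega
      · have he2 : e % Q + 1 = Q := by omega
        have hmod : (e + 1) % Q = 0 := by
          have hrw : e + 1 = Q + (e / Q) * Q := by
            have : (e / Q) * Q = Q * (e / Q) := Nat.mul_comm _ _
            omega
          rw [hrw, Nat.add_mul_mod_self_right, Nat.mod_self]
        rw [hmod, if_neg (by omega)]
        omega

variable (F : ℕ → ℕ → Prop)

/-- the DFA accepting the canonical-form language of `F`. -/
def mach (hQ : 1 ≤ Q) :
    DFA (Fin 3) (Option (Fin (A + Q) × Option (Bool × Fin (A + Q)))) where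
  step := fun st ch =>
    match st with
    | none => none
    | some (i, none) =>
        if ch = 0 then some (⟨csuccN A Q i, by unfold csuccN; split <;> omega⟩, none)
        else if ch = 1 then some (i, some (false, ⟨cfun A Q 1, cfun_lt A Q hQ 1⟩))
        else some (i, some (true, ⟨cfun A Q 1, cfun_lt A Q hQ 1⟩))
    | some (i, some (d, j)) =>
        if ch = 0 then none
        else if ch = 1 then
          (if d then none else some (i, some (false, ⟨csuccN A Q j, by unfold csuccN; split <;> omega⟩)))
        else
          (if d then some (i, some (true, ⟨csuccN A Q j, by unfold csuccN; split <;> omega⟩)) else none)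
  start := some (⟨cfun A Q 0, cfun_lt A Q hQ 0⟩, none)
  accept := {st | (∃ i, st = some (i, none)) ∨
      (∃ i d j, st = some (i, some (d, j)) ∧ F (i : ℕ) (j : ℕ))}

variable (hQ : 1 ≤ Q)

lemma mach_step_none (ch : Fin 3) : (mach A Q F hQ).step none ch = none := rfl

end Machine
end Stmt4

namespace Stmt4
open Relation

section Machine2
variable (A Q : ℕ) (F : ℕ → ℕ → Prop) (hQ : 1 ≤ Q)

lemma mach_step_s0 (i : Fin (A + Q)) :
    (mach A Q F hQ).step (some (i, none)) 0 =
      some (⟨csuccN A Q i, by unfold csuccN; split <;> omega⟩, none) := rfl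

lemma mach_step_s1 (i : Fin (A + Q)) :
    (mach A Q F hQ).step (some (i, none)) 1 =
      some (i, some (false, ⟨cfun A Q 1, cfun_lt A Q hQ 1⟩)) := rfl

lemma mach_step_s2 (i : Fin (A + Q)) :
    (mach A Q F hQ).step (some (i, none)) 2 =
      some (i, some (true, ⟨cfun A Q 1, cfun_lt A Q hQ 1⟩)) := rfl

lemma mach_step_t0 (i j : Fin (A + Q)) (d : Bool) :
    (mach A Q F hQ).step (some (i, some (d, j))) 0 = none := rfl

lemma mach_step_t1f (i j : Fin (A + Q)) :
    (mach A Q F hQ).step (some (i, some (false, j))) 1 =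
      some (i, some (false, ⟨csuccN A Q j, by unfold csuccN; split <;> omega⟩)) := rfl

lemma mach_step_t1t (i j : Fin (A + Q)) :
    (mach A Q F hQ).step (some (i, some (true, j))) 1 = none := rfl

lemma mach_step_t2t (i j : Fin (A + Q)) :
    (mach A Q F hQ).step (some (i, some (true, j))) 2 =
      some (i, some (true, ⟨csuccN A Q j, by unfold csuccN; split <;> omega⟩)) := rfl

lemma mach_step_t2f (i j : Fin (A + Q)) :
    (mach A Q F hQ).step (some (i, some (false, j))) 2 = none := rfl

lemma mach_eval_s (a : ℕ) :
    (mach A Q F hQ).eval (List.replicate a 0) =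
      some (⟨cfun A Q a, cfun_lt A Q hQ a⟩, none) := by
  induction a with
  | zero => rfl
  | succ a ih =>
    rw [List.replicate_succ']
    unfold DFA.eval at ih ⊢
    rw [DFA.evalFrom_append_singleton, ih, mach_step_s0]
    simp only [Option.some.injEq, Prod.mk.injEq, Fin.mk.injEq, and_true]
    exact csuccN_cfun A Q hQ a

lemma mach_eval_r (a : ℕ) : ∀ b : ℕ, 1 ≤ b →
    (mach A Q F hQ).eval (List.replicate a 0 ++ List.replicate b 2) =
      some (⟨cfun A Q a, cfun_lt A Q hQ a⟩,
        some (true, ⟨cfun A Q b, cfun_lt A Q hQ b⟩)) := by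
  intro b
  induction b with
  | zero => omega
  | succ b ih =>
    intro _
    by_cases hb : b = 0
    · subst hb
      show (mach A Q F hQ).evalFrom _ (List.replicate a 0 ++ [2]) = _
      rw [DFA.evalFrom_append_singleton]
      change (mach A Q F hQ).step ((mach A Q F hQ).eval (List.replicate a 0)) 2 = _
      rw [mach_eval_s, mach_step_s2]
    · rw [List.replicate_succ' (n := b) (a := 2), ← List.append_assoc]
      show (mach A Q F hQ).evalFrom _ _ = _
      rw [DFA.evalFrom_append_singleton]
      change (mach A Q F hQ).step
        ((mach A Q F hQ).eval (List.replicate a 0 ++ List.replicate b 2)) 2 = _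
      rw [ih (by omega), mach_step_t2t]
      simp only [Option.some.injEq, Prod.mk.injEq, Fin.mk.injEq, and_true, true_and]
      exact csuccN_cfun A Q hQ b

lemma mach_eval_l (a : ℕ) : ∀ b : ℕ, 1 ≤ b →
    (mach A Q F hQ).eval (List.replicate a 0 ++ List.replicate b 1) =
      some (⟨cfun A Q a, cfun_lt A Q hQ a⟩,
        some (false, ⟨cfun A Q b, cfun_lt A Q hQ b⟩)) := by
  intro b
  induction b with
  | zero => omega
  | succ b ih =>
    intro _
    by_cases hb : b = 0
    · subst hb
      show (mach A Q F hQ).evalFrom _ (List.replicate a 0 ++ [1]) = _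
      rw [DFA.evalFrom_append_singleton]
      change (mach A Q F hQ).step ((mach A Q F hQ).eval (List.replicate a 0)) 1 = _
      rw [mach_eval_s, mach_step_s1]
    · rw [List.replicate_succ' (n := b) (a := 1), ← List.append_assoc]
      show (mach A Q F hQ).evalFrom _ _ = _
      rw [DFA.evalFrom_append_singleton]
      change (mach A Q F hQ).step
        ((mach A Q F hQ).eval (List.replicate a 0 ++ List.replicate b 1)) 1 = _
      rw [ih (by omega), mach_step_t1f]
      simp only [Option.some.injEq, Prod.mk.injEq, Fin.mk.injEq, and_true, true_and]
      exact csuccN_cfun A Q hQ b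

lemma fin3_eq (ch : Fin 3) : ch = 0 ∨ ch = 1 ∨ ch = 2 := by
  rcases ch with ⟨c, hc⟩
  interval_cases c
  · exact Or.inl rfl
  · exact Or.inr (Or.inl rfl)
  · exact Or.inr (Or.inr rfl)

lemma mach_inv : ∀ w : List (Fin 3),
    ((mach A Q F hQ).eval w = none) ∨
    (∃ a, w = List.replicate a 0 ∧
      (mach A Q F hQ).eval w = some (⟨cfun A Q a, cfun_lt A Q hQ a⟩, none)) ∨
    (∃ a b, 1 ≤ b ∧ ∃ d : Bool,
      w = List.replicate a 0 ++ List.replicate b (if d then 2 else 1) ∧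
      (mach A Q F hQ).eval w = some (⟨cfun A Q a, cfun_lt A Q hQ a⟩,
        some (d, ⟨cfun A Q b, cfun_lt A Q hQ b⟩))) := by
  intro w
  induction w using List.reverseRecOn with
  | nil => exact Or.inr (Or.inl ⟨0, rfl, rfl⟩)
  | append_singleton w ch ih =>
    have hstep : (mach A Q F hQ).eval (w ++ [ch]) =
        (mach A Q F hQ).step ((mach A Q F hQ).eval w) ch :=
      DFA.evalFrom_append_singleton _ _ _ _
    rcases ih with h | ⟨a, hw, he⟩ | ⟨a, b, hb, d, hw, he⟩
    · left; rw [hstep, h]; rfl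
    · rcases fin3_eq ch with rfl | rfl | rfl
      · refine Or.inr (Or.inl ⟨a + 1, by rw [hw, List.replicate_succ'], ?_⟩)
        rw [hstep, he, mach_step_s0]
        simp only [Option.some.injEq, Prod.mk.injEq, Fin.mk.injEq, and_true]
        exact csuccN_cfun A Q hQ a
      · refine Or.inr (Or.inr ⟨a, 1, le_rfl, false, by rw [hw]; rfl, ?_⟩)
        rw [hstep, he, mach_step_s1]
      · refine Or.inr (Or.inr ⟨a, 1, le_rfl, true, by rw [hw]; rfl, ?_⟩)
        rw [hstep, he, mach_step_s2]
    · rcases fin3_eq ch with rfl | rfl | rfl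
      · left; rw [hstep, he, mach_step_t0]
      · cases d
        · refine Or.inr (Or.inr ⟨a, b + 1, by omega, false, ?_, ?_⟩)
          · rw [hw, List.replicate_succ' (n := b), ← List.append_assoc]; rfl
          · rw [hstep, he, mach_step_t1f]
            simp only [Option.some.injEq, Prod.mk.injEq, Fin.mk.injEq, and_true, true_and]
            exact csuccN_cfun A Q hQ b
        · left; rw [hstep, he, mach_step_t1t]
      · cases d
        · left; rw [hstep, he, mach_step_t2f]
        · refine Or.inr (Or.inr ⟨a, b + 1, by omega, true, ?_, ?_⟩)
          · rw [hw, List.replicate_succ' (n := b), ← List.append_assoc]; rfl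
          · rw [hstep, he, mach_step_t2t]
            simp only [Option.some.injEq, Prod.mk.injEq, Fin.mk.injEq, and_true, true_and]
            exact csuccN_cfun A Q hQ b

lemma canon (G : ℕ → ℕ → Prop) (hQc : 1 ≤ Q)
    (hshift : ∀ a n, A ≤ a → a ≤ n → (G a n ↔ G (a + Q) (n + Q)))
    (hperiod : ∀ a b, A ≤ b → (G a (a + b) ↔ G a (a + b + Q)))
    (a b : ℕ) : G a (a + b) ↔ G (cfun A Q a) (cfun A Q a + cfun A Q b) := by
  have reduceA : ∀ k a b, A ≤ a → (G a (a + b) ↔ G (a + k * Q) (a + k * Q + b)) := by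
    intro k
    induction k with
    | zero => intro a b _; simp
    | succ k ih =>
      intro a b ha
      have e1 : a + (k + 1) * Q = a + k * Q + Q := by ring
      have e2 : a + (k + 1) * Q + b = a + k * Q + b + Q := by ring
      rw [e2, e1]
      exact (ih a b ha).trans (hshift _ _ (by omega) (by omega))
  have reduceB : ∀ k a b, A ≤ b → (G a (a + b) ↔ G a (a + b + k * Q)) := by
    intro k
    induction k with
    | zero => intro a b _; simp
    | succ k ih =>
      intro a b hbA
      have e1 : a + b + (k + 1) * Q = a + (b + k * Q) + Q := by ring
      have e2 : a + b + k * Q = a + (b + k * Q) := by ring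
      rw [e1]
      refine (ih a b hbA).trans ?_
      rw [e2]
      exact hperiod a (b + k * Q) (by omega)
  have step1 : G a (a + b) ↔ G (cfun A Q a) (cfun A Q a + b) := by
    by_cases ha : a < A
    · rw [cfun_eq_of_lt A Q (by omega)]
    · obtain ⟨k, hk⟩ := cfun_decomp A Q hQc a
      have hca : A ≤ cfun A Q a := cfun_ge A Q (by omega)
      have h2 := reduceA k (cfun A Q a) b hca
      rw [← hk] at h2
      exact h2.symm
  have step2 : G (cfun A Q a) (cfun A Q a + b) ↔
      G (cfun A Q a) (cfun A Q a + cfun A Q b) := by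
    by_cases hb : b < A + Q
    · rw [cfun_eq_of_lt A Q hb]
    · obtain ⟨k, hk⟩ := cfun_decomp A Q hQc b
      have hcb : A ≤ cfun A Q b := cfun_ge A Q (by omega)
      have h2 := reduceB k (cfun A Q a) (cfun A Q b) hcb
      rw [show cfun A Q a + b = cfun A Q a + cfun A Q b + k * Q by omega]
      exact h2.symm
  exact step1.trans step2

end Machine2

end Stmt4

theorem stmt4 (R : ℕ → ℕ → Prop) (hR : RegularRel R) :
    RegularRel (Relation.EqvGen R) := by
  classical
  obtain ⟨A, Q, hA, hQ, hshift, hperiod⟩ := Stmt4.master hR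
  set G : ℕ → ℕ → Prop := Relation.EqvGen R with hG
  set F : ℕ → ℕ → Prop := (fun i j => G i (i + j)) with hF
  have hcanon : ∀ a b, G a (a + b) ↔
      G (Stmt4.cfun A Q a) (Stmt4.cfun A Q a + Stmt4.cfun A Q b) :=
    Stmt4.canon A Q G hQ hshift hperiod
  refine ⟨Option (Fin (A + Q) × Option (Bool × Fin (A + Q))), inferInstance,
    Stmt4.mach A Q F hQ, ?_⟩
  ext w
  rw [DFA.mem_accepts]
  constructor
  · intro hw
    rcases Stmt4.mach_inv A Q F hQ w with h | ⟨a, hwa, he⟩ | ⟨a, b, hb, d, hwa, he⟩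
    · rw [h] at hw
      rcases hw with ⟨i, hi⟩ | ⟨i, d, j, hi, _⟩ <;> exact absurd hi (by simp)
    · refine ⟨a, a, Relation.EqvGen.refl a, ?_⟩
      rw [hwa, Stmt4.convWord_of_le le_rfl]
      simp
    · rw [he] at hw
      rcases hw with ⟨i, hi⟩ | ⟨i, d', j, hi, hFij⟩
      · exact absurd hi (by simp)
      · simp only [Option.some.injEq, Prod.mk.injEq] at hi
        obtain ⟨hi1, hi2, hi3⟩ := hi
        have hGab : G a (a + b) := by
          have : F (Stmt4.cfun A Q a) (Stmt4.cfun A Q b) := by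
            rw [hF]
            have := hFij
            rw [← hi1, ← hi3] at this
            exact this
          exact (hcanon a b).mpr this
        cases d
        · -- letter 1, word = convWord (a+b) a
          refine ⟨a + b, a, Relation.EqvGen.symm _ _ hGab, ?_⟩
          rw [hwa, Stmt4.convWord_of_ge (by omega)]
          simp
        · -- letter 2, word = convWord a (a+b)
          refine ⟨a, a + b, hGab, ?_⟩
          rw [hwa, Stmt4.convWord_of_le (by omega)]
          simp
  · rintro ⟨m, n, hmn, rfl⟩
    rcases Nat.le_total m n with hle | hge
    · rw [Stmt4.convWord_of_le hle]
      by_cases hb : n - m = 0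
      · rw [hb]
        simp only [List.replicate_zero, List.append_nil]
        rw [Stmt4.mach_eval_s A Q F hQ m]
        exact Or.inl ⟨_, rfl⟩
      · rw [Stmt4.mach_eval_r A Q F hQ m (n - m) (by omega)]
        refine Or.inr ⟨_, true, _, rfl, ?_⟩
        show F (Stmt4.cfun A Q m) (Stmt4.cfun A Q (n - m))
        rw [hF]
        refine (hcanon m (n - m)).mp ?_
        rw [show m + (n - m) = n by omega]
        exact hmn
    · rw [Stmt4.convWord_of_ge hge]
      by_cases hb : m - n = 0
      · rw [hb]
        simp only [List.replicate_zero, List.append_nil]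
        rw [Stmt4.mach_eval_s A Q F hQ n]
        exact Or.inl ⟨_, rfl⟩
      · rw [Stmt4.mach_eval_l A Q F hQ n (m - n) (by omega)]
        refine Or.inr ⟨_, false, _, rfl, ?_⟩
        show F (Stmt4.cfun A Q n) (Stmt4.cfun A Q (m - n))
        rw [hF]
        refine (hcanon n (m - n)).mp ?_
        rw [show n + (m - n) = m by omega]
        exact Relation.EqvGen.symm _ _ hmn
end
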